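/- arXiv:2201.01268 — 10 statements merged into one kernel-verified Lean document; each statement's English description precedes it below -/
import Mathlib

section
/- Let B be a bounded subset of ℝ^d. Then the infimum over t ∈ B - B (the set of differences of elements of B) of the diameter of B ∩ (B - t) is 0. -/
open scoped Pointwise

theorem stmt_0 {d : ℕ} (B : Set (EuclideanSpace ℝ (Fin d)))
    (hB : Bornology.IsBounded B) :
    sInf ((fun t => Metric.diam (B ∩ ((fun x => x - t) '' B))) '' (B - B)) = 0 := by
  rcases Set.eq_empty_or_nonempty B with hBe | ⟨x0, hx0⟩
  · simp [hBe]
  set S := ((fun t => Metric.diam (B ∩ ((fun x => x - t) '' B))) '' (B - B)) with hS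
  set D := Metric.diam B with hD
  have hub : ∀ z ∈ B, ∀ w ∈ B, dist z w ≤ D :=
    fun z hz w hw => Metric.dist_le_diam_of_mem hB hz hw
  have hnonneg : ∀ a ∈ S, (0:ℝ) ≤ a := by
    rintro a ⟨t, ht, rfl⟩
    exact Metric.diam_nonneg
  have hbdd : BddBelow S := ⟨0, hnonneg⟩
  have key : ∀ ε : ℝ, 0 < ε → sInf S ≤ ε := by
    intro ε hε
    by_cases hDε : D < ε
    · have h0 : (0 : EuclideanSpace ℝ (Fin d)) ∈ B - B :=
        ⟨x0, hx0, x0, hx0, sub_self x0⟩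
      have himg : (fun x : EuclideanSpace ℝ (Fin d) => x - 0) '' B = B := by
        simp
      refine (csInf_le hbdd ⟨0, h0, rfl⟩).trans ?_
      simp only [himg, Set.inter_self]
      linarith
    · push_neg at hDε
      have hDpos : 0 < D := lt_of_lt_of_le hε hDε
      set δ : ℝ := ε ^ 2 / (4 * D) with hδdef
      have hδpos : 0 < δ := by positivity
      have hδD : δ < D := by
        rw [hδdef, div_lt_iff₀ (by positivity)]
        nlinarith
      obtain ⟨x, hx, y, hy, hxy⟩ : ∃ x ∈ B, ∃ y ∈ B, D - δ < dist x y := by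
        by_contra h
        push_neg at h
        have := Metric.diam_le_of_forall_dist_le (by linarith : (0:ℝ) ≤ D - δ)
          (fun x hx y hy => h x hx y hy)
        rw [← hD] at this
        linarith
      set t := x - y with htdef
      have htB : t ∈ B - B := ⟨x, hx, y, hy, rfl⟩
      refine (csInf_le hbdd ⟨t, htB, rfl⟩).trans ?_
      apply Metric.diam_le_of_forall_dist_le hε.le
      rintro z ⟨hz1, hz2⟩ w ⟨hw1, hw2⟩
      have hzt : z + t ∈ B := by
        obtain ⟨b, hbB, hbe⟩ := hz2
        have : z + t = b := by
          rw [← hbe]; simp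
        rwa [this]
      have hwt : w + t ∈ B := by
        obtain ⟨b, hbB, hbe⟩ := hw2
        have : w + t = b := by
          rw [← hbe]; simp
        rwa [this]
      have h1 : ‖z - w + t‖ ≤ D := by
        have := hub _ hzt _ hw1
        rw [dist_eq_norm] at this
        have e : z + t - w = z - w + t := by abel
        rwa [e] at this
      have h2 : ‖z - w - t‖ ≤ D := by
        have := hub _ hz1 _ hwt
        rw [dist_eq_norm] at this
        have e : z - (w + t) = z - w - t := by abel
        rwa [e] at this
      have ht' : D - δ < ‖t‖ := by
        rw [htdef, ← dist_eq_norm]; exact hxy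
      have hpar := parallelogram_law_with_norm ℝ (z - w) t
      rw [dist_eq_norm]
      have hA : ‖z - w + t‖ * ‖z - w + t‖ ≤ D * D :=
        mul_self_le_mul_self (norm_nonneg _) h1
      have hB2 : ‖z - w - t‖ * ‖z - w - t‖ ≤ D * D :=
        mul_self_le_mul_self (norm_nonneg _) h2
      have hT : (D - δ) * (D - δ) ≤ ‖t‖ * ‖t‖ :=
        mul_self_le_mul_self (by linarith) ht'.le
      have h4 : 4 * (D * δ) = ε * ε := by
        rw [hδdef]; field_simp
      nlinarith [norm_nonneg (z - w), mul_self_nonneg δ]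
  have h1 : sInf S ≤ 0 := by
    by_contra h
    push_neg at h
    have := key (sInf S / 2) (by linarith)
    linarith
  have h2 : 0 ≤ sInf S := le_csInf ⟨_, ⟨0, ⟨x0, hx0, x0, hx0, sub_self x0⟩, rfl⟩⟩ hnonneg
  linarith
end

section
/- Let M ∈ M_d(ℤ) be a pseudo-unimodular matrix, i.e., the product of all its non-zero complex eigenvalues, counted with algebraic multiplicity, equals ±1. Then there exists m ≥ 1 such that for every y ∈ ℤ^d ∩ im(M^m), there exists x ∈ ℤ^d ∩ im(M^m) with M^m x = y. -/
open scoped Classical in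
/-- A square integer matrix is pseudo-unimodular if the product of its non-zero
complex eigenvalues, counted with algebraic multiplicity, equals `±1`. -/
def PseudoUnimodular {d : ℕ} (M : Matrix (Fin d) (Fin d) ℤ) : Prop :=
  ((M.map (fun x : ℤ => (x : ℂ))).charpoly.roots.filter (fun z => z ≠ 0)).prod = 1 ∨
  ((M.map (fun x : ℤ => (x : ℂ))).charpoly.roots.filter (fun z => z ≠ 0)).prod = -1

theorem stmt_2 {d : ℕ} (M : Matrix (Fin d) (Fin d) ℤ) (hpu : PseudoUnimodular M) :
    ∃ m : ℕ, 1 ≤ m ∧ ∀ y : Fin d → ℤ,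
      ((fun i => (y i : ℝ)) ∈ Set.range ((M.map (fun x : ℤ => (x : ℝ))) ^ m).mulVec) →
      ∃ x : Fin d → ℤ,
        ((fun i => (x i : ℝ)) ∈ Set.range ((M.map (fun x : ℤ => (x : ℝ))) ^ m).mulVec) ∧
        (M ^ m).mulVec x = y := by
  classical
  set p := M.charpoly with hpdef
  have hpm : p.Monic := M.charpoly_monic
  have hpne : p ≠ 0 := hpm.ne_zero
  obtain ⟨q, hq, hqnd⟩ := p.exists_eq_pow_rootMultiplicity_mul_and_not_dvd hpne 0
  set r := p.rootMultiplicity 0 with hrdef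
  rw [map_zero, sub_zero] at hq hqnd
  have hε0 : q.coeff 0 ≠ 0 := fun h => hqnd (Polynomial.X_dvd_iff.mpr h)
  set ε := q.coeff 0 with hεdef
  have hqne : q ≠ 0 := fun h => hε0 (by rw [hεdef, h]; simp)
  have hqm : q.Monic := (Polynomial.monic_X_pow r).of_mul_monic_left (hq ▸ hpm)
  -- complex side: ε * ε = 1
  have hεε : ε * ε = 1 := by
    set f : ℤ →+* ℂ := Int.castRingHom ℂ
    set qC := q.map f with hqCdef
    have hqCm : qC.Monic := hqm.map f
    have hcp : (M.map (fun x : ℤ => (x : ℂ))).charpoly = p.map f :=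
      Matrix.charpoly_map M f
    have hroots : (p.map f).roots = r • ({0} : Multiset ℂ) + qC.roots := by
      rw [hq, Polynomial.map_mul, Polynomial.map_pow, Polynomial.map_X,
        Polynomial.roots_mul
          (mul_ne_zero (pow_ne_zero _ Polynomial.X_ne_zero) hqCm.ne_zero),
        Polynomial.roots_pow, Polynomial.roots_X]
    have hqC0 : qC.coeff 0 = (ε : ℂ) := by simp [hqCdef, Polynomial.coeff_map]; rfl
    have hqCroots : ∀ a ∈ qC.roots, a ≠ 0 := by
      intro a ha h0
      rw [Polynomial.mem_roots hqCm.ne_zero] at ha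
      have h2 := ha
      rw [h0] at h2
      have : qC.eval 0 = 0 := h2
      rw [← Polynomial.coeff_zero_eq_eval_zero, hqC0] at this
      exact hε0 (by exact_mod_cast this)
    have hfilter : ((p.map f).roots.filter (fun z => z ≠ 0)) = qC.roots := by
      rw [hroots, Multiset.filter_add]
      rw [Multiset.filter_eq_nil.mpr, Multiset.filter_eq_self.mpr hqCroots, zero_add]
      intro a ha
      rw [Multiset.nsmul_singleton, Multiset.mem_replicate] at ha
      simp [ha.2]
    have hP : qC.roots.prod = 1 ∨ qC.roots.prod = -1 := by
      rcases hpu with h | h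
      · left; rw [← hfilter, ← hcp]; convert h using 2
      · right; rw [← hfilter, ← hcp]; convert h using 2
    have hqCfac : qC = (qC.roots.map fun a => Polynomial.X - Polynomial.C a).prod :=
      Polynomial.Splits.eq_prod_roots_of_monic
        (IsAlgClosed.splits qC) hqCm
    have hcoeff : (ε : ℂ) = (-1) ^ Multiset.card qC.roots * qC.roots.prod := by
      rw [← hqC0, Polynomial.coeff_zero_eq_eval_zero]
      conv_lhs => rw [hqCfac]
      rw [Polynomial.eval_multiset_prod, Multiset.map_map]
      simp only [Function.comp, Polynomial.eval_sub, Polynomial.eval_X,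
        Polynomial.eval_C, zero_sub]
      rw [show (fun a : ℂ => -a) = Neg.neg from rfl, Multiset.prod_map_neg]
    have hee : (ε : ℂ) * (ε : ℂ) = 1 := by
      have hc : qC.roots.prod * qC.roots.prod = 1 := by
        rcases hP with h | h <;> rw [h] <;> norm_num
      calc (ε : ℂ) * (ε : ℂ)
          = ((-1) ^ Multiset.card qC.roots * (-1) ^ Multiset.card qC.roots) *
              (qC.roots.prod * qC.roots.prod) := by rw [hcoeff]; ring
        _ = 1 := by rw [← mul_pow, hc, mul_one]; norm_num
    exact_mod_cast hee
  -- matrix identities over ℤ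
  have h0 : (Polynomial.aeval M) p = 0 := M.aeval_self_charpoly
  set S := (Polynomial.aeval M) q.divX with hSdef
  have hMS : Commute M S := by
    simpa using (Commute.all Polynomial.X q.divX).map (Polynomial.aeval M)
  have hqS : (Polynomial.aeval M) q = M * S + ε • 1 := by
    conv_lhs => rw [← q.X_mul_divX_add]
    simp [hSdef, Algebra.algebraMap_eq_smul_one]; rfl
  have hMr : M ^ r * (M * S) + ε • M ^ r = 0 := by
    rw [hq] at h0
    rw [map_mul, map_pow, Polynomial.aeval_X, hqS, mul_add, mul_smul_comm,
      mul_one] at h0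
    exact h0
  set A := (-ε) • (M * S) with hAdef
  have hA : M ^ r * A = M ^ r := by
    have h1 : M ^ r * (M * S) = -(ε • M ^ r) := by
      exact eq_neg_of_add_eq_zero_left hMr
    rw [hAdef, mul_smul_comm, h1, smul_neg, neg_smul, neg_neg, smul_smul, hεε,
      one_smul]
  set m := d + 1 with hmdef
  have hrd : r ≤ d := by
    have hdeq : p.natDegree = d := by
      rw [hpdef, Matrix.charpoly_natDegree_eq_dim, Fintype.card_fin]
    have : p.natDegree = r + q.natDegree := by
      rw [hq, Polynomial.natDegree_mul (pow_ne_zero _ Polynomial.X_ne_zero) hqne,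
        Polynomial.natDegree_X_pow]
    omega
  have key1 : M ^ m * A = M ^ m := by
    have hsplit : M ^ m = M ^ (d + 1 - r) * M ^ r := by
      rw [← pow_add]; congr 1; omega
    rw [hsplit, mul_assoc, hA]
  have key2 : ∀ j, M ^ m * A ^ j = M ^ m := by
    intro j; induction j with
    | zero => simp
    | succ n ih => rw [pow_succ A n, ← mul_assoc, ih, key1]
  set B := ((-ε) • S) ^ m with hBdef
  have hMSc : Commute M ((-ε) • S) := hMS.smul_right _
  have hAB : A ^ m = M ^ m * B := by
    have hAe : A = M * ((-ε) • S) := by rw [hAdef, mul_smul_comm]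
    rw [hAe, hMSc.mul_pow]
  have hMB : Commute (M ^ m) B := hMSc.pow_pow m m
  have key3 : M ^ m * B * M ^ m = M ^ m := by
    rw [mul_assoc, ← hMB.eq, ← hAB, key2 m]
  -- transfer to ℝ
  refine ⟨m, by omega, ?_⟩
  intro y hy
  obtain ⟨v, hv⟩ := hy
  have hmap : ∀ (N : Matrix (Fin d) (Fin d) ℤ) (w : Fin d → ℤ),
      (fun i => ((N.mulVec w) i : ℝ)) =
        (N.map (fun x : ℤ => (x : ℝ))).mulVec (fun i => (w i : ℝ)) := by
    intro N w; funext i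
    exact RingHom.map_mulVec (Int.castRingHom ℝ) N w i
  have hmapmul : ∀ (N₁ N₂ : Matrix (Fin d) (Fin d) ℤ),
      (N₁ * N₂).map (fun x : ℤ => (x : ℝ)) =
        N₁.map (fun x : ℤ => (x : ℝ)) * N₂.map (fun x : ℤ => (x : ℝ)) := by
    intro N₁ N₂; ext i j
    simp only [Matrix.map_apply, Matrix.mul_apply]
    push_cast
    rfl
  have hpow : ∀ (N : Matrix (Fin d) (Fin d) ℤ) (k : ℕ),
      (N.map (fun x : ℤ => (x : ℝ))) ^ k = (N ^ k).map (fun x : ℤ => (x : ℝ)) := by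
    intro N k
    induction k with
    | zero => simp [Matrix.map_one]
    | succ n ih => rw [pow_succ, pow_succ, ih, hmapmul]
  refine ⟨B.mulVec y, ?_, ?_⟩
  · -- membership in range
    refine ⟨(B.map (fun x : ℤ => (x : ℝ))).mulVec v, ?_⟩
    rw [hmap B y, ← hv, Matrix.mulVec_mulVec, Matrix.mulVec_mulVec, hpow,
      ← hmapmul, ← hmapmul]
    rw [hMB.eq]
  · -- M^m (B y) = y
    have hinj : Function.Injective (fun w : Fin d → ℤ => (fun i => (w i : ℝ))) := by
      intro a b hab
      funext i
      have h := congrFun hab i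
      simpa using h
    apply hinj
    show (fun i => (((M ^ m).mulVec (B.mulVec y)) i : ℝ)) = (fun i => (y i : ℝ))
    rw [hmap (M ^ m) (B.mulVec y), hmap B y, ← hv]
    rw [Matrix.mulVec_mulVec, Matrix.mulVec_mulVec, hpow, ← hmapmul, ← hmapmul, key3]
end

section
/- Let α ∈ ℝ and let M ∈ M_d(ℤ) be pseudo-unimodular. Then α·(1,…,1)·Mⁿ → 0 modulo ℤ^d as n → ∞ if and only if there exists a row vector w ∈ ℤ^d such that (α·(1,…,1) − w)·Mⁿ → 0 in ℝ^d as n → ∞. -/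
open Polynomial in
lemma key_alg {d : ℕ} (M : Matrix (Fin d) (Fin d) ℤ) (hpu : PseudoUnimodular M) :
    ∃ (k : ℕ) (A : Matrix (Fin d) (Fin d) ℤ), Commute M A ∧ M ^ k = M ^ (k+1) * A := by
  classical
  set p := M.charpoly with hpdef
  have hp : p.Monic := M.charpoly_monic
  have hpne : p ≠ 0 := hp.ne_zero
  set k := p.natTrailingDegree with hk
  have hdvd : (X : ℤ[X]) ^ k ∣ p :=
    X_pow_dvd_iff.2 fun e he => coeff_eq_zero_of_lt_natTrailingDegree he
  obtain ⟨q, hq⟩ := hdvd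
  have hq0 : q.coeff 0 = p.coeff k := by
    rw [hq]
    simpa using (coeff_X_pow_mul q k 0).symm
  have hq0ne : q.coeff 0 ≠ 0 := by
    rw [hq0]
    exact fun h => hpne (Polynomial.trailingCoeff_eq_zero.1 h)
  have hqmonic : q.Monic := by
    have := hp
    rw [Monic, hq, leadingCoeff_mul, (monic_X_pow k).leadingCoeff, one_mul] at this
    exact this
  have hmap : (M.map (fun x : ℤ => (x : ℂ))).charpoly = p.map (Int.castRingHom ℂ) := by
    rw [hpdef]
    exact Matrix.charpoly_map M (Int.castRingHom ℂ)
  have hqc_monic : (q.map (Int.castRingHom ℂ)).Monic := hqmonic.map _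
  have hqc_ne : q.map (Int.castRingHom ℂ) ≠ 0 := hqc_monic.ne_zero
  have hpc_eq : p.map (Int.castRingHom ℂ) =
      X ^ k * q.map (Int.castRingHom ℂ) := by
    rw [hq, Polynomial.map_mul, Polynomial.map_pow, map_X]
  have hsplits : (p.map (Int.castRingHom ℂ)).Splits :=
    IsAlgClosed.splits _
  have hqsplits : (q.map (Int.castRingHom ℂ)).Splits := by
    refine Splits.of_dvd hsplits ?_ ⟨X ^ k, by rw [hpc_eq]; ring⟩
    rw [hpc_eq]
    exact mul_ne_zero (pow_ne_zero _ X_ne_zero) hqc_ne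
  have hroots : (p.map (Int.castRingHom ℂ)).roots
      = Multiset.replicate k 0 + (q.map (Int.castRingHom ℂ)).roots := by
    rw [hpc_eq, Polynomial.roots_mul (mul_ne_zero (pow_ne_zero _ X_ne_zero) hqc_ne),
      Polynomial.roots_pow, Polynomial.roots_X]
    simp [Multiset.nsmul_singleton]
  have hfilter : ((p.map (Int.castRingHom ℂ)).roots.filter (fun z => z ≠ 0)).prod
      = (q.map (Int.castRingHom ℂ)).roots.prod := by
    rw [hroots, Multiset.filter_add]
    rw [Multiset.filter_eq_nil.2 (fun a ha => by
      simp [Multiset.eq_of_mem_replicate ha]),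
      Multiset.filter_eq_self.2 (fun a ha => ?_), Multiset.prod_add, Multiset.prod_zero, one_mul]
    intro ha0
    apply hq0ne
    have : IsRoot (q.map (Int.castRingHom ℂ)) 0 := isRoot_of_mem_roots (ha0 ▸ ha)
    have h0 : (q.map (Int.castRingHom ℂ)).coeff 0 = 0 := by
      rw [coeff_zero_eq_eval_zero]; exact this
    rw [coeff_map, eq_intCast] at h0
    exact_mod_cast h0
  have hcoeff : ((q.coeff 0 : ℤ) : ℂ) = (-1) ^ (q.map (Int.castRingHom ℂ)).natDegree *
      (q.map (Int.castRingHom ℂ)).roots.prod := by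
    have h := hqsplits.coeff_zero_eq_prod_roots_of_monic hqc_monic
    rw [coeff_map] at h
    simpa using h
  have hc2 : q.coeff 0 * q.coeff 0 = 1 := by
    have hpm : (q.map (Int.castRingHom ℂ)).roots.prod = 1 ∨
        (q.map (Int.castRingHom ℂ)).roots.prod = -1 := by
      rcases hpu with h | h <;> [left; right] <;>
        rw [← h, hmap, hfilter]
    have : ((q.coeff 0 * q.coeff 0 : ℤ) : ℂ) = 1 := by
      push_cast
      rw [hcoeff]
      rcases hpm with h | h <;> rw [h] <;>
        rcases Nat.even_or_odd (q.map (Int.castRingHom ℂ)).natDegree with he | he <;>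
        simp [he.neg_one_pow]
    exact_mod_cast this
  set c := q.coeff 0 with hc
  set B := Polynomial.aeval M q.divX with hB
  have hcomm : Commute M B := by
    have := (Commute.all (X : ℤ[X]) q.divX).map (Polynomial.aeval M)
    simpa using this
  have hCH : Polynomial.aeval M p = 0 := M.aeval_self_charpoly
  have hqsplit : q.divX * X + C c = q := q.divX_mul_X_add
  have haq : Polynomial.aeval M q = B * M + c • 1 := by
    rw [← hqsplit]
    simp [hB, Algebra.algebraMap_eq_smul_one]
  have hsplitp : Polynomial.aeval M p = M ^ k * Polynomial.aeval M q := by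
    rw [hq, map_mul, map_pow, Polynomial.aeval_X]
  have h0 : M ^ k * (B * M + c • 1) = 0 := by
    rw [← haq, ← hsplitp, hCH]
  refine ⟨k, (-c) • B, (hcomm.smul_right _), ?_⟩
  have h1 : M ^ k * (B * M) + c • M ^ k = 0 := by
    rw [mul_add, mul_smul_comm, mul_one] at h0
    exact h0
  have h3 : M ^ k * (B * M) = M ^ (k+1) * B := by
    rw [← hcomm.eq, ← mul_assoc, pow_succ]
  have h2 : c • M ^ k = -(M ^ (k+1) * B) := by
    rw [← h3]
    exact eq_neg_of_add_eq_zero_right h1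
  calc M ^ k = (c * c) • M ^ k := by rw [hc2, one_smul]
    _ = c • (c • M ^ k) := by rw [smul_smul]
    _ = c • (-(M ^ (k+1) * B)) := by rw [h2]
    _ = M ^ (k+1) * ((-c) • B) := by
        rw [smul_neg, ← neg_smul, mul_smul_comm]

lemma map_pow_int {d : ℕ} (B : Matrix (Fin d) (Fin d) ℤ) (n : ℕ) :
    (B.map (fun x : ℤ => (x : ℝ))) ^ n = (B ^ n).map (fun x : ℤ => (x : ℝ)) := by
  induction n with
  | zero => ext i j; simp [Matrix.map_apply, Matrix.one_apply]
  | succ n ih =>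
      rw [pow_succ, pow_succ, ih]
      ext i j
      simp [Matrix.mul_apply, Matrix.map_apply]

lemma cast_vecMul {d : ℕ} (u : Fin d → ℤ) (B : Matrix (Fin d) (Fin d) ℤ) (i : Fin d) :
    ((Matrix.vecMul u B) i : ℝ)
      = Matrix.vecMul (fun j => (u j : ℝ)) (B.map (fun x : ℤ => (x : ℝ))) i := by
  simp only [Matrix.vecMul, dotProduct, Matrix.map_apply]
  push_cast
  rfl

lemma pow_stab {d : ℕ} {M A : Matrix (Fin d) (Fin d) ℤ} {k : ℕ}
    (hA : M ^ k = M ^ (k + 1) * A) :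
    ∀ (j m : ℕ), k ≤ m → M ^ m = M ^ (m + j) * A ^ j := by
  have step : ∀ m, k ≤ m → M ^ m = M ^ (m + 1) * A := by
    intro m hm
    obtain ⟨t, rfl⟩ := Nat.exists_eq_add_of_le hm
    calc M ^ (k + t) = M ^ t * M ^ k := by rw [← pow_add, add_comm]
      _ = M ^ t * (M ^ (k + 1) * A) := by rw [hA]
      _ = M ^ (k + t + 1) * A := by rw [← mul_assoc, ← pow_add]; ring_nf
  intro j
  induction j with
  | zero => intro m _; simp
  | succ j ih =>
      intro m hm
      calc M ^ m = M ^ (m + 1) * A := step m hm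
        _ = (M ^ (m + 1 + j) * A ^ j) * A := by rw [← ih (m + 1) (le_trans hm (Nat.le_succ m))]
        _ = M ^ (m + (j + 1)) * A ^ (j + 1) := by
            rw [mul_assoc, ← pow_succ, show m + 1 + j = m + (j + 1) from by omega]

theorem stmt_3 {d : ℕ} (α : ℝ) (M : Matrix (Fin d) (Fin d) ℤ) (hpu : PseudoUnimodular M) :
    Filter.Tendsto
      (fun n : ℕ => fun i : Fin d =>
        ((Matrix.vecMul (fun _ => α) ((M.map (fun x : ℤ => (x : ℝ))) ^ n)) i : AddCircle (1 : ℝ)))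
      Filter.atTop (nhds 0) ↔
    ∃ w : Fin d → ℤ, Filter.Tendsto
      (fun n : ℕ => Matrix.vecMul (fun i => α - (w i : ℝ)) ((M.map (fun x : ℤ => (x : ℝ))) ^ n))
      Filter.atTop (nhds 0) := by
  classical
  set Mr := M.map (fun x : ℤ => (x : ℝ)) with hMr
  set f : ℕ → Fin d → ℝ := fun n => Matrix.vecMul (fun _ => α) (Mr ^ n) with hf
  constructor
  · intro h
    obtain ⟨k, A, hcomm, hA⟩ := key_alg M hpu
    set w : ℕ → Fin d → ℤ := fun n i => round (f n i) with hwdef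
    set ε : ℕ → Fin d → ℝ := fun n i => f n i - (w n i : ℝ) with hεdef
    have hε0 : Filter.Tendsto (fun n => ε n) Filter.atTop (nhds 0) := by
      rw [tendsto_pi_nhds]
      intro i
      have hi : Filter.Tendsto (fun n => ((f n i : ℝ) : AddCircle (1 : ℝ)))
          Filter.atTop (nhds 0) := tendsto_pi_nhds.1 h i
      have hn := tendsto_zero_iff_norm_tendsto_zero.1 hi
      have key : ∀ n, ‖((f n i : ℝ) : AddCircle (1 : ℝ))‖ = |ε n i| := by
        intro n
        rw [AddCircle.norm_eq]
        simp [hεdef, hwdef]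
      rw [show (0 : Fin d → ℝ) i = 0 from rfl]
      rw [tendsto_zero_iff_norm_tendsto_zero]
      refine hn.congr fun n => ?_
      rw [key n, Real.norm_eq_abs]
    have hrec : ∀ n, f (n + 1) = Matrix.vecMul (f n) Mr := by
      intro n
      rw [hf]
      simp only
      rw [pow_succ, ← Matrix.vecMul_vecMul]
    set g : ℕ → Fin d → ℤ := fun n i => w (n + 1) i - Matrix.vecMul (w n) M i with hg
    have hgval : ∀ n i, (g n i : ℝ) = Matrix.vecMul (ε n) Mr i - ε (n + 1) i := by
      intro n i
      have h1 : ((Matrix.vecMul (w n) M) i : ℝ)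
          = Matrix.vecMul (fun j => (w n j : ℝ)) Mr i := cast_vecMul _ _ _
      have h2 : (fun j => (w n j : ℝ)) = f n - ε n := by
        funext j; simp [hεdef]
      have h4 : Matrix.vecMul (f n - ε n) Mr = f (n + 1) - Matrix.vecMul (ε n) Mr := by
        rw [Matrix.sub_vecMul, hrec n]
      have h5 : (g n i : ℝ) = (w (n + 1) i : ℝ) - ((Matrix.vecMul (w n) M) i : ℝ) := by
        rw [hg]; push_cast; ring
      rw [h5, h1, h2, h4]
      have h6 : (w (n + 1) i : ℝ) = f (n + 1) i - ε (n + 1) i := by simp [hεdef]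
      rw [h6]
      simp
    have hgto : ∀ i, Filter.Tendsto (fun n => (g n i : ℝ)) Filter.atTop (nhds 0) := by
      intro i
      have hv : Filter.Tendsto (fun n => Matrix.vecMul (ε n) Mr i) Filter.atTop (nhds 0) := by
        have heq : ∀ n, Matrix.vecMul (ε n) Mr i = ∑ j, ε n j * Mr j i := by
          intro n; simp [Matrix.vecMul, dotProduct]
        simp_rw [heq]
        have : (0 : ℝ) = ∑ j : Fin d, 0 * Mr j i := by simp
        rw [this]
        exact tendsto_finset_sum _ fun j _ =>
          ((tendsto_pi_nhds.1 hε0 j).mul_const (Mr j i))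
      have hsh : Filter.Tendsto (fun n => ε (n + 1) i) Filter.atTop (nhds 0) :=
        (tendsto_pi_nhds.1 hε0 i).comp (Filter.tendsto_add_atTop_nat 1)
      have := hv.sub hsh
      rw [sub_zero] at this
      exact this.congr fun n => (hgval n i).symm
    have hev : ∀ᶠ n in Filter.atTop, ∀ i, g n i = 0 := by
      rw [Filter.eventually_all]
      intro i
      have h1 : ∀ᶠ n in Filter.atTop, |(g n i : ℝ)| < 1 := by
        have := Metric.tendsto_nhds.1 (hgto i) 1 one_pos
        refine this.mono fun n hn => ?_
        rwa [Real.dist_eq, sub_zero] at hn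
      refine h1.mono fun n hn => ?_
      rw [← Int.cast_abs] at hn
      exact Int.abs_lt_one_iff.1 (by exact_mod_cast hn)
    obtain ⟨N, hN⟩ := Filter.eventually_atTop.1 hev
    have hwstep : ∀ n, N ≤ n → w (n + 1) = Matrix.vecMul (w n) M := by
      intro n hn
      funext i
      have := hN n hn i
      rw [hg] at this
      simp only at this
      omega
    have hwN : ∀ m, w (N + m) = Matrix.vecMul (w N) (M ^ m) := by
      intro m
      induction m with
      | zero => simp [Matrix.vecMul_one]
      | succ m ih =>
          have : N + (m + 1) = (N + m) + 1 := by omega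
          rw [this, hwstep (N + m) (Nat.le_add_right N m), ih, Matrix.vecMul_vecMul, ← pow_succ]
    refine ⟨Matrix.vecMul (w N) (A ^ N), ?_⟩
    set W := Matrix.vecMul (w N) (A ^ N) with hW
    have hWn : ∀ n, N + k ≤ n → Matrix.vecMul W (M ^ n) = w n := by
      intro n hn
      rw [hW, Matrix.vecMul_vecMul]
      have hc : A ^ N * M ^ n = M ^ n * A ^ N := ((hcomm.symm).pow_pow N n).eq
      rw [hc]
      have hm : M ^ (n - N) = M ^ ((n - N) + N) * A ^ N := pow_stab hA N (n - N) (by omega)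
      rw [show (n - N) + N = n from by omega] at hm
      rw [← hm]
      have h7 := hwN (n - N)
      rw [show N + (n - N) = n from by omega] at h7
      exact h7.symm
    have hfinal : ∀ n, N + k ≤ n →
        Matrix.vecMul (fun i => α - (W i : ℝ)) (Mr ^ n) = ε n := by
      intro n hn
      funext i
      have hsub : (fun i : Fin d => α - (W i : ℝ))
          = (fun _ : Fin d => α) - (fun i => (W i : ℝ)) := rfl
      rw [hsub, Matrix.sub_vecMul]
      have hcast : Matrix.vecMul (fun i => (W i : ℝ)) (Mr ^ n) i
          = ((Matrix.vecMul W (M ^ n)) i : ℝ) := by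
        rw [hMr, map_pow_int]
        exact (cast_vecMul W (M ^ n) i).symm
      rw [Pi.sub_apply, hcast, hWn n hn]
    refine hε0.congr' ?_
    rw [Filter.eventuallyEq_iff_exists_mem]
    exact ⟨{n | N + k ≤ n}, Filter.mem_atTop _, fun n hn => (hfinal n hn).symm⟩
  · rintro ⟨w, hw⟩
    have hco : Continuous (fun v : Fin d → ℝ => fun i => ((v i : ℝ) : AddCircle (1 : ℝ))) :=
      continuous_pi fun i => (AddCircle.continuous_mk' 1).comp (continuous_apply i)
    have h0 : Filter.Tendsto
        (fun n => fun i =>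
          ((Matrix.vecMul (fun i => α - (w i : ℝ)) (Mr ^ n)) i : AddCircle (1 : ℝ)))
        Filter.atTop (nhds 0) := by
      have := (hco.tendsto 0).comp hw
      simpa [Function.comp_def, Pi.zero_def] using this
    refine h0.congr fun n => ?_
    funext i
    have hdecomp : f n i
        = Matrix.vecMul (fun i => α - (w i : ℝ)) (Mr ^ n) i
          + ((Matrix.vecMul w (M ^ n)) i : ℝ) := by
      rw [cast_vecMul, ← map_pow_int, ← hMr]
      have : (fun _ : Fin d => α)
          = (fun i : Fin d => α - (w i : ℝ)) + (fun i => (w i : ℝ)) := by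
        funext i; simp
      rw [hf]
      simp only
      rw [this, Matrix.add_vecMul]
      simp
    show _ = ((f n i : ℝ) : AddCircle (1 : ℝ))
    rw [hdecomp, AddCircle.coe_add]
    have hint : (((Matrix.vecMul w (M ^ n)) i : ℝ) : AddCircle (1 : ℝ)) = 0 := by
      rw [AddCircle.coe_eq_zero_iff]
      exact ⟨(Matrix.vecMul w (M ^ n)) i, by simp⟩
    rw [hint, add_zero]
end

section
/- Let α ∈ ℝ, let M be a real d×d matrix, and let w ∈ ℝ^d be a row vector. Then (α·(1,…,1) − w)·Mⁿ → 0 as n → ∞ if and only if for every generalized eigenvector v of M associated to an eigenvalue of modulus ≥ 1: w·v = α if the sum of the coordinates of v equals 1, and w·v = 0 if the sum of the coordinates of v equals 0. -/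
open Matrix Filter

/-- `v` is a generalized eigenvector of the complex matrix `M` for the eigenvalue `β`. -/
def IsGenEigvec {d : ℕ} (M : Matrix (Fin d) (Fin d) ℂ) (β : ℂ) (v : Fin d → ℂ) : Prop :=
  v ≠ 0 ∧ ∃ k : ℕ, 1 ≤ k ∧ ((M - β • 1) ^ k).mulVec v = 0

namespace Stmt4Aux

/-- Recurrence: pairing against `(A - β•1) x` in terms of pairings against `x`. -/
lemma hrec {d : ℕ} (A : Matrix (Fin d) (Fin d) ℂ) (β : ℂ) (u x : Fin d → ℂ) (n : ℕ) :
    u ⬝ᵥ ((A ^ n).mulVec ((A - β • 1).mulVec x)) =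
      u ⬝ᵥ ((A ^ (n + 1)).mulVec x) - β * (u ⬝ᵥ ((A ^ n).mulVec x)) := by
  rw [Matrix.mulVec_mulVec]
  have h : A ^ n * (A - β • 1) = A ^ (n + 1) - β • A ^ n := by
    rw [mul_sub, ← pow_succ, Matrix.mul_smul, mul_one]
  rw [h, Matrix.sub_mulVec, Matrix.smul_mulVec, dotProduct_sub,
    dotProduct_smul, smul_eq_mul]

/-- Key lemma for eigenvalues of modulus `≥ 1`: if the pairing sequence tends to zero,
it is identically zero. -/
lemma keyB {d : ℕ} (A : Matrix (Fin d) (Fin d) ℂ) {β : ℂ} (hβ : 1 ≤ ‖β‖) (u : Fin d → ℂ) :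
    ∀ k (x : Fin d → ℂ), ((A - β • 1) ^ k).mulVec x = 0 →
      Tendsto (fun n => u ⬝ᵥ ((A ^ n).mulVec x)) atTop (nhds 0) →
      ∀ n, u ⬝ᵥ ((A ^ n).mulVec x) = 0 := by
  intro k
  induction k with
  | zero =>
      intro x hx _ n
      rw [pow_zero, Matrix.one_mulVec] at hx
      simp [hx]
  | succ k ih =>
      intro x hx hten
      set x' := (A - β • 1).mulVec x with hx'def
      have hx' : ((A - β • 1) ^ k).mulVec x' = 0 := by
        rw [hx'def, Matrix.mulVec_mulVec, ← pow_succ]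
        exact hx
      have hten' : Tendsto (fun n => u ⬝ᵥ ((A ^ n).mulVec x')) atTop (nhds 0) := by
        have h1 : Tendsto (fun n => u ⬝ᵥ ((A ^ (n + 1)).mulVec x)) atTop (nhds 0) :=
          (tendsto_add_atTop_iff_nat 1).2 hten
        have h2 : Tendsto (fun n => β * (u ⬝ᵥ ((A ^ n).mulVec x))) atTop (nhds 0) := by
          simpa using hten.const_mul β
        have := h1.sub h2
        simp only [sub_zero] at this
        refine this.congr fun n => ?_
        rw [← hrec A β u x n]
      have hz : ∀ n, u ⬝ᵥ ((A ^ n).mulVec x') = 0 := ih x' hx' hten'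
      have hstep : ∀ n, u ⬝ᵥ ((A ^ (n + 1)).mulVec x) = β * (u ⬝ᵥ ((A ^ n).mulVec x)) := by
        intro n
        have h := hrec A β u x n
        rw [hz n] at h
        linear_combination -h
      have hgeom : ∀ n, u ⬝ᵥ ((A ^ n).mulVec x) = β ^ n * (u ⬝ᵥ x) := by
        intro n
        induction n with
        | zero => simp [Matrix.one_mulVec]
        | succ n ihn => rw [hstep n, ihn]; ring
      have h0 : u ⬝ᵥ x = 0 := by
        by_contra h0
        have hpos : 0 < ‖u ⬝ᵥ x‖ := norm_pos_iff.2 h0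
        have hnorm : Tendsto (fun n => ‖u ⬝ᵥ ((A ^ n).mulVec x)‖) atTop (nhds 0) := by
          simpa using hten.norm
        have hev : ∀ᶠ n in atTop, ‖u ⬝ᵥ ((A ^ n).mulVec x)‖ < ‖u ⬝ᵥ x‖ :=
          hnorm.eventually (gt_mem_nhds hpos)
        obtain ⟨n, hn⟩ := hev.exists
        rw [hgeom n, norm_mul, norm_pow] at hn
        have : (1 : ℝ) ≤ ‖β‖ ^ n := one_le_pow₀ hβ
        nlinarith
      intro n
      rw [hgeom n, h0, mul_zero]

/-- If `a (n+1) = β * a n + b n`, `b → 0` and `‖β‖ < 1` then `a → 0`. -/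
lemma conv_tendsto {β : ℂ} (hβ : ‖β‖ < 1) (a b : ℕ → ℂ)
    (hab : ∀ n, a (n + 1) = β * a n + b n)
    (hb : Tendsto b atTop (nhds 0)) : Tendsto a atTop (nhds 0) := by
  set r := ‖β‖ with hr
  have hr0 : (0 : ℝ) ≤ r := norm_nonneg β
  rw [Metric.tendsto_atTop]
  intro ε hε
  have hεr : 0 < ε * (1 - r) / 2 := by
    have : 0 < 1 - r := by linarith
    positivity
  obtain ⟨N₁, hN₁⟩ := Metric.tendsto_atTop.1 hb (ε * (1 - r) / 2) hεr
  have hbN : ∀ n, N₁ ≤ n → ‖b n‖ ≤ ε * (1 - r) / 2 := by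
    intro n hn
    have := hN₁ n hn
    rw [dist_zero_right] at this
    exact this.le
  have step : ∀ m, ‖a (N₁ + m)‖ ≤ r ^ m * ‖a N₁‖ + ε / 2 := by
    intro m
    induction m with
    | zero => simp; linarith
    | succ m ihm =>
        have h1 : ‖a (N₁ + m + 1)‖ ≤ r * ‖a (N₁ + m)‖ + ε * (1 - r) / 2 := by
          rw [hab]
          calc ‖β * a (N₁ + m) + b (N₁ + m)‖
              ≤ ‖β * a (N₁ + m)‖ + ‖b (N₁ + m)‖ := norm_add_le _ _
            _ ≤ r * ‖a (N₁ + m)‖ + ε * (1 - r) / 2 := by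
                rw [norm_mul]
                exact add_le_add le_rfl (hbN _ (Nat.le_add_right _ _))
        have h2 : r * ‖a (N₁ + m)‖ ≤ r * (r ^ m * ‖a N₁‖ + ε / 2) :=
          mul_le_mul_of_nonneg_left ihm hr0
        have : (N₁ + (m + 1)) = (N₁ + m) + 1 := by omega
        rw [this]
        calc ‖a (N₁ + m + 1)‖ ≤ r * (r ^ m * ‖a N₁‖ + ε / 2) + ε * (1 - r) / 2 := by linarith
          _ = r ^ (m + 1) * ‖a N₁‖ + (ε / 2 - (1 - r) * (ε / 2) + ε * (1 - r) / 2) := by ring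
          _ = r ^ (m + 1) * ‖a N₁‖ + ε / 2 := by ring
  have htail : Tendsto (fun m => r ^ m * ‖a N₁‖) atTop (nhds 0) := by
    simpa using (tendsto_pow_atTop_nhds_zero_of_lt_one hr0 hβ).mul_const ‖a N₁‖
  obtain ⟨m₀, hm₀⟩ := (htail.eventually (gt_mem_nhds (show (0:ℝ) < ε / 2 by linarith))).exists
  refine ⟨N₁ + m₀, fun n hn => ?_⟩
  rw [dist_zero_right]
  have hsplit : n = N₁ + (n - N₁) := by omega
  have hle : r ^ (n - N₁) ≤ r ^ m₀ :=
    pow_le_pow_of_le_one hr0 hβ.le (by omega)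
  have hN : ‖a N₁‖ ≥ 0 := norm_nonneg _
  calc ‖a n‖ = ‖a (N₁ + (n - N₁))‖ := by rw [← hsplit]
    _ ≤ r ^ (n - N₁) * ‖a N₁‖ + ε / 2 := step _
    _ ≤ r ^ m₀ * ‖a N₁‖ + ε / 2 := by
        exact add_le_add (mul_le_mul_of_nonneg_right hle hN) le_rfl
    _ < ε := by linarith

/-- Key lemma for eigenvalues of modulus `< 1`: the pairing sequence tends to zero. -/
lemma keyA {d : ℕ} (A : Matrix (Fin d) (Fin d) ℂ) {β : ℂ} (hβ : ‖β‖ < 1) (u : Fin d → ℂ) :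
    ∀ k (x : Fin d → ℂ), ((A - β • 1) ^ k).mulVec x = 0 →
      Tendsto (fun n => u ⬝ᵥ ((A ^ n).mulVec x)) atTop (nhds 0) := by
  intro k
  induction k with
  | zero =>
      intro x hx
      rw [pow_zero, Matrix.one_mulVec] at hx
      simp [hx]
  | succ k ih =>
      intro x hx
      set x' := (A - β • 1).mulVec x with hx'def
      have hx' : ((A - β • 1) ^ k).mulVec x' = 0 := by
        rw [hx'def, Matrix.mulVec_mulVec, ← pow_succ]
        exact hx
      refine conv_tendsto hβ _ (fun n => u ⬝ᵥ ((A ^ n).mulVec x')) ?_ (ih x' hx')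
      intro n
      have h := hrec A β u x n
      rw [← hx'def] at h
      linear_combination -h

end Stmt4Aux

open Stmt4Aux in
theorem stmt_4 {d : ℕ} (α : ℝ) (M : Matrix (Fin d) (Fin d) ℝ) (w : Fin d → ℝ) :
    Filter.Tendsto (fun n : ℕ => Matrix.vecMul (fun i => α - w i) (M ^ n))
      Filter.atTop (nhds 0) ↔
    ∀ (β : ℂ) (v : Fin d → ℂ), 1 ≤ ‖β‖ →
      IsGenEigvec (M.map (fun x : ℝ => (x : ℂ))) β v →
      ((∑ i, v i) = 1 → (∑ i, (w i : ℂ) * v i) = (α : ℂ)) ∧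
      ((∑ i, v i) = 0 → (∑ i, (w i : ℂ) * v i) = 0) := by
  classical
  set Mc : Matrix (Fin d) (Fin d) ℂ := M.map (fun x : ℝ => (x : ℂ)) with hMcdef
  set u : Fin d → ℝ := fun i => α - w i with hudef
  set uc : Fin d → ℂ := fun i => (α : ℂ) - (w i : ℂ) with hucdef
  -- powers commute with the entrywise coercion
  have hpow : ∀ n : ℕ, Mc ^ n = (M ^ n).map (fun x : ℝ => (x : ℂ)) := by
    intro n
    have : Mc = (Complex.ofRealHom.mapMatrix : Matrix (Fin d) (Fin d) ℝ →+* _) M := rfl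
    rw [this, ← map_pow]
    rfl
  -- coordinates of the complexified sequence
  have hvec : ∀ (n : ℕ) (i : Fin d),
      (Matrix.vecMul uc (Mc ^ n)) i = (((Matrix.vecMul u (M ^ n)) i : ℝ) : ℂ) := by
    intro n i
    rw [hpow]
    simp only [Matrix.vecMul, dotProduct, Matrix.map_apply, hucdef, hudef]
    push_cast
    rfl
  -- the real statement is equivalent to the complex one
  have hLiff : Tendsto (fun n : ℕ => Matrix.vecMul u (M ^ n)) atTop (nhds 0) ↔
      Tendsto (fun n : ℕ => Matrix.vecMul uc (Mc ^ n)) atTop (nhds 0) := by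
    rw [tendsto_pi_nhds, tendsto_pi_nhds]
    constructor
    · intro h i
      have hi := h i
      simp only [Pi.zero_apply] at hi ⊢
      have := (Complex.continuous_ofReal.tendsto 0).comp hi
      simp only [Function.comp_def, Complex.ofReal_zero] at this
      refine this.congr fun n => ?_
      rw [hvec]
    · intro h i
      have hi := h i
      simp only [Pi.zero_apply] at hi ⊢
      have := (Complex.continuous_re.tendsto 0).comp hi
      simp only [Function.comp_def, Complex.zero_re] at this
      refine this.congr fun n => ?_
      rw [hvec]
      simp
  -- dot product formula
  have hdot : ∀ v : Fin d → ℂ,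
      uc ⬝ᵥ v = (α : ℂ) * (∑ i, v i) - ∑ i, (w i : ℂ) * v i := by
    intro v
    simp only [dotProduct, hucdef, sub_mul, Finset.mul_sum]
    rw [Finset.sum_sub_distrib]
  -- the right-hand side is equivalent to orthogonality to all gen. eigenvectors
  have hRiff : (∀ (β : ℂ) (v : Fin d → ℂ), 1 ≤ ‖β‖ → IsGenEigvec Mc β v →
      ((∑ i, v i) = 1 → (∑ i, (w i : ℂ) * v i) = (α : ℂ)) ∧
      ((∑ i, v i) = 0 → (∑ i, (w i : ℂ) * v i) = 0)) ↔
      (∀ (β : ℂ) (v : Fin d → ℂ), 1 ≤ ‖β‖ → IsGenEigvec Mc β v → uc ⬝ᵥ v = 0) := by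
    constructor
    · intro h β v hβ hv
      rw [hdot]
      by_cases hs : (∑ i, v i) = 0
      · rw [hs, (h β v hβ hv).2 hs, mul_zero, sub_zero]
      · set s := ∑ i, v i with hsdef
        set v' : Fin d → ℂ := s⁻¹ • v with hv'def
        have hv' : IsGenEigvec Mc β v' := by
          obtain ⟨hv0, k, hk, hvk⟩ := hv
          refine ⟨smul_ne_zero (inv_ne_zero hs) hv0, k, hk, ?_⟩
          rw [hv'def, Matrix.mulVec_smul, hvk, smul_zero]
        have hsum' : (∑ i, v' i) = 1 := by
          simp only [hv'def, Pi.smul_apply, smul_eq_mul, ← Finset.mul_sum, ← hsdef]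
          exact inv_mul_cancel₀ hs
        have h1 := (h β v' hβ hv').1 hsum'
        have h2 : (∑ i, (w i : ℂ) * v' i) = s⁻¹ * ∑ i, (w i : ℂ) * v i := by
          rw [Finset.mul_sum]
          refine Finset.sum_congr rfl fun i _ => ?_
          simp only [hv'def, Pi.smul_apply, smul_eq_mul]
          ring
        rw [h2] at h1
        have h3 := congrArg (fun z => s * z) h1
        simp only [← mul_assoc, mul_inv_cancel₀ hs, one_mul] at h3
        rw [h3]
        ring
    · intro h β v hβ hv
      have h0 := h β v hβ hv
      rw [hdot] at h0
      constructor
      · intro hs1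
        rw [hs1] at h0
        linear_combination -h0
      · intro hs0
        rw [hs0] at h0
        linear_combination -h0
  rw [hLiff, hRiff]
  -- main equivalence over ℂ
  constructor
  · -- Tendsto → orthogonality
    intro hL β v hβ hv
    obtain ⟨hv0, k, hk, hvk⟩ := hv
    have hcont : Continuous (fun y : Fin d → ℂ => y ⬝ᵥ v) := by
      unfold dotProduct
      exact continuous_finset_sum _ fun i _ => (continuous_apply i).mul continuous_const
    have hten : Tendsto (fun n => uc ⬝ᵥ ((Mc ^ n).mulVec v)) atTop (nhds 0) := by
      have := (hcont.tendsto 0).comp hL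
      simp only [Function.comp_def, zero_dotProduct] at this
      refine this.congr fun n => ?_
      rw [← Matrix.dotProduct_mulVec]
    have := keyB Mc hβ uc k v hvk hten 0
    simpa [Matrix.one_mulVec] using this
  · -- orthogonality → Tendsto
    intro hR
    have H : ∀ x : Fin d → ℂ,
        Tendsto (fun n => uc ⬝ᵥ ((Mc ^ n).mulVec x)) atTop (nhds 0) := by
      intro x
      set f : Module.End ℂ (Fin d → ℂ) := Matrix.toLinAlgEquiv' Mc with hfdef
      have hx : x ∈ ⨆ μ : ℂ, f.maxGenEigenspace μ := by
        rw [Module.End.iSup_maxGenEigenspace_eq_top]; trivial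
      refine Submodule.iSup_induction (motive := fun x =>
          Tendsto (fun n => uc ⬝ᵥ ((Mc ^ n).mulVec x)) atTop (nhds 0))
        (fun μ => f.maxGenEigenspace μ) hx ?_ ?_ ?_
      · intro μ y hy
        rw [Module.End.mem_maxGenEigenspace] at hy
        obtain ⟨k, hk⟩ := hy
        have hk' : ((Mc - μ • 1) ^ k).mulVec y = 0 := by
          have heq : (f - μ • 1) ^ k = Matrix.toLinAlgEquiv' ((Mc - μ • 1) ^ k) := by
            rw [_root_.map_pow, _root_.map_sub, _root_.map_smul, _root_.map_one]
          rw [heq, Matrix.toLinAlgEquiv'_apply] at hk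
          exact hk
        by_cases hμ : 1 ≤ ‖μ‖
        · -- pairing is identically zero
          have hk1 : ((Mc - μ • 1) ^ (k + 1)).mulVec y = 0 := by
            rw [pow_succ', ← Matrix.mulVec_mulVec, hk', Matrix.mulVec_zero]
          have hz : ∀ n : ℕ, uc ⬝ᵥ ((Mc ^ n).mulVec y) = 0 := by
            intro n
            set y' := (Mc ^ n).mulVec y with hy'def
            by_cases hy0 : y' = 0
            · rw [hy0, dotProduct_zero]
            · have hcomm : Commute Mc (Mc - μ • 1) :=
                (Commute.refl Mc).sub_right (((Commute.one_right Mc)).smul_right μ)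
              have hcommp := (hcomm.pow_pow n (k + 1)).symm
              have hy'k : ((Mc - μ • 1) ^ (k + 1)).mulVec y' = 0 := by
                rw [hy'def, Matrix.mulVec_mulVec, hcommp, ← Matrix.mulVec_mulVec, hk1,
                  Matrix.mulVec_zero]
              exact hR μ y' hμ ⟨hy0, k + 1, Nat.le_add_left 1 k, hy'k⟩
          simp only [hz]
          exact tendsto_const_nhds
        · push_neg at hμ
          exact keyA Mc hμ uc k y hk'
      · simp only [Matrix.mulVec_zero, dotProduct_zero]
        exact tendsto_const_nhds
      · intro y z hy hz
        have := hy.add hz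
        simp only [add_zero] at this
        refine this.congr fun n => ?_
        rw [Matrix.mulVec_add, dotProduct_add]
    rw [tendsto_pi_nhds]
    intro i
    simp only [Pi.zero_apply]
    have := H (Pi.single i 1)
    refine this.congr fun n => ?_
    simp only [Matrix.mulVec_single, mul_one]
    simp [Matrix.vecMul, dotProduct]
end

section
/- Let M be a real d×d matrix, α ∈ ℝ and w ∈ ℝ^d a row vector such that for every generalized eigenvector v of M for an eigenvalue of modulus ≥ 1 one has (α·(1,…,1) − w)·v = 0. Then the convergence (α·(1,…,1) − w)·Mⁿ → 0 is exponential: there exist C > 0 and 0 < ρ < 1 such that ‖(α·(1,…,1) − w)·Mⁿ‖ ≤ C·ρⁿ for all n. -/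
open Filter Matrix

def ExpDec (f : ℕ → ℝ) : Prop :=
  ∃ C > 0, ∃ ρ : ℝ, 0 < ρ ∧ ρ < 1 ∧ ∀ n, f n ≤ C * ρ ^ n

lemma poly_geom_bound (k : ℕ) {r : ℝ} (h0 : 0 ≤ r) (h1 : r < 1) :
    ∃ C > 0, ∀ n : ℕ, (n : ℝ) ^ k * r ^ n ≤ C := by
  have ht := tendsto_pow_const_mul_const_pow_of_lt_one k h0 h1
  obtain ⟨C, hC⟩ := ht.bddAbove_range
  refine ⟨C + 1, ?_, fun n => ?_⟩
  · have h1' := hC (Set.mem_range_self (f := fun n : ℕ => (n:ℝ)^k * r^n) 1)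
    simp only [Nat.cast_one, one_pow, pow_one] at h1'
    linarith
  · have := hC (Set.mem_range_self (f := fun n : ℕ => (n:ℝ)^k * r^n) n)
    linarith

lemma expDec_choose_mul_pow (m : ℕ) {b : ℝ} (hb0 : 0 ≤ b) (hb1 : b < 1) {B : ℝ}
    (hB : 0 ≤ B) : ExpDec (fun n => (n.choose m : ℝ) * b ^ (n - m) * B) := by
  set ρ0 : ℝ := (1 + b) / 2 with hρ0
  have hρ0pos : 0 < ρ0 := by rw [hρ0]; linarith
  have hbρ0 : b ≤ ρ0 := by rw [hρ0]; linarith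
  have hρ0lt : ρ0 < 1 := by rw [hρ0]; linarith
  set ρ : ℝ := (1 + ρ0) / 2 with hρ
  have hρpos : 0 < ρ := by rw [hρ]; linarith
  have hρ0ρ : ρ0 < ρ := by rw [hρ]; linarith
  have hρlt : ρ < 1 := by rw [hρ]; linarith
  obtain ⟨C, hCpos, hC⟩ := poly_geom_bound m (r := ρ0 / ρ)
    (by positivity) (by rw [div_lt_one hρpos]; exact hρ0ρ)
  refine ⟨C * B * ρ0⁻¹ ^ m + 1, by positivity, ρ, hρpos, hρlt, fun n => ?_⟩
  rcases lt_or_ge n m with hnm | hnm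
  · simp only [Nat.choose_eq_zero_of_lt hnm, Nat.cast_zero, zero_mul]
    positivity
  · -- m ≤ n
    have h1 : (n.choose m : ℝ) ≤ (n : ℝ) ^ m := by
      exact_mod_cast Nat.choose_le_pow n m
    have h2 : b ^ (n - m) ≤ ρ0 ^ (n - m) := pow_le_pow_left₀ hb0 hbρ0 _
    have h3 : ρ0 ^ (n - m) = ρ0 ^ n * ρ0⁻¹ ^ m := by
      have hpow : ρ0 ^ n = ρ0 ^ (n - m) * ρ0 ^ m := by
        rw [← pow_add]; congr 1; omega
      rw [hpow, mul_assoc, ← mul_pow, mul_inv_cancel₀ (ne_of_gt hρ0pos), one_pow, mul_one]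
    have h4 : ρ0 ^ n = (ρ0 / ρ) ^ n * ρ ^ n := by
      rw [← mul_pow, div_mul_cancel₀ _ (ne_of_gt hρpos)]
    have h5 : (n:ℝ) ^ m * (ρ0/ρ) ^ n ≤ C := hC n
    have hb' : (0:ℝ) ≤ b ^ (n-m) := by positivity
    have hρn : (0:ℝ) < ρ ^ n := by positivity
    have hchoose0 : (0:ℝ) ≤ (n.choose m : ℝ) := by positivity
    calc (n.choose m : ℝ) * b ^ (n - m) * B
        ≤ (n:ℝ)^m * ρ0 ^ (n-m) * B := by
          apply mul_le_mul _ le_rfl hB (by positivity)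
          exact mul_le_mul h1 h2 hb' (by positivity)
      _ = ((n:ℝ)^m * (ρ0/ρ)^n) * ρ^n * ρ0⁻¹^m * B := by rw [h3, h4]; ring
      _ ≤ C * ρ^n * ρ0⁻¹^m * B := by
          have : (0:ℝ) ≤ ρ0⁻¹ ^ m := by positivity
          gcongr
      _ = (C * B * ρ0⁻¹^m) * ρ^n := by ring
      _ ≤ (C * B * ρ0⁻¹^m + 1) * ρ^n := by nlinarith

lemma ExpDec.mono {f g : ℕ → ℝ} (hfg : ∀ n, f n ≤ g n) (hg : ExpDec g) : ExpDec f := by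
  obtain ⟨C, hC, ρ, h0, h1, hb⟩ := hg
  exact ⟨C, hC, ρ, h0, h1, fun n => (hfg n).trans (hb n)⟩

lemma expDec_zero : ExpDec (fun _ => 0) :=
  ⟨1, one_pos, 1/2, by norm_num, by norm_num, fun n => by positivity⟩

lemma ExpDec.add {f g : ℕ → ℝ} (hf : ExpDec f) (hg : ExpDec g) :
    ExpDec (fun n => f n + g n) := by
  obtain ⟨C, hC, ρ, h0, h1, hb⟩ := hf
  obtain ⟨C', hC', ρ', h0', h1', hb'⟩ := hg
  refine ⟨C + C', by linarith, max ρ ρ', lt_max_of_lt_left h0, max_lt h1 h1', fun n => ?_⟩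
  have l1 : f n ≤ C * max ρ ρ' ^ n :=
    (hb n).trans (by gcongr; exact le_max_left _ _)
  have l2 : g n ≤ C' * max ρ ρ' ^ n :=
    (hb' n).trans (by gcongr; exact le_max_right _ _)
  calc f n + g n ≤ C * max ρ ρ' ^ n + C' * max ρ ρ' ^ n := by linarith
    _ = (C + C') * max ρ ρ' ^ n := by ring

lemma ExpDec.sum {ι : Type*} (s : Finset ι) (f : ι → ℕ → ℝ)
    (hf : ∀ i ∈ s, ExpDec (f i)) : ExpDec (fun n => ∑ i ∈ s, f i n) := by
  classical
  induction s using Finset.induction with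
  | empty => simpa using expDec_zero
  | insert a s hx ih =>
    simp only [Finset.sum_insert hx]
    exact (hf a (Finset.mem_insert_self a s)).add
      (ih fun i hi => hf i (Finset.mem_insert_of_mem hi))

lemma ExpDec.const_mul {f : ℕ → ℝ} (hf : ExpDec f) {a : ℝ} (ha : 0 ≤ a) :
    ExpDec (fun n => a * f n) := by
  obtain ⟨C, hC, ρ, h0, h1, hb⟩ := hf
  refine ⟨a * C + 1, by positivity, ρ, h0, h1, fun n => ?_⟩
  have hρn : (0:ℝ) < ρ ^ n := by positivity
  calc a * f n ≤ a * (C * ρ ^ n) := mul_le_mul_of_nonneg_left (hb n) ha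
    _ = (a * C) * ρ ^ n := by ring
    _ ≤ (a * C + 1) * ρ ^ n := by nlinarith

lemma sum_mulVec {d : ℕ} {ι : Type*} (s : Finset ι) (f : ι → Matrix (Fin d) (Fin d) ℂ)
    (v : Fin d → ℂ) : (∑ i ∈ s, f i).mulVec v = ∑ i ∈ s, (f i).mulVec v := by
  classical
  induction s using Finset.induction with
  | empty => simp
  | insert a s h ih =>
    simp [Finset.sum_insert h, Matrix.add_mulVec, ih]

lemma genEig_decay {d : ℕ} (M : Matrix (Fin d) (Fin d) ℂ) {β : ℂ} (hβ : ‖β‖ < 1)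
    {v : Fin d → ℂ} {k0 : ℕ} (hv : ((M - β • 1) ^ k0).mulVec v = 0) :
    ExpDec (fun n => ‖(M ^ n).mulVec v‖) := by
  set N := M - β • (1 : Matrix (Fin d) (Fin d) ℂ) with hNdef
  have hzero : ∀ m, k0 ≤ m → (N ^ m).mulVec v = 0 := by
    intro m hm
    have hsplit : N ^ m = N ^ (m - k0) * N ^ k0 := by rw [← pow_add]; congr 1; omega
    rw [hsplit, ← Matrix.mulVec_mulVec, hv, Matrix.mulVec_zero]
  have hterm : ∀ n m, (N ^ m * (β • (1:Matrix (Fin d) (Fin d) ℂ)) ^ (n - m)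
        * (n.choose m : Matrix (Fin d) (Fin d) ℂ)).mulVec v
      = ((n.choose m : ℂ) * β ^ (n - m)) • (N ^ m).mulVec v := by
    intro n m
    rw [← Matrix.mulVec_mulVec, ← Matrix.mulVec_mulVec, Matrix.natCast_mulVec,
      smul_pow, one_pow, Matrix.smul_mulVec, Matrix.one_mulVec,
      Matrix.mulVec_smul, Matrix.mulVec_smul, smul_smul, mul_comm (β ^ (n - m))]
  have hM : ∀ n, (M ^ n).mulVec v
      = ∑ m ∈ Finset.range (n+1), ((n.choose m : ℂ) * β ^ (n - m)) • (N ^ m).mulVec v := by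
    intro n
    have hc : Commute N (β • (1 : Matrix (Fin d) (Fin d) ℂ)) :=
      (Commute.one_right N).smul_right β
    have h1 : M = N + β • 1 := by rw [hNdef, sub_add_cancel]
    calc (M ^ n).mulVec v = ((N + β • 1) ^ n).mulVec v := by rw [← h1]
      _ = (∑ m ∈ Finset.range (n+1),
            N ^ m * (β • 1) ^ (n - m) * (n.choose m : Matrix (Fin d) (Fin d) ℂ)).mulVec v := by
          rw [hc.add_pow]
      _ = _ := by rw [_root_.sum_mulVec]; exact Finset.sum_congr rfl fun m _ => hterm n m
  have key : ∀ n, ‖(M ^ n).mulVec v‖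
      ≤ ∑ m ∈ Finset.range k0, (n.choose m : ℝ) * ‖β‖ ^ (n - m) * ‖(N ^ m).mulVec v‖ := by
    intro n
    have hsub1 : Finset.range (n+1) ⊆ Finset.range (max (n+1) k0) :=
      Finset.range_subset_range.2 (by omega)
    have hsub2 : Finset.range k0 ⊆ Finset.range (max (n+1) k0) :=
      Finset.range_subset_range.2 (by omega)
    have e1 : ∑ m ∈ Finset.range (n+1), ((n.choose m : ℂ) * β ^ (n - m)) • (N ^ m).mulVec v
        = ∑ m ∈ Finset.range (max (n+1) k0),
            ((n.choose m : ℂ) * β ^ (n - m)) • (N ^ m).mulVec v := by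
      refine Finset.sum_subset hsub1 fun m _ hm => ?_
      have : n < m := by simp only [Finset.mem_range] at hm; omega
      rw [Nat.choose_eq_zero_of_lt this]
      simp
    have e2 : ∑ m ∈ Finset.range k0, ((n.choose m : ℂ) * β ^ (n - m)) • (N ^ m).mulVec v
        = ∑ m ∈ Finset.range (max (n+1) k0),
            ((n.choose m : ℂ) * β ^ (n - m)) • (N ^ m).mulVec v := by
      refine Finset.sum_subset hsub2 fun m _ hm => ?_
      have : k0 ≤ m := by simp only [Finset.mem_range] at hm; omega
      rw [hzero m this, smul_zero]
    have heq : ∑ m ∈ Finset.range (n+1), ((n.choose m : ℂ) * β ^ (n - m)) • (N ^ m).mulVec v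
        = ∑ m ∈ Finset.range k0, ((n.choose m : ℂ) * β ^ (n - m)) • (N ^ m).mulVec v := by
      rw [e1, e2]
    rw [hM n, heq]
    refine (norm_sum_le _ _).trans (Finset.sum_le_sum fun m _ => ?_)
    rw [norm_smul, norm_mul, norm_pow]
    exact le_of_eq (by norm_num)
  exact ExpDec.mono key (ExpDec.sum _ _ fun m _ =>
    expDec_choose_mul_pow m (norm_nonneg β) hβ (norm_nonneg _))

lemma mulVec_sum' {d : ℕ} {ι : Type*} (s : Finset ι) (A : Matrix (Fin d) (Fin d) ℂ)
    (g : ι → Fin d → ℂ) : A.mulVec (∑ i ∈ s, g i) = ∑ i ∈ s, A.mulVec (g i) := by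
  classical
  induction s using Finset.induction with
  | empty => simp
  | insert a s hx ih =>
    simp [Finset.sum_insert hx, Matrix.mulVec_add, ih]

lemma dotProduct_sum' {d : ℕ} {ι : Type*} (s : Finset ι) (u : Fin d → ℂ)
    (g : ι → Fin d → ℂ) :
    dotProduct u (∑ i ∈ s, g i) = ∑ i ∈ s, dotProduct u (g i) := by
  classical
  induction s using Finset.induction with
  | empty => simp
  | insert a s hx ih =>
    simp [Finset.sum_insert hx, dotProduct_add, ih]

lemma dot_bound {d : ℕ} (u y : Fin d → ℂ) :
    ‖dotProduct u y‖ ≤ (∑ i, ‖u i‖) * ‖y‖ := by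
  rw [dotProduct, Finset.sum_mul]
  refine (norm_sum_le _ _).trans (Finset.sum_le_sum fun i _ => ?_)
  rw [norm_mul]
  exact mul_le_mul_of_nonneg_left (norm_le_pi_norm y i) (norm_nonneg _)

lemma eig_term_decay {d : ℕ} (Mc : Matrix (Fin d) (Fin d) ℂ) (u : Fin d → ℂ)
    (h : ∀ β y, 1 ≤ ‖β‖ → IsGenEigvec Mc β y → dotProduct u y = 0)
    {β : ℂ} {vv : Fin d → ℂ}
    (hvv : vv ∈ Module.End.maxGenEigenspace (Matrix.toLinAlgEquiv' Mc) β) :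
    ExpDec (fun n => ‖dotProduct u ((Mc ^ n).mulVec vv)‖) := by
  rw [Module.End.mem_maxGenEigenspace] at hvv
  obtain ⟨k, hk⟩ := hvv
  have hk' : ((Mc - β • 1) ^ k).mulVec vv = 0 := by
    have e : ((Matrix.toLinAlgEquiv' Mc : Module.End ℂ (Fin d → ℂ)) - β • 1) ^ k
        = Matrix.toLinAlgEquiv' ((Mc - β • 1) ^ k) := by
      rw [map_pow, map_sub, _root_.map_smul, _root_.map_one]
    rw [e, Matrix.toLinAlgEquiv'_apply] at hk
    exact hk
  rcases lt_or_ge ‖β‖ 1 with hβ | hβ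
  · exact ExpDec.mono (fun n => dot_bound u _)
      (((genEig_decay Mc hβ hk').const_mul (by positivity :
        (0:ℝ) ≤ ∑ i, ‖u i‖)) |>.mono (fun n => le_refl _)) |>.mono (fun n => le_refl _)
  · have hz : ∀ n, dotProduct u ((Mc ^ n).mulVec vv) = 0 := by
      intro n
      by_cases hy0 : (Mc ^ n).mulVec vv = 0
      · rw [hy0, dotProduct_zero]
      · have hcomm : Commute ((Mc - β • 1) ^ k) (Mc ^ n) :=
          (((Commute.refl Mc).sub_left ((Commute.one_left Mc).smul_left β)).pow_pow k n)
        have h1 : ((Mc - β • 1) ^ k).mulVec ((Mc ^ n).mulVec vv) = 0 := by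
          rw [Matrix.mulVec_mulVec, hcomm.eq, ← Matrix.mulVec_mulVec, hk',
            Matrix.mulVec_zero]
        have hky : ((Mc - β • 1) ^ (k+1)).mulVec ((Mc ^ n).mulVec vv) = 0 := by
          rw [pow_succ', ← Matrix.mulVec_mulVec, h1, Matrix.mulVec_zero]
        exact h β _ hβ ⟨hy0, k+1, Nat.succ_le_succ (Nat.zero_le k), hky⟩
    exact ExpDec.mono (fun n => le_of_eq (by rw [hz n, norm_zero])) expDec_zero

theorem stmt_5 {d : ℕ} (α : ℝ) (M : Matrix (Fin d) (Fin d) ℝ) (w : Fin d → ℝ)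
    (h : ∀ (β : ℂ) (v : Fin d → ℂ), 1 ≤ ‖β‖ →
      IsGenEigvec (M.map (fun x : ℝ => (x : ℂ))) β v →
      (∑ i, ((α : ℂ) - (w i : ℂ)) * v i) = 0) :
    ∃ C > 0, ∃ ρ : ℝ, 0 < ρ ∧ ρ < 1 ∧
      ∀ n : ℕ, ‖Matrix.vecMul (fun i => α - w i) (M ^ n)‖ ≤ C * ρ ^ n := by
  classical
  set Mc : Matrix (Fin d) (Fin d) ℂ := M.map (fun x : ℝ => (x : ℂ)) with hMcdef
  set u : Fin d → ℂ := fun i => (α : ℂ) - (w i : ℂ) with hudef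
  have h' : ∀ β y, 1 ≤ ‖β‖ → IsGenEigvec Mc β y → dotProduct u y = 0 := by
    intro β y hβ hgen
    simpa [dotProduct, hudef] using h β y hβ hgen
  have hpow : ∀ n : ℕ, Mc ^ n = (M ^ n).map (fun x : ℝ => (x : ℂ)) := by
    intro n
    have h1 : Mc = Complex.ofRealHom.mapMatrix M := by rw [hMcdef]; rfl
    rw [h1, ← map_pow]
    rfl
  have hvec : ∀ x : Fin d → ℂ, ExpDec (fun n => ‖dotProduct u ((Mc ^ n).mulVec x)‖) := by
    intro x
    have htop := Module.End.iSup_maxGenEigenspace_eq_top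
      (Matrix.toLinAlgEquiv' Mc : Module.End ℂ (Fin d → ℂ))
    have hx : x ∈ ⨆ β, Module.End.maxGenEigenspace (Matrix.toLinAlgEquiv' Mc) β := by
      rw [htop]; trivial
    rw [Submodule.mem_iSup_iff_exists_finsupp] at hx
    obtain ⟨c, hcmem, hcsum⟩ := hx
    have hxe : x = ∑ β ∈ c.support, c β := by rw [← hcsum]; rfl
    have hbound : ∀ n, ‖dotProduct u ((Mc ^ n).mulVec x)‖
        ≤ ∑ β ∈ c.support, ‖dotProduct u ((Mc ^ n).mulVec (c β))‖ := by
      intro n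
      rw [hxe, mulVec_sum', dotProduct_sum']
      exact norm_sum_le _ _
    exact ExpDec.mono hbound (ExpDec.sum _ _ fun β _ => eig_term_decay Mc u h' (hcmem β))
  have hcoord : ∀ (n : ℕ) (j : Fin d), ((Matrix.vecMul (fun i => α - w i) (M ^ n)) j : ℂ)
      = dotProduct u ((Mc ^ n).mulVec (Pi.single j 1)) := by
    intro n j
    rw [hpow n, Matrix.mulVec_single_one]
    simp only [Matrix.vecMul, dotProduct, Matrix.transpose_apply, Matrix.map_apply, hudef]
    push_cast
    rfl
  have hnorm : ∀ n, ‖Matrix.vecMul (fun i => α - w i) (M ^ n)‖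
      ≤ ∑ j : Fin d, ‖dotProduct u ((Mc ^ n).mulVec (Pi.single j 1))‖ := by
    intro n
    refine (pi_norm_le_iff_of_nonneg (by positivity)).2 fun j => ?_
    calc ‖(Matrix.vecMul (fun i => α - w i) (M ^ n)) j‖
        = ‖((Matrix.vecMul (fun i => α - w i) (M ^ n)) j : ℂ)‖ := (Complex.norm_real _).symm
      _ = ‖dotProduct u ((Mc ^ n).mulVec (Pi.single j 1))‖ := by rw [hcoord n j]
      _ ≤ _ := Finset.single_le_sum (f := fun j =>
          ‖dotProduct u ((Mc ^ n).mulVec (Pi.single j 1))‖)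
          (fun j _ => norm_nonneg _) (Finset.mem_univ j)
  exact ExpDec.mono hnorm (ExpDec.sum _ _ fun j _ => hvec (Pi.single j 1))
end

section
/- Let M be a d×d matrix with integer coefficients. If γ is an eigenvalue of M such that every generalized eigenvector of M associated to γ has coordinate sum zero, then for every algebraic conjugate β of γ that is also an eigenvalue of M, every generalized eigenvector of M associated to β has coordinate sum zero. -/
set_option maxHeartbeats 1000000
set_option synthInstance.maxHeartbeats 400000

open IntermediateField in
private lemma aux_dummy : True := trivial

/-- If every vector in the kernel of `A` is annihilated by the functional `c ⬝ᵥ ·`,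
then `c` is in the row space of `A`. -/
private lemma exists_vecMul_eq {F : Type*} [Field F] {d : ℕ} (A : Matrix (Fin d) (Fin d) F)
    (c : Fin d → F) (hc : ∀ u : Fin d → F, A.mulVec u = 0 → dotProduct c u = 0) :
    ∃ w : Fin d → F, Matrix.vecMul w A = c := by
  classical
  set f : (Fin d → F) →ₗ[F] (Fin d → F) := A.mulVecLin with hf
  set cf : (Fin d → F) →ₗ[F] F := ∑ i, c i • LinearMap.proj i with hcf
  have hcf_apply : ∀ u, cf u = dotProduct c u := by
    intro u
    simp [hcf, LinearMap.sum_apply, dotProduct, smul_eq_mul]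
  have hmem : cf ∈ (LinearMap.ker f).dualAnnihilator := by
    rw [Submodule.mem_dualAnnihilator]
    intro u hu
    rw [hcf_apply]
    exact hc u (by simpa [hf] using hu)
  rw [← LinearMap.range_dualMap_eq_dualAnnihilator_ker] at hmem
  obtain ⟨ψ, hψ⟩ := hmem
  refine ⟨fun i => ψ (Pi.single i 1), ?_⟩
  funext j
  have h1 : ψ (f (Pi.single j 1)) = cf (Pi.single j 1) := by
    rw [← hψ]; rfl
  have h2 : cf (Pi.single j 1) = c j := by
    rw [hcf_apply]
    simp [dotProduct, Pi.single_apply, mul_ite, mul_one, mul_zero]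
  have h3 : f (Pi.single j 1) = fun i => A i j := by
    simp [hf, Matrix.mulVecLin_apply, Matrix.mulVec_single]
    rfl
  have h4 : ψ (fun i => A i j) = ∑ i, A i j * ψ (Pi.single i 1) := by
    have hdecomp : (fun i => A i j) = ∑ i, (A i j) • (Pi.single i (1 : F) : Fin d → F) := by
      funext l
      simp [Finset.sum_apply, Pi.single_apply, smul_eq_mul, mul_ite, mul_one, mul_zero]
    rw [hdecomp, map_sum]
    simp [smul_eq_mul]
  have : ∑ i, A i j * ψ (Pi.single i 1) = c j := by
    rw [← h4, ← h3, h1, h2]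
  rw [← this]
  simp [Matrix.vecMul, dotProduct, mul_comm]

/-- Solvability of a linear system with coefficients in a subfield of `ℂ` descends
from `ℂ` to the subfield. -/
private lemma descend {d : ℕ} (K : IntermediateField ℚ ℂ) (A : Matrix (Fin d) (Fin d) K)
    (c : Fin d → K)
    (hw : ∃ w : Fin d → ℂ, Matrix.vecMul w (A.map (algebraMap K ℂ)) =
      fun i => algebraMap K ℂ (c i)) :
    ∃ w' : Fin d → K, Matrix.vecMul w' A = c := by
  classical
  obtain ⟨w, hw⟩ := hw
  set p : Submodule K ℂ := LinearMap.range (Algebra.linearMap K ℂ) with hp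
  obtain ⟨q, hq⟩ := Submodule.exists_isCompl p
  have hinj : Function.Injective (Algebra.linearMap K ℂ) := by
    intro a b hab
    exact (algebraMap K ℂ).injective hab
  set e : K ≃ₗ[K] p := LinearEquiv.ofInjective (Algebra.linearMap K ℂ) hinj with he
  set π : ℂ →ₗ[K] K := e.symm.toLinearMap ∘ₗ p.linearProjOfIsCompl q hq with hπdef
  have hπ : ∀ x : K, π (algebraMap K ℂ x) = x := by
    intro x
    have hco : ((e x : p) : ℂ) = algebraMap K ℂ x := rfl
    have h1 : (p.linearProjOfIsCompl q hq) (algebraMap K ℂ x) = e x := by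
      rw [← hco]
      exact Submodule.linearProjOfIsCompl_apply_left hq (e x)
    show e.symm ((p.linearProjOfIsCompl q hq) (algebraMap K ℂ x)) = x
    rw [h1, LinearEquiv.symm_apply_apply]
  refine ⟨fun i => π (w i), ?_⟩
  funext j
  have hrow : Matrix.vecMul w (A.map (algebraMap K ℂ)) j = algebraMap K ℂ (c j) := by
    rw [hw]
  have hsum : ∑ i, w i * algebraMap K ℂ (A i j) = algebraMap K ℂ (c j) := by
    simpa [Matrix.vecMul, dotProduct, Matrix.map_apply] using hrow
  have hπsum : π (∑ i, w i * algebraMap K ℂ (A i j)) = c j := by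
    rw [hsum, hπ]
  have heach : ∀ i, π (w i * algebraMap K ℂ (A i j)) = π (w i) * A i j := by
    intro i
    have : w i * algebraMap K ℂ (A i j) = (A i j) • (w i) := by
      rw [Algebra.smul_def, mul_comm]
    rw [this, map_smul, smul_eq_mul, mul_comm]
  rw [map_sum] at hπsum
  simp only [heach] at hπsum
  simpa [Matrix.vecMul, dotProduct] using hπsum

/-- Mapping the matrix `(M - x·1)^k` along a ring hom. -/
private lemma map_pow_mat {d : ℕ} {R S : Type*} [CommRing R] [CommRing S] (f : R →+* S)
    (M : Matrix (Fin d) (Fin d) ℤ) (x : R) (k : ℕ) :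
    (((M.map (fun a : ℤ => (a : R))) - x • 1) ^ k).map f
      = ((M.map (fun a : ℤ => (a : S))) - f x • 1) ^ k := by
  have key : ((M.map (fun a : ℤ => (a : R))) - x • 1).map f
      = (M.map (fun a : ℤ => (a : S))) - f x • 1 := by
    ext i j
    simp [Matrix.map_apply, Matrix.sub_apply, Matrix.smul_apply, Matrix.one_apply,
      mul_ite, mul_one, mul_zero, apply_ite f, map_intCast, smul_eq_mul]
  have : (((M.map (fun a : ℤ => (a : R))) - x • 1) ^ k).map f
      = f.mapMatrix (((M.map (fun a : ℤ => (a : R))) - x • 1) ^ k) := rfl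
  rw [this, map_pow, RingHom.mapMatrix_apply, key]

open IntermediateField in
theorem stmt_6 {d : ℕ} (M : Matrix (Fin d) (Fin d) ℤ) (γ β : ℂ)
    (hγeig : ∃ v : Fin d → ℂ, v ≠ 0 ∧ (M.map (fun x : ℤ => (x : ℂ))).mulVec v = γ • v)
    (halg : IsAlgebraic ℚ γ)
    (hconj : minpoly ℚ β = minpoly ℚ γ)
    (h : ∀ v : Fin d → ℂ, IsGenEigvec (M.map (fun x : ℤ => (x : ℂ))) γ v → ∑ i, v i = 0) :
    ∀ v : Fin d → ℂ, IsGenEigvec (M.map (fun x : ℤ => (x : ℂ))) β v → ∑ i, v i = 0 := by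
  classical
  intro v hv
  obtain ⟨hv0, k, hk1, hvk⟩ := hv
  have hγint : IsIntegral ℚ γ := halg.isIntegral
  have hβint : IsIntegral ℚ β := by
    rw [← minpoly.ne_zero_iff, hconj]
    exact minpoly.ne_zero hγint
  set γ' : ℚ⟮γ⟯ := IntermediateField.AdjoinSimple.gen ℚ γ with hγ'
  set β' : ℚ⟮β⟯ := IntermediateField.AdjoinSimple.gen ℚ β with hβ'
  -- Step 1: over ℂ, get a row vector w with w ⬝ (M - γ)^k = 1
  have hker : ∀ u : Fin d → ℂ,
      (((M.map (fun x : ℤ => (x : ℂ))) - γ • 1) ^ k).mulVec u = 0 →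
        dotProduct (fun _ => (1 : ℂ)) u = 0 := by
    intro u hu
    have hsum : ∑ i, u i = 0 := by
      by_cases h0 : u = 0
      · simp [h0]
      · exact h u ⟨h0, k, hk1, hu⟩
    simpa [dotProduct] using hsum
  obtain ⟨w, hw⟩ := exists_vecMul_eq _ _ hker
  -- Step 2: descend to ℚ⟮γ⟯
  set C : Matrix (Fin d) (Fin d) ℚ⟮γ⟯ :=
    ((M.map (fun a : ℤ => (a : ℚ⟮γ⟯))) - γ' • 1) ^ k with hC
  have hCmap : C.map (algebraMap ℚ⟮γ⟯ ℂ) = ((M.map fun x : ℤ => (x : ℂ)) - γ • 1) ^ k := by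
    rw [hC, map_pow_mat (algebraMap ℚ⟮γ⟯ ℂ) M γ' k,
      IntermediateField.AdjoinSimple.algebraMap_gen]
  obtain ⟨wL, hwL⟩ := descend ℚ⟮γ⟯ C (fun _ => 1)
    ⟨w, by rw [hCmap]; funext i; rw [hw]; simp⟩
  -- Step 3: transport via the isomorphism ℚ⟮γ⟯ ≃ ℚ⟮β⟯
  have hmin : minpoly ℚ (IntermediateField.adjoin.powerBasis hγint).gen
      = minpoly ℚ (IntermediateField.adjoin.powerBasis hβint).gen := by
    rw [IntermediateField.adjoin.powerBasis_gen, IntermediateField.adjoin.powerBasis_gen]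
    exact (IntermediateField.minpoly_gen (F := ℚ) (α := γ)).trans (hconj.symm.trans (IntermediateField.minpoly_gen (F := ℚ) (α := β)).symm)
  set σ : ℚ⟮γ⟯ ≃ₐ[ℚ] ℚ⟮β⟯ :=
    (IntermediateField.adjoin.powerBasis hγint).equivOfMinpoly
      (IntermediateField.adjoin.powerBasis hβint) hmin with hσ
  have hσγ : σ γ' = β' := by
    have := PowerBasis.equivOfMinpoly_gen (IntermediateField.adjoin.powerBasis hγint)
      (IntermediateField.adjoin.powerBasis hβint) hmin
    rwa [IntermediateField.adjoin.powerBasis_gen, IntermediateField.adjoin.powerBasis_gen] at this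
  set f : ℚ⟮γ⟯ →+* ℚ⟮β⟯ := (σ : ℚ⟮γ⟯ ≃+* ℚ⟮β⟯).toRingHom with hfd
  set B : Matrix (Fin d) (Fin d) ℚ⟮β⟯ :=
    ((M.map (fun a : ℤ => (a : ℚ⟮β⟯))) - β' • 1) ^ k with hB
  have hfγ : f γ' = β' := hσγ
  have hCB : C.map f = B := by
    rw [hC, map_pow_mat f M γ' k, hfγ, hB]
  have hwK : Matrix.vecMul (⇑f ∘ wL) B = fun _ => (1 : ℚ⟮β⟯) := by
    funext j
    rw [← hCB, ← RingHom.map_vecMul f C wL j, hwL]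
    simp
  -- Step 4: back up to ℂ
  set g : ℚ⟮β⟯ →+* ℂ := algebraMap ℚ⟮β⟯ ℂ with hgd
  have hBmap : B.map g = ((M.map fun x : ℤ => (x : ℂ)) - β • 1) ^ k := by
    rw [hB, map_pow_mat g M β' k, hgd, IntermediateField.AdjoinSimple.algebraMap_gen]
  set wβ : Fin d → ℂ := fun i => g (f (wL i)) with hwβ
  have hfin : Matrix.vecMul wβ (((M.map fun x : ℤ => (x : ℂ)) - β • 1) ^ k)
      = fun _ => (1 : ℂ) := by
    funext j
    rw [← hBmap]
    have : wβ = ⇑g ∘ (⇑f ∘ wL) := rfl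
    rw [this, ← RingHom.map_vecMul g B (⇑f ∘ wL) j, hwK]
    simp
  -- conclude
  have : ∑ i, v i = dotProduct (fun _ => (1 : ℂ)) v := by
    simp [dotProduct]
  rw [this, ← hfin, ← Matrix.dotProduct_mulVec, hvk]
  simp [dotProduct]
end

section
/- Let σ be a substitution on a finite alphabet A with incidence matrix M, and let u ∈ A^ℤ be a fixed point of σ (i.e., σ(u) = u with the natural indexing). Then for every a ∈ A, W_a(u) = ⋃ { M·W_b(u) + ab(p) : b ∈ A, p,s ∈ A* with σ(b) = p a s }. -/
/-- Abelianization of `u_{[0,n)}` for a bi-infinite word `u : ℤ → A`, with the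
convention `ab(u_{[0,n)}) = -ab(u_{[-n,0)})` for `n < 0`. -/
def abPrefix {A : Type*} [DecidableEq A] (u : ℤ → A) (n : ℤ) : A → ℤ := fun a =>
  if 0 ≤ n then (((Finset.range n.toNat).filter (fun i : ℕ => u (i : ℤ) = a)).card : ℤ)
  else -((((Finset.range (-n).toNat).filter (fun i : ℕ => u (-((i : ℤ) + 1)) = a)).card : ℤ))

/-- `w` is the image of the bi-infinite word `u` under the substitution `σ`,
aligned so that `σ(u₀)` starts at position `0`. -/
def IsSubstImage {A : Type*} (σ : A → List A) (u w : ℤ → A) : Prop :=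
  ∃ L : ℤ → ℤ, L 0 = 0 ∧ (∀ k : ℤ, L (k + 1) = L k + (σ (u k)).length) ∧
    ∀ (k : ℤ) (j : ℕ) (hj : j < (σ (u k)).length), w (L k + j) = (σ (u k)).get ⟨j, hj⟩

section Lemmas
variable {A : Type*} [DecidableEq A]

lemma card_filter_range_succ (P : ℕ → Prop) [DecidablePred P] (m : ℕ) :
    ((Finset.range (m+1)).filter P).card
      = ((Finset.range m).filter P).card + if P m then 1 else 0 := by
  rw [Finset.range_add_one, Finset.filter_insert]
  split
  · rw [Finset.card_insert_of_notMem (by simp)]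
  · simp

lemma abPrefix_zero (u : ℤ → A) : abPrefix u 0 = 0 := by
  funext c; simp [abPrefix]

lemma abPrefix_succ (u : ℤ → A) (n : ℤ) (c : A) :
    abPrefix u (n+1) c = abPrefix u n c + (if u n = c then 1 else 0) := by
  rcases le_or_gt 0 n with h | h
  · have h1 : (0:ℤ) ≤ n + 1 := by omega
    have h2 : (n+1).toNat = n.toNat + 1 := by omega
    simp only [abPrefix, if_pos h, if_pos h1, h2]
    rw [card_filter_range_succ]
    have : ((n.toNat : ℤ)) = n := Int.toNat_of_nonneg h
    rw [this]
    push_cast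
    split <;> ring
  · have h0 : ¬ (0:ℤ) ≤ n := by omega
    set m := (-(n+1)).toNat with hm
    have hmn : -((m:ℤ) + 1) = n := by omega
    have hmn2 : (-n).toNat = m + 1 := by omega
    have key : abPrefix u n c = -((((Finset.range m).filter
        (fun i : ℕ => u (-((i : ℤ) + 1)) = c)).card : ℤ)) - (if u n = c then 1 else 0) := by
      simp only [abPrefix, if_neg h0, hmn2]
      rw [card_filter_range_succ]
      rw [hmn]
      push_cast
      split <;> ring
    rw [key]
    rcases eq_or_lt_of_le (show n + 1 ≤ 0 by omega) with h1 | h1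
    · rw [h1, abPrefix_zero]
      have hm0 : m = 0 := by omega
      simp [hm0]
    · have : ¬ (0:ℤ) ≤ n + 1 := by omega
      simp only [abPrefix, if_neg this]
      have : (-(n+1)).toNat = m := rfl
      rw [this]
      ring

lemma abPrefix_succ' [Fintype A] (u : ℤ → A) (n : ℤ) :
    abPrefix u (n+1) = abPrefix u n + Pi.single (u n) 1 := by
  funext c
  rw [Pi.add_apply, abPrefix_succ, Pi.single_apply]
  congr 1
  simp [eq_comm]

lemma sum_abPrefix [Fintype A] (u : ℤ → A) (n : ℤ) : ∑ c, abPrefix u n c = n := by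
  induction n using Int.induction_on with
  | zero => simp [abPrefix_zero]
  | succ k ih =>
    simp only [abPrefix_succ, Finset.sum_add_distrib, ih]
    simp
  | pred k ih =>
    have h := abPrefix_succ u (-(k:ℤ) - 1)
    have e : (-(k:ℤ) - 1) + 1 = -k := by ring
    rw [e] at h
    have h2 : ∀ c, abPrefix u (-(k:ℤ)-1) c
        = abPrefix u (-(k:ℤ)) c - (if u (-(k:ℤ)-1) = c then 1 else 0) := by
      intro c; have := h c; omega
    rw [Finset.sum_congr rfl (fun c _ => h2 c), Finset.sum_sub_distrib, ih]
    simp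
end Lemmas

section More
variable {A : Type*} [DecidableEq A] [Fintype A]

lemma mem_W_iff (u : ℤ → A) (a : A) (x : A → ℤ) :
    (x ∈ Set.range (abPrefix u) ∧ x + Pi.single a 1 ∈ Set.range (abPrefix u)) ↔
      ∃ n : ℤ, u n = a ∧ x = abPrefix u n := by
  constructor
  · rintro ⟨⟨n, hn⟩, ⟨m, hm⟩⟩
    have hsx : ∑ c, x c = n := by rw [← hn]; exact sum_abPrefix u n
    have hsm : m = n + 1 := by
      have := sum_abPrefix u m
      rw [hm] at this
      simp only [Pi.add_apply, Finset.sum_add_distrib, hsx] at this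
      have h1 : ∑ c, Pi.single a (1:ℤ) c = 1 := by simp
      omega
    have h2 : abPrefix u (n+1) = x + Pi.single a 1 := by rw [← hsm, hm]
    rw [abPrefix_succ' u n, hn] at h2
    have h3 := add_left_cancel h2
    have h4 : u n = a := by
      by_contra hne
      have h5 := congrFun h3 (u n)
      rw [Pi.single_eq_same] at h5
      simp [Pi.single_apply, hne] at h5
    exact ⟨n, h4, hn.symm⟩
  · rintro ⟨n, ha, rfl⟩
    refine ⟨⟨n, rfl⟩, ⟨n + 1, ?_⟩⟩
    rw [abPrefix_succ' u n, ha]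

lemma abPrefix_add_take (u : ℤ → A) (m : ℤ) (w : List A)
    (hw : ∀ (i : ℕ) (hi : i < w.length), u (m + i) = w.get ⟨i, hi⟩) :
    ∀ (j : ℕ), j ≤ w.length → ∀ c,
      abPrefix u (m + j) c = abPrefix u m c + ((w.take j).count c : ℤ) := by
  intro j
  induction j with
  | zero => intro _ c; simp
  | succ j ih =>
    intro hj c
    have hj' : j < w.length := by omega
    have e : (m + ((j:ℕ)+1:ℕ) : ℤ) = (m + j) + 1 := by push_cast; ring
    rw [e, abPrefix_succ, ih (le_of_lt hj') c]
    have ht : w.take (j+1) = w.take j ++ [w.get ⟨j, hj'⟩] := by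
      rw [← List.take_concat_get hj']
      simp
    rw [ht, List.count_append, hw j hj']
    rw [List.count_singleton']
    push_cast
    split <;> ring
end More

section Level
variable {A : Type*} [DecidableEq A] [Fintype A]

lemma abPrefix_level (σ : A → List A) (u : ℤ → A) (L : ℤ → ℤ) (hL0 : L 0 = 0)
    (hL1 : ∀ k : ℤ, L (k + 1) = L k + (σ (u k)).length)
    (hLw : ∀ (k : ℤ) (j : ℕ) (hj : j < (σ (u k)).length),
      u (L k + j) = (σ (u k)).get ⟨j, hj⟩) :
    ∀ (k : ℤ) (c : A), abPrefix u (L k) c = ∑ b', ((σ b').count c : ℤ) * abPrefix u k b' := by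
  have step : ∀ (k : ℤ) (c : A),
      abPrefix u (L (k+1)) c = abPrefix u (L k) c + (((σ (u k)).count c : ℤ)) := by
    intro k c
    rw [hL1 k]
    have h := abPrefix_add_take u (L k) (σ (u k)) (hLw k) (σ (u k)).length le_rfl c
    rw [List.take_length] at h
    exact h
  have stepF : ∀ (k : ℤ) (c : A),
      (∑ b', ((σ b').count c : ℤ) * abPrefix u (k+1) b')
        = (∑ b', ((σ b').count c : ℤ) * abPrefix u k b') + ((σ (u k)).count c : ℤ) := by
    intro k c
    rw [abPrefix_succ' u k]
    simp only [Pi.add_apply, mul_add, Finset.sum_add_distrib]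
    congr 1
    simp [Pi.single_apply, mul_ite, Finset.sum_ite_eq']
  intro k
  induction k using Int.induction_on with
  | zero => intro c; rw [hL0]; simp [abPrefix_zero]
  | succ k ih => intro c; rw [step k c, stepF k c, ih c]
  | pred k ih =>
    intro c
    have e : (-(k:ℤ) - 1) + 1 = -(k:ℤ) := by ring
    have s1 := step (-(k:ℤ)-1) c
    have s2 := stepF (-(k:ℤ)-1) c
    rw [e] at s1 s2
    have := ih c
    omega

lemma exists_level (L : ℤ → ℤ) (hL0 : L 0 = 0) (hL1 : ∀ k : ℤ, L k + 1 ≤ L (k+1)) (n : ℤ) :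
    ∃ k : ℤ, L k ≤ n ∧ n < L (k + 1) := by
  classical
  have mono : ∀ (d : ℕ) (k : ℤ), L k + d ≤ L (k + d) := by
    intro d
    induction d with
    | zero => simp
    | succ d ih =>
      intro k
      have h1 := hL1 (k + d)
      have h2 := ih k
      have e : (k + ((d:ℕ)+1:ℕ) : ℤ) = (k + d) + 1 := by push_cast; ring
      rw [e]
      push_cast
      omega
  have hlow : L (-(n.natAbs : ℤ) - 1) ≤ n := by
    have h := mono (n.natAbs + 1) (-(n.natAbs:ℤ) - 1)
    have e : ((-(n.natAbs:ℤ) - 1) + ((n.natAbs + 1 : ℕ) : ℤ)) = 0 := by push_cast; ring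
    rw [e, hL0] at h
    omega
  have hP : ∃ j : ℕ, n < L (-(n.natAbs:ℤ) - 1 + j + 1) := by
    refine ⟨2 * n.natAbs + 1, ?_⟩
    have h := mono (n.natAbs + 1) 0
    rw [hL0] at h
    have e : (-(n.natAbs:ℤ) - 1 + ((2 * n.natAbs + 1 : ℕ):ℤ) + 1) = (0 + ((n.natAbs + 1 : ℕ):ℤ)) := by
      push_cast; ring
    rw [e]
    omega
  let j0 := Nat.find hP
  refine ⟨-(n.natAbs:ℤ) - 1 + j0, ?_, Nat.find_spec hP⟩
  rcases Nat.eq_zero_or_pos j0 with h0 | h0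
  · rw [show (-(n.natAbs:ℤ) - 1 + j0) = -(n.natAbs:ℤ) - 1 by rw [h0]; simp]
    exact hlow
  · have hmin := Nat.find_min hP (m := j0 - 1) (by omega)
    have e : (-(n.natAbs:ℤ) - 1 + ((j0 - 1 : ℕ):ℤ) + 1) = -(n.natAbs:ℤ) - 1 + j0 := by
      have : ((j0 - 1 : ℕ) : ℤ) = (j0 : ℤ) - 1 := by omega
      rw [this]; ring
    rw [e] at hmin
    omega
end Level

theorem stmt_10 {A : Type*} [Fintype A] [DecidableEq A] (σ : A → List A)
    (hσ : ∀ a, σ a ≠ []) (u : ℤ → A) (hfix : IsSubstImage σ u u) (a : A) :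
    {x ∈ Set.range (abPrefix u) | x + Pi.single a 1 ∈ Set.range (abPrefix u)} =
      ⋃ (b : A) (p : List A) (s : List A) (_ : σ b = p ++ a :: s),
        (fun x : A → ℤ => fun c => (∑ b', ((σ b').count c : ℤ) * x b') + (p.count c : ℤ)) ''
          {x ∈ Set.range (abPrefix u) | x + Pi.single b 1 ∈ Set.range (abPrefix u)} := by
  obtain ⟨L, hL0, hL1, hLw⟩ := hfix
  have hlen : ∀ k : ℤ, 1 ≤ (σ (u k)).length :=
    fun k => List.length_pos_iff.mpr (hσ (u k))
  have hL1' : ∀ k : ℤ, L k + 1 ≤ L (k+1) := by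
    intro k; rw [hL1 k]; have := hlen k; omega
  have hlev := abPrefix_level σ u L hL0 hL1 hLw
  ext x
  simp only [Set.mem_sep_iff, Set.mem_iUnion, Set.mem_image]
  constructor
  · intro hx
    obtain ⟨n, hna, rfl⟩ := (mem_W_iff u a x).mp hx
    obtain ⟨k, hk1, hk2⟩ := exists_level L hL0 hL1' n
    have hL1k := hL1 k
    have hjlt : (n - L k).toNat < (σ (u k)).length := by omega
    set j := (n - L k).toNat with hj
    have hn : n = L k + j := by omega
    have hga : (σ (u k)).get ⟨j, hjlt⟩ = a := by
      rw [← hna, hn]; exact (hLw k j hjlt).symm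
    refine ⟨u k, (σ (u k)).take j, (σ (u k)).drop (j+1), ?_, abPrefix u k, ?_, ?_⟩
    · conv_lhs => rw [← List.take_append_drop j (σ (u k))]
      congr 1
      rw [List.drop_eq_getElem_cons hjlt]; simp only [List.get_eq_getElem] at hga; rw [hga]
    · exact (mem_W_iff u (u k) (abPrefix u k)).mpr ⟨k, rfl, rfl⟩
    · funext c
      have h := abPrefix_add_take u (L k) (σ (u k)) (hLw k) j (le_of_lt hjlt) c
      rw [hlev k c] at h
      rw [hn]
      exact h.symm
  · rintro ⟨b, p, s, hbps, x', hx', rfl⟩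
    obtain ⟨k, hkb, rfl⟩ := (mem_W_iff u b x').mp hx'
    have hσk : σ (u k) = p ++ a :: s := by rw [hkb, hbps]
    have hjlt : p.length < (σ (u k)).length := by rw [hσk]; simp
    have hun : u (L k + p.length) = a := by
      rw [hLw k p.length hjlt]
      simp only [List.get_eq_getElem, hσk]
      rw [List.getElem_append_right (le_refl p.length)]
      simp
    apply (mem_W_iff u a _).mpr ⟨L k + p.length, hun, ?_⟩
    funext c
    have h := abPrefix_add_take u (L k) (σ (u k)) (hLw k) p.length (le_of_lt hjlt) c
    rw [hlev k c] at h
    have htake : (σ (u k)).take p.length = p := by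
      rw [hσk, List.take_left]
    rw [htake] at h
    exact h.symm
end

section
/- Let Λ ⊂ ℝ^m be a lattice (a discrete cocompact subgroup), let P ⊂ ℝ^m be a hyperplane, let D > 0, and set T_D = { x ∈ Λ : dist(x, P) ≤ D }. Let V : ℝ^m → ℝ^d be a surjective linear map with d = m − 1 whose kernel is a line L with L ⊕ P = ℝ^m and L ∩ (Λ ⊗ ℚ span considered rationally) totally irrational in the sense that V is injective on Λ. Then V(T_D) is ε-separated for some ε > 0: any two distinct points of V(T_D) are at distance > ε. -/
open Metric

private lemma infDist_sub_le_aux {E : Type*} [NormedAddCommGroup E] [NormedSpace ℝ E]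
    (P : Submodule ℝ E) (a c : E) :
    Metric.infDist (a - c) (P : Set E) ≤
      Metric.infDist a (P : Set E) + Metric.infDist c (P : Set E) := by
  have hne : (P : Set E).Nonempty := ⟨0, P.zero_mem⟩
  refine le_of_forall_pos_le_add fun δ hδ => ?_
  have h1 : Metric.infDist a (P : Set E) < Metric.infDist a (P : Set E) + δ / 2 := by
    linarith
  have h2 : Metric.infDist c (P : Set E) < Metric.infDist c (P : Set E) + δ / 2 := by
    linarith
  obtain ⟨p, hp, hpd⟩ := (Metric.infDist_lt_iff hne).mp h1
  obtain ⟨q, hq, hqd⟩ := (Metric.infDist_lt_iff hne).mp h2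
  calc Metric.infDist (a - c) (P : Set E) ≤ dist (a - c) (p - q) :=
        Metric.infDist_le_dist_of_mem (P.sub_mem hp hq)
    _ ≤ dist a p + dist c q := dist_sub_sub_le a c p q
    _ ≤ Metric.infDist a (P : Set E) + Metric.infDist c (P : Set E) + δ := by linarith

set_option maxHeartbeats 1000000 in
theorem stmt_12 {m : ℕ} (b : Module.Basis (Fin m) ℝ (Fin m → ℝ))
    (P : Submodule ℝ (Fin m → ℝ)) (hP : Module.finrank ℝ P = m - 1)
    (V : (Fin m → ℝ) →ₗ[ℝ] (Fin (m - 1) → ℝ)) (hVsurj : Function.Surjective V)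
    (hsup : LinearMap.ker V ⊔ P = ⊤) (hinf : LinearMap.ker V ⊓ P = ⊥)
    (hinjΛ : Set.InjOn V ((Submodule.span ℤ (Set.range b) : Submodule ℤ (Fin m → ℝ)) : Set (Fin m → ℝ)))
    (D : ℝ) (hD : 0 < D) :
    ∃ ε > 0,
      ∀ x ∈ V '' {z : Fin m → ℝ | z ∈ Submodule.span ℤ (Set.range b) ∧
            Metric.infDist z (P : Set (Fin m → ℝ)) ≤ D},
        ∀ y ∈ V '' {z : Fin m → ℝ | z ∈ Submodule.span ℤ (Set.range b) ∧
            Metric.infDist z (P : Set (Fin m → ℝ)) ≤ D},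
          x ≠ y → ε < dist x y := by
  classical
  set Λ : Submodule ℤ (Fin m → ℝ) := Submodule.span ℤ (Set.range b) with hΛdef
  -- V restricted to P is a linear equivalence
  set f : P →ₗ[ℝ] (Fin (m - 1) → ℝ) := V.domRestrict P with hfdef
  have hfinj : Function.Injective f := by
    intro p q hpq
    have hmem : ((p : Fin m → ℝ) - q) ∈ LinearMap.ker V ⊓ P := by
      have hVpq : V (p : Fin m → ℝ) = V (q : Fin m → ℝ) := hpq
      exact Submodule.mem_inf.mpr ⟨LinearMap.mem_ker.mpr (by rw [map_sub, hVpq, sub_self]),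
        P.sub_mem p.2 q.2⟩
    rw [hinf] at hmem
    have : (p : Fin m → ℝ) = q := by
      have := Submodule.mem_bot (R := ℝ) |>.mp hmem
      exact sub_eq_zero.mp this
    exact Subtype.ext this
  have hfsurj : Function.Surjective f := by
    intro w
    obtain ⟨x, hx⟩ := hVsurj w
    have hxmem : x ∈ LinearMap.ker V ⊔ P := by rw [hsup]; trivial
    obtain ⟨u, hu, p, hp, hupx⟩ := Submodule.mem_sup.mp hxmem
    refine ⟨⟨p, hp⟩, ?_⟩
    have : V x = V u + V p := by rw [← hupx, map_add]
    have hu0 : V u = 0 := hu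
    simp only [hfdef, LinearMap.domRestrict_apply]
    rw [← hx, this, hu0, zero_add]
  set e : P ≃ₗ[ℝ] (Fin (m - 1) → ℝ) := LinearEquiv.ofBijective f ⟨hfinj, hfsurj⟩ with hedef
  -- continuous inverse
  set g : (Fin (m - 1) → ℝ) →L[ℝ] P := LinearMap.toContinuousLinearMap (e.symm : (Fin (m-1) → ℝ) →ₗ[ℝ] P) with hgdef
  set VC : (Fin m → ℝ) →L[ℝ] (Fin (m - 1) → ℝ) := LinearMap.toContinuousLinearMap V with hVCdef
  set C : ℝ := ‖g‖ * (1 + ‖VC‖ * (2 * D + 1)) + (2 * D + 1) with hCdef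
  -- bound on the "slab ∩ small image" set
  have hbound : ∀ z : Fin m → ℝ, Metric.infDist z (P : Set (Fin m → ℝ)) ≤ 2 * D →
      ‖V z‖ ≤ 1 → ‖z‖ ≤ C := by
    intro z hzD hzV
    have hne : (P : Set (Fin m → ℝ)).Nonempty := ⟨0, P.zero_mem⟩
    have hlt : Metric.infDist z (P : Set (Fin m → ℝ)) < 2 * D + 1 := by linarith
    obtain ⟨q, hq, hqd⟩ := (Metric.infDist_lt_iff hne).mp hlt
    have hqd' : ‖z - q‖ ≤ 2 * D + 1 := by
      rw [← dist_eq_norm]; linarith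
    have hVq : ‖V q‖ ≤ 1 + ‖VC‖ * (2 * D + 1) := by
      have : V q = V z - V (z - q) := by rw [map_sub]; ring
      rw [this]
      have h1 : ‖V (z - q)‖ ≤ ‖VC‖ * ‖z - q‖ := VC.le_opNorm (z - q)
      have h2 : ‖VC‖ * ‖z - q‖ ≤ ‖VC‖ * (2 * D + 1) :=
        mul_le_mul_of_nonneg_left hqd' (norm_nonneg _)
      calc ‖V z - V (z - q)‖ ≤ ‖V z‖ + ‖V (z - q)‖ := norm_sub_le _ _
        _ ≤ 1 + ‖VC‖ * (2 * D + 1) := by linarith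
    have hqeq : (⟨q, hq⟩ : P) = g (V q) := by
      have : e ⟨q, hq⟩ = V q := rfl
      rw [hgdef]
      simp only [LinearMap.coe_toContinuousLinearMap']
      rw [← this]
      exact (e.symm_apply_apply _).symm
    have hqn : ‖q‖ ≤ ‖g‖ * (1 + ‖VC‖ * (2 * D + 1)) := by
      have h1 : ‖(⟨q, hq⟩ : P)‖ = ‖q‖ := rfl
      rw [← h1, hqeq]
      calc ‖g (V q)‖ ≤ ‖g‖ * ‖V q‖ := g.le_opNorm _
        _ ≤ ‖g‖ * (1 + ‖VC‖ * (2 * D + 1)) :=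
          mul_le_mul_of_nonneg_left hVq (ContinuousLinearMap.opNorm_nonneg g)
    calc ‖z‖ = ‖q + (z - q)‖ := by ring_nf
      _ ≤ ‖q‖ + ‖z - q‖ := norm_add_le _ _
      _ ≤ C := by rw [hCdef]; linarith
  -- the key finite set
  set K : Set (Fin m → ℝ) := {z | z ∈ Λ ∧ Metric.infDist z (P : Set (Fin m → ℝ)) ≤ 2 * D ∧
      ‖V z‖ ≤ 1} with hKdef
  have hdisc : DiscreteTopology (Λ : Set (Fin m → ℝ)) :=
    inferInstanceAs (DiscreteTopology (Submodule.span ℤ (Set.range b)))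
  have hclosed : IsClosed (Λ : Set (Fin m → ℝ)) := by
    have : DiscreteTopology Λ.toAddSubgroup :=
      inferInstanceAs (DiscreteTopology (Submodule.span ℤ (Set.range b)))
    exact AddSubgroup.isClosed_of_discrete (H := Λ.toAddSubgroup)
  have hKfin : K.Finite := by
    have hfin : (Metric.closedBall (0 : Fin m → ℝ) C ∩ (Λ : Set (Fin m → ℝ))).Finite :=
      Metric.finite_isBounded_inter_isClosed ⟨hdisc⟩ Metric.isBounded_closedBall hclosed
    refine hfin.subset fun z hz => ?_
    obtain ⟨hzΛ, hzD, hzV⟩ := hz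
    exact ⟨by simpa [dist_eq_norm] using hbound z hzD hzV, hzΛ⟩
  -- choose ε₀ separating nonzero elements of K
  obtain ⟨ε₀, hε₀pos, hε₀⟩ : ∃ ε₀ > 0, ∀ z ∈ K, z ≠ 0 → ε₀ < ‖V z‖ := by
    by_cases hne : (K \ {0}).Nonempty
    · obtain ⟨z₀, hz₀, hmin⟩ :=
        Set.exists_min_image (K \ {0}) (fun z => ‖V z‖) hKfin.diff hne
      have hz₀Λ : z₀ ∈ Λ := hz₀.1.1
      have hz₀ne : z₀ ≠ 0 := hz₀.2
      have hpos : 0 < ‖V z₀‖ := by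
        refine norm_pos_iff.mpr fun h => hz₀ne ?_
        exact hinjΛ hz₀Λ (Submodule.zero_mem Λ) (by simpa using h)
      refine ⟨‖V z₀‖ / 2, by linarith, fun z hz h0 => ?_⟩
      have hle : ‖V z₀‖ ≤ ‖V z‖ := hmin z ⟨hz, h0⟩
      linarith
    · exact ⟨1, one_pos, fun z hz h0 => absurd ⟨z, hz, h0⟩ hne⟩
  refine ⟨min ε₀ (1/2), lt_min hε₀pos (by norm_num), ?_⟩
  rintro x ⟨z₁, ⟨hz₁Λ, hz₁D⟩, rfl⟩ y ⟨z₂, ⟨hz₂Λ, hz₂D⟩, rfl⟩ hxy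
  set z : Fin m → ℝ := z₁ - z₂ with hzdef
  have hzΛ : z ∈ Λ := Submodule.sub_mem Λ hz₁Λ hz₂Λ
  have hzD : Metric.infDist z (P : Set (Fin m → ℝ)) ≤ 2 * D := by
    calc Metric.infDist z (P : Set (Fin m → ℝ)) ≤
        Metric.infDist z₁ (P : Set (Fin m → ℝ)) + Metric.infDist z₂ (P : Set (Fin m → ℝ)) :=
          infDist_sub_le_aux P z₁ z₂
      _ ≤ 2 * D := by linarith
  have hzne : z ≠ 0 := by
    intro h
    exact hxy (by rw [sub_eq_zero.mp h])
  have hdxy : dist (V z₁) (V z₂) = ‖V z‖ := by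
    rw [dist_eq_norm, hzdef, map_sub]
  by_cases h1 : ‖V z‖ ≤ 1
  · have hzK : z ∈ K := ⟨hzΛ, hzD, h1⟩
    have := hε₀ z hzK hzne
    rw [hdxy]
    exact lt_of_le_of_lt (min_le_left _ _) this
  · rw [hdxy]
    calc min ε₀ (1/2) ≤ 1/2 := min_le_right _ _
      _ < ‖V z‖ := by linarith [not_le.mp h1]
end

section
/- Let (Ω, S) be a minimal aperiodic subshift over a finite alphabet A, V : ℝ^A → ℝ^d a linear map, and u ∈ Ω such that V·W(u) is bounded, where W(u) is the worm of u. Then the map φ defined on the orbit of u by φ(Sⁿu) = V·ab(u_{[0,n)}) extends to a continuous map φ : Ω → ℝ^d. -/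
open Bornology Filter Topology

section Ab
variable {A : Type*} [DecidableEq A]

noncomputable def icoCount (u : ℤ → A) (n m : ℤ) (a : A) : ℤ :=
  (((Finset.Ico n m).filter (fun i => u i = a)).card : ℤ)

lemma abPrefix_of_nonneg (u : ℤ → A) {n : ℤ} (h : 0 ≤ n) (a : A) :
    abPrefix u n a = icoCount u 0 n a := by
  rw [abPrefix, if_pos h, icoCount]
  congr 1
  apply Finset.card_bij' (fun (i : ℕ) _ => (i : ℤ)) (fun (j : ℤ) _ => j.toNat)
  · intro i hi
    simp only [Finset.mem_filter, Finset.mem_range] at hi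
    simp only [Finset.mem_filter, Finset.mem_Ico]
    exact ⟨⟨Int.ofNat_nonneg i, by omega⟩, hi.2⟩
  · intro j hj
    simp only [Finset.mem_filter, Finset.mem_Ico] at hj
    simp only [Finset.mem_filter, Finset.mem_range]
    constructor
    · omega
    · rw [Int.toNat_of_nonneg hj.1.1]; exact hj.2
  · intro i hi; simp
  · intro j hj
    simp only [Finset.mem_filter, Finset.mem_Ico] at hj
    exact Int.toNat_of_nonneg hj.1.1

lemma abPrefix_of_neg (u : ℤ → A) {n : ℤ} (h : n < 0) (a : A) :
    abPrefix u n a = -icoCount u n 0 a := by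
  rw [abPrefix, if_neg (by omega), icoCount]
  congr 2
  apply Finset.card_bij' (fun (i : ℕ) _ => (-((i:ℤ)+1))) (fun (j : ℤ) _ => (-(j+1)).toNat)
  · intro i hi
    simp only [Finset.mem_filter, Finset.mem_range] at hi
    simp only [Finset.mem_filter, Finset.mem_Ico]
    exact ⟨by omega, hi.2⟩
  · intro j hj
    simp only [Finset.mem_filter, Finset.mem_Ico] at hj
    simp only [Finset.mem_filter, Finset.mem_range]
    constructor
    · omega
    · have : (-(((-(j+1)).toNat : ℤ)+1)) = j := by omega
      rw [this]; exact hj.2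
  · intro i hi; simp only [Finset.mem_filter, Finset.mem_range] at hi; omega
  · intro j hj; simp only [Finset.mem_filter, Finset.mem_Ico] at hj; omega

lemma icoCount_add (u : ℤ → A) {n m p : ℤ} (h1 : n ≤ m) (h2 : m ≤ p) (a : A) :
    icoCount u n m a + icoCount u m p a = icoCount u n p a := by
  unfold icoCount
  rw [← Finset.Ico_union_Ico_eq_Ico h1 h2, Finset.filter_union,
    Finset.card_union_of_disjoint]
  · push_cast; ring
  · exact Finset.disjoint_filter_filter (Finset.Ico_disjoint_Ico_consecutive n m p)

lemma abPrefix_sub (u : ℤ → A) {n m : ℤ} (h : n ≤ m) (a : A) :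
    abPrefix u m a - abPrefix u n a = icoCount u n m a := by
  rcases le_or_gt 0 n with hn | hn
  · rw [abPrefix_of_nonneg u (le_trans hn h), abPrefix_of_nonneg u hn,
      ← icoCount_add u hn h]
    ring
  · rcases le_or_gt 0 m with hm | hm
    · rw [abPrefix_of_nonneg u hm, abPrefix_of_neg u hn,
        ← icoCount_add u hn.le hm]
      ring
    · rw [abPrefix_of_neg u hm, abPrefix_of_neg u hn,
        ← icoCount_add u h hm.le]
      ring

lemma icoCount_shift (u : ℤ → A) {n m t : ℤ}
    (hw : ∀ i : ℤ, n ≤ i → i < m → u i = u (i + t)) (a : A) :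
    icoCount u n m a = icoCount u (n + t) (m + t) a := by
  unfold icoCount
  congr 1
  apply Finset.card_bij' (fun (i : ℤ) _ => i + t) (fun (j : ℤ) _ => j - t)
  · intro i hi
    simp only [Finset.mem_filter, Finset.mem_Ico] at hi ⊢
    exact ⟨⟨by omega, by omega⟩, by rw [← hw i hi.1.1 hi.1.2]; exact hi.2⟩
  · intro j hj
    simp only [Finset.mem_filter, Finset.mem_Ico] at hj ⊢
    refine ⟨⟨by omega, by omega⟩, ?_⟩
    rw [hw (j - t) (by omega) (by omega)]
    simpa using hj.2
  · intro i _; ring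
  · intro j _; ring

/-- main matching lemma -/

lemma abPrefix_match (u : ℤ → A) {n m n' : ℤ} (h : n ≤ m)
    (hmatch : ∀ i : ℤ, 0 ≤ i → i < m - n → u (n + i) = u (n' + i)) (a : A) :
    abPrefix u m a - abPrefix u n a
      = abPrefix u (n' + (m - n)) a - abPrefix u n' a := by
  rw [abPrefix_sub u h, abPrefix_sub u (by omega : n' ≤ n' + (m - n))]
  have key := icoCount_shift u (n := n) (m := m) (t := n' - n)
    (fun i h1 h2 => by
      have := hmatch (i - n) (by omega) (by omega)
      simpa [add_sub_cancel, show n + (i - n) = i by ring,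
        show n' + (i - n) = i + (n' - n) by ring] using this) a
  rw [show n + (n' - n) = n' by ring, show m + (n' - n) = n' + (m - n) by ring] at key
  exact key

end Ab

lemma small_diam {E : Type*} [NormedAddCommGroup E] [InnerProductSpace ℝ E]
    (F : ℤ → E) (hbdd : IsBounded (Set.range F)) {ε : ℝ} (hε : 0 < ε) :
    ∃ n m : ℤ, n ≤ m ∧ ∀ x y : E, x ∈ Set.range F → y ∈ Set.range F →
      x + (F m - F n) ∈ Set.range F → y + (F m - F n) ∈ Set.range F →
      dist x y ≤ ε := by
  obtain ⟨D, hD0, hdistD, hnear⟩ :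
      ∃ D : ℝ, 0 ≤ D ∧ (∀ p q : ℤ, dist (F p) (F q) ≤ D) ∧
        ∀ δ : ℝ, 0 < δ → ∃ p q : ℤ, D - δ < dist (F p) (F q) := by
    obtain ⟨C, hC⟩ := Metric.isBounded_iff.mp hbdd
    set s : Set ℝ := {r | ∃ p q : ℤ, r = dist (F p) (F q)} with hs
    have hne : s.Nonempty := ⟨0, 0, 0, by simp⟩
    have hbdd' : BddAbove s := by
      refine ⟨max C 0, ?_⟩
      rintro r ⟨p, q, rfl⟩
      exact le_max_of_le_left (hC (Set.mem_range_self p) (Set.mem_range_self q))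
    refine ⟨sSup s, le_csSup hbdd' ⟨0, 0, by simp⟩,
      fun p q => le_csSup hbdd' ⟨p, q, rfl⟩, fun δ hδ => ?_⟩
    obtain ⟨r, hrs, hr⟩ := exists_lt_of_lt_csSup hne
      (show sSup s - δ < sSup s by linarith)
    obtain ⟨p, q, rfl⟩ := hrs
    exact ⟨p, q, hr⟩
  rcases le_or_gt D ε with hDe | hDe
  · refine ⟨0, 0, le_refl 0, fun x y hx hy _ _ => ?_⟩
    obtain ⟨p, rfl⟩ := hx; obtain ⟨q, rfl⟩ := hy
    exact (hdistD p q).trans hDe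
  · set η : ℝ := ε ^ 2 / (8 * (D + 1)) with hηdef
    have hη0 : 0 < η := by positivity
    have hη8 : η * (8 * (D + 1)) = ε ^ 2 := by
      rw [hηdef]; field_simp
    clear_value η
    clear hηdef
    have hηε : η ≤ ε / 8 := by nlinarith
    obtain ⟨p, q, hr⟩ := hnear η hη0
    refine ⟨min p q, max p q, min_le_max, fun x y hx hy hx' hy' => ?_⟩
    set b1 := F (min p q) with hb1
    set b2 := F (max p q) with hb2
    have hb : D - η ≤ ‖b2 - b1‖ := by
      rw [← dist_eq_norm]
      rcases le_total p q with h | h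
      · rw [hb2, hb1, min_eq_left h, max_eq_right h, dist_comm]
        exact hr.le
      · rw [hb2, hb1, min_eq_right h, max_eq_left h]
        exact hr.le
    have hball : ∀ z : E, z ∈ Set.range F → z + (b2 - b1) ∈ Set.range F →
        ‖z - b1‖ ≤ ε / 2 := by
      intro z hz hz'
      obtain ⟨pz, hpz⟩ := hz'
      have h1 : ‖z - b2‖ ≤ D := by
        obtain ⟨p0, rfl⟩ := hz
        rw [hb2, ← dist_eq_norm]; exact hdistD p0 (max p q)
      have h2 : ‖z + (b2 - b1) - b1‖ ≤ D := by
        rw [← hpz, hb1, ← dist_eq_norm]; exact hdistD pz (min p q)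
      have hpar := parallelogram_law_with_norm ℝ (z - b1) (b2 - b1)
      have e1 : z - b1 + (b2 - b1) = z + (b2 - b1) - b1 := by abel
      have e2 : z - b1 - (b2 - b1) = z - b2 := by abel
      rw [e1, e2] at hpar
      have hDη : 0 ≤ D - η := by linarith
      have h3' : (D - η) ^ 2 ≤ ‖b2 - b1‖ ^ 2 := pow_le_pow_left₀ hDη hb 2
      have h1' : ‖z + (b2 - b1) - b1‖ ^ 2 ≤ D ^ 2 :=
        pow_le_pow_left₀ (norm_nonneg _) h2 2
      have h2' : ‖z - b2‖ ^ 2 ≤ D ^ 2 := pow_le_pow_left₀ (norm_nonneg _) h1 2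
      have hsq : ‖z - b1‖ ^ 2 ≤ D ^ 2 - (D - η) ^ 2 := by linarith
      have hsmall : D ^ 2 - (D - η) ^ 2 ≤ (ε / 2) ^ 2 := by nlinarith
      nlinarith [norm_nonneg (z - b1)]
    have hxb := hball x hx hx'
    have hyb := hball y hy hy'
    calc dist x y ≤ ‖x - b1‖ + ‖y - b1‖ := by
          rw [dist_eq_norm, show x - y = (x - b1) - (y - b1) by abel]
          exact norm_sub_le _ _
      _ ≤ ε := by linarith

section Dyn
variable {A : Type*} [TopologicalSpace A] [DiscreteTopology A]

lemma cylOpen (s : Finset ℤ) (g : ℤ → ℤ) (w : ℤ → A) :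
    IsOpen {z : ℤ → A | ∀ i ∈ s, z (g i) = w i} := by
  have h : {z : ℤ → A | ∀ i ∈ s, z (g i) = w i}
      = ⋂ i ∈ s, (fun z : ℤ → A => z (g i)) ⁻¹' {w i} := by
    ext z; simp
  rw [h]
  exact isOpen_biInter_finset fun i _ =>
    (continuous_apply (g i)).isOpen_preimage _ (isOpen_discrete _)

lemma shift_mem {B : Type*} (Ω : Set (ℤ → B))
    (hinv : (fun x : ℤ → B => fun i => x (i + 1)) '' Ω = Ω) :
    ∀ n : ℤ, ∀ x ∈ Ω, (fun i => x (i + n)) ∈ Ω := by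
  have h1 : ∀ x ∈ Ω, (fun i => x (i + 1)) ∈ Ω := fun x hx => by
    rw [← hinv]; exact ⟨x, hx, rfl⟩
  have h2 : ∀ x ∈ Ω, (fun i => x (i - 1)) ∈ Ω := by
    intro x hx
    conv at hx => rw [← hinv]
    obtain ⟨y, hy, hxy⟩ := hx
    have hyx : (fun i => x (i - 1)) = y := by
      funext j
      rw [← hxy]
      simp
    rw [hyx]; exact hy
  intro n
  induction n using Int.induction_on with
  | zero => intro x hx; simpa using hx
  | succ k ih =>
      intro x hx
      have h := h1 _ (ih x hx)
      have he : (fun i : ℤ => x (i + (k + 1))) = fun i : ℤ => x (i + 1 + k) := by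
        funext i; congr 1; ring
      rw [he]; exact h
  | pred k ih =>
      intro x hx
      have h := h2 _ (ih x hx)
      have he : (fun i : ℤ => x (i + (-(k:ℤ) - 1))) = fun i : ℤ => x (i - 1 + (-k)) := by
        funext i; congr 1; ring
      rw [he]; exact h

lemma approx_orbit (Ω : Set (ℤ → A))
    (hmin : ∀ x ∈ Ω, ∀ y ∈ Ω, y ∈ closure {z : ℤ → A | ∃ n : ℤ, z = fun i => x (i + n)}) :
    ∀ x ∈ Ω, ∀ y ∈ Ω, ∀ s : Finset ℤ, ∃ c : ℤ, ∀ i ∈ s, x (i + c) = y i := by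
  intro x hx y hy s
  have hcl := hmin x hx y hy
  rw [mem_closure_iff] at hcl
  obtain ⟨z, hz1, hz2⟩ := hcl _ (cylOpen s id y) (fun i _ => rfl)
  obtain ⟨c, rfl⟩ := hz2
  exact ⟨c, fun i hi => hz1 i hi⟩

lemma syndetic_occ [Fintype A] (Ω : Set (ℤ → A)) (hclosed : IsClosed Ω)
    (hinv : (fun x : ℤ → A => fun i => x (i + 1)) '' Ω = Ω)
    (hmin : ∀ x ∈ Ω, ∀ y ∈ Ω, y ∈ closure {z : ℤ → A | ∃ n : ℤ, z = fun i => x (i + n)})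
    (u : ℤ → A) (hu : u ∈ Ω) (n m : ℤ) :
    ∃ L : ℕ, ∀ q : ℤ, ∃ p : ℤ, q ≤ p ∧ p ≤ q + L ∧
      ∀ i : ℤ, 0 ≤ i → i < m - n → u (p + i) = u (n + i) := by
  set U : ℤ → Set (ℤ → A) :=
    fun k => {x | ∀ i ∈ Finset.Ico (0:ℤ) (m - n), x (k + i) = u (n + i)} with hU
  have hUopen : ∀ k, IsOpen (U k) := fun k => cylOpen _ (fun i => k + i) _
  have hcover : Ω ⊆ ⋃ k, U k := by
    intro x hx
    obtain ⟨c, hc⟩ := approx_orbit Ω hmin x hx u hu (Finset.Ico n m)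
    refine Set.mem_iUnion.mpr ⟨n + c, fun i hi => ?_⟩
    rw [Finset.mem_Ico] at hi
    have := hc (n + i) (Finset.mem_Ico.mpr ⟨by omega, by omega⟩)
    rw [show n + c + i = n + i + c by ring]
    exact this
  obtain ⟨T, hT⟩ := (hclosed.isCompact).elim_finite_subcover U hUopen hcover
  set K : ℕ := T.sup fun k => k.natAbs with hK
  refine ⟨2 * K, fun q => ?_⟩
  have hmem : (fun i => u (i + (q + K))) ∈ Ω := shift_mem Ω hinv (q + K) u hu
  obtain ⟨k, hkT, hkU⟩ := Set.mem_iUnion₂.mp (hT hmem)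
  have hkK : k.natAbs ≤ K := Finset.le_sup hkT
  refine ⟨q + K + k, by omega, by push_cast; omega, fun i hi1 hi2 => ?_⟩
  have := hkU i (Finset.mem_Ico.mpr ⟨hi1, hi2⟩)
  rw [show q + (K:ℤ) + k + i = k + i + (q + K) by ring]
  exact this

end Dyn

theorem stmt_15 {A : Type*} [Fintype A] [DecidableEq A]
    [TopologicalSpace A] [DiscreteTopology A] {d : ℕ}
    (Ω : Set (ℤ → A)) (hclosed : IsClosed Ω)
    (hinv : (fun x : ℤ → A => fun i => x (i + 1)) '' Ω = Ω)
    (hmin : ∀ x ∈ Ω, ∀ y ∈ Ω, y ∈ closure {z : ℤ → A | ∃ n : ℤ, z = fun i => x (i + n)})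
    (haper : ∀ x ∈ Ω, ∀ n : ℤ, (fun i => x (i + n)) = x → n = 0)
    (V : (A → ℝ) →ₗ[ℝ] (Fin d → ℝ)) (u : ℤ → A) (hu : u ∈ Ω)
    (hbdd : Bornology.IsBounded
      (Set.range fun n : ℤ => V fun a => (abPrefix u n a : ℝ))) :
    ∃ φ : (ℤ → A) → (Fin d → ℝ), ContinuousOn φ Ω ∧
      ∀ n : ℤ, φ (fun i => u (i + n)) = V fun a => (abPrefix u n a : ℝ) := by
  classical
  set e := EuclideanSpace.equiv (Fin d) ℝ with hedef
  set fv : ℤ → (Fin d → ℝ) := fun n => V fun a => (abPrefix u n a : ℝ) with hfv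
  set F : ℤ → EuclideanSpace ℝ (Fin d) := fun n => e.symm (fv n) with hF
  have hFbdd : IsBounded (Set.range F) := by
    have hr : Set.range F = ⇑(e.symm) '' Set.range fv := by
      rw [← Set.range_comp]; rfl
    rw [hr]
    exact (e.symm : (Fin d → ℝ) →L[ℝ] EuclideanSpace ℝ (Fin d)).lipschitz.isBounded_image hbdd
  -- cocycle matching property for F
  have hFmatch : ∀ n m n' : ℤ, n ≤ m →
      (∀ i : ℤ, 0 ≤ i → i < m - n → u (n + i) = u (n' + i)) →
      F m - F n = F (n' + (m - n)) - F n' := by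
    intro n m n' h hmatch
    have hfveq : fv m - fv n = fv (n' + (m - n)) - fv n' := by
      rw [hfv]
      simp only [← map_sub]
      congr 1
      funext a
      have := abPrefix_match u h hmatch a
      simp only [Pi.sub_apply]
      exact_mod_cast congrArg (fun z : ℤ => (z : ℝ)) this
    rw [hF]
    simp only [← map_sub, hfveq]
  -- key uniform continuity estimate
  have key : ∀ ε : ℝ, 0 < ε → ∃ N : ℕ, ∀ j k : ℤ,
      (∀ i : ℤ, |i| ≤ (N:ℤ) → u (j + i) = u (k + i)) → dist (F j) (F k) ≤ ε := by
    intro ε hε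
    obtain ⟨n, m, hnm, hdiam⟩ := small_diam F hFbdd hε
    obtain ⟨L, hL⟩ := syndetic_occ Ω hclosed hinv hmin u hu n m
    refine ⟨L + (m - n).toNat, fun j k hagree => ?_⟩
    obtain ⟨p, hqp1, hqp2, hocc⟩ := hL k
    set p' : ℤ := j + (p - k) with hp'
    have hN : ((L + (m - n).toNat : ℕ) : ℤ) = (L : ℤ) + (m - n) := by
      push_cast; omega
    -- occurrence of the word at p'
    have hocc' : ∀ i : ℤ, 0 ≤ i → i < m - n → u (p' + i) = u (n + i) := by
      intro i hi1 hi2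
      have h1 : p' + i = j + (p - k + i) := by ring
      have h2 : p + i = k + (p - k + i) := by ring
      rw [h1, hagree (p - k + i) (by rw [abs_le]; omega), ← h2]
      exact hocc i hi1 hi2
    -- memberships
    have hmemp : F p + (F m - F n) ∈ Set.range F := by
      refine ⟨p + (m - n), ?_⟩
      rw [hFmatch n m p hnm (fun i h1 h2 => (hocc i h1 h2).symm)]
      abel
    have hmemp' : F p' + (F m - F n) ∈ Set.range F := by
      refine ⟨p' + (m - n), ?_⟩
      rw [hFmatch n m p' hnm (fun i h1 h2 => (hocc' i h1 h2).symm)]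
      abel
    have hdistpp' : dist (F p) (F p') ≤ ε :=
      hdiam (F p) (F p') ⟨p, rfl⟩ ⟨p', rfl⟩ hmemp hmemp'
    -- transport: F j - F k = F p' - F p
    have htrans : F p - F k = F p' - F j := by
      have := hFmatch k p j hqp1 (fun i h1 h2 => (hagree i (by rw [abs_le]; omega)).symm)
      rw [this]
    have hjk : F j - F k = F p' - F p := by
      have h2 : F p - F k + (F p' - F p) = F p' - F j + (F j - F k) := by abel
      rw [htrans] at h2
      exact (add_left_cancel h2).symm
    calc dist (F j) (F k) = dist (F p') (F p) := by
          rw [dist_eq_norm, dist_eq_norm, hjk]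
      _ = dist (F p) (F p') := dist_comm _ _
      _ ≤ ε := hdistpp'
  -- choice of approximating shifts
  have gex : ∀ x : ℤ → A, x ∈ Ω → ∀ N : ℕ,
      ∃ c : ℤ, ∀ i : ℤ, |i| ≤ (N:ℤ) → u (i + c) = x i := by
    intro x hx N
    obtain ⟨c, hc⟩ := approx_orbit Ω hmin u hu x hx (Finset.Icc (-(N:ℤ)) N)
    exact ⟨c, fun i hi => hc i (Finset.mem_Icc.mpr (abs_le.mp hi))⟩
  set g : (ℤ → A) → ℕ → ℤ := fun x N =>
    if h : ∃ c : ℤ, ∀ i : ℤ, |i| ≤ (N:ℤ) → u (i + c) = x i then h.choose else 0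
    with hgdef
  have hg : ∀ x ∈ Ω, ∀ N : ℕ, ∀ i : ℤ, |i| ≤ (N:ℤ) → u (i + g x N) = x i := by
    intro x hx N
    have h := gex x hx N
    rw [hgdef]
    simp only [dif_pos h]
    exact h.choose_spec
  set Φ : (ℤ → A) → EuclideanSpace ℝ (Fin d) :=
    fun x => limUnder atTop fun N => F (g x N) with hΦdef
  have hagree2 : ∀ x ∈ Ω, ∀ N M M' : ℕ, N ≤ M → N ≤ M' →
      ∀ i : ℤ, |i| ≤ (N:ℤ) → u (g x M + i) = u (g x M' + i) := by
    intro x hx N M M' hM hM' i hi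
    rw [add_comm (g x M) i, add_comm (g x M') i,
      hg x hx M i (hi.trans (by exact_mod_cast hM)),
      hg x hx M' i (hi.trans (by exact_mod_cast hM'))]
  have hcauchy : ∀ x ∈ Ω, CauchySeq (fun N => F (g x N)) := by
    intro x hx
    rw [Metric.cauchySeq_iff]
    intro ε hε
    obtain ⟨N, hN⟩ := key (ε/2) (by linarith)
    refine ⟨N, fun M hM M' hM' => ?_⟩
    calc dist (F (g x M)) (F (g x M'))
        ≤ ε/2 := hN _ _ (hagree2 x hx N M M' hM hM')
      _ < ε := by linarith
  have hΦlim : ∀ x ∈ Ω, Tendsto (fun N => F (g x N)) atTop (𝓝 (Φ x)) := by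
    intro x hx
    obtain ⟨l, hl⟩ := cauchySeq_tendsto_of_complete (hcauchy x hx)
    rw [hΦdef]
    simp only
    rw [hl.limUnder_eq]
    exact hl
  have heval : ∀ q : ℤ, Φ (fun i => u (i + q)) = F q := by
    intro q
    have hmem : (fun i => u (i + q)) ∈ Ω := shift_mem Ω hinv q u hu
    refine tendsto_nhds_unique (hΦlim _ hmem) ?_
    rw [Metric.tendsto_atTop]
    intro ε hε
    obtain ⟨N, hN⟩ := key (ε/2) (by linarith)
    refine ⟨N, fun M hM => lt_of_le_of_lt (hN (g _ M) q fun i hi => ?_) (by linarith)⟩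
    rw [add_comm (g _ M) i, hg _ hmem M i (hi.trans (by exact_mod_cast hM))]
    show u (i + q) = u (q + i)
    rw [add_comm i q]
  have hΦcont : ContinuousOn Φ Ω := by
    intro x hx
    rw [ContinuousWithinAt, Metric.tendsto_nhds]
    intro ε hε
    obtain ⟨N, hN⟩ := key (ε/2) (by linarith)
    have hopen : IsOpen {z : ℤ → A | ∀ i ∈ Finset.Icc (-(N:ℤ)) (N:ℤ), z i = x i} :=
      cylOpen _ id x
    have hmemx : x ∈ {z : ℤ → A | ∀ i ∈ Finset.Icc (-(N:ℤ)) (N:ℤ), z i = x i} :=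
      fun i _ => rfl
    filter_upwards [self_mem_nhdsWithin,
      mem_nhdsWithin_of_mem_nhds (hopen.mem_nhds hmemx)] with y hyΩ hyx
    have hdd : ∀ M : ℕ, N ≤ M → dist (F (g y M)) (F (g x M)) ≤ ε/2 := by
      intro M hM
      apply hN
      intro i hi
      rw [add_comm (g y M) i, hg y hyΩ M i (hi.trans (by exact_mod_cast hM)),
        add_comm (g x M) i, hg x hx M i (hi.trans (by exact_mod_cast hM))]
      exact hyx i (Finset.mem_Icc.mpr (abs_le.mp hi))
    have hlim : Tendsto (fun M => dist (F (g y M)) (F (g x M))) atTop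
        (𝓝 (dist (Φ y) (Φ x))) := (hΦlim y hyΩ).dist (hΦlim x hx)
    have hle : dist (Φ y) (Φ x) ≤ ε/2 :=
      le_of_tendsto hlim (Filter.eventually_atTop.mpr ⟨N, hdd⟩)
    calc dist (Φ y) (Φ x) ≤ ε/2 := hle
      _ < ε := by linarith
  refine ⟨fun x => e (Φ x), ?_, ?_⟩
  · exact e.continuous.comp_continuousOn hΦcont
  · intro q
    show e (Φ (fun i => u (i + q))) = fv q
    rw [heval q, hF]
    simp only
    exact e.apply_symm_apply (fv q)
end

section
/- Let σ be a primitive aperiodic substitution with incidence matrix M over a finite alphabet A, u an admissible fixed point of σ, and V : ℝ^A → ℝ^d a linear map such that Σ_{n≥0} ‖V Mⁿ‖ < ∞. Then for every v in the subshift Ω_σ, φ(v) = Σ_{n=0}^∞ V Mⁿ t_n(v), where (t_n(v)) is the sequence of abelianized prefixes of v in the Dumont–Thomas (prefix-suffix) decomposition, and φ = φ_{u,V} is the continuous extension of Sⁿu ↦ V·ab(u_{[0,n)}). -/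
/-- The incidence matrix of a substitution, acting on `A → ℝ`. -/
noncomputable def incMat {A : Type*} [Fintype A] [DecidableEq A] (σ : A → List A) :
    Matrix A A ℝ :=
  Matrix.of fun c b => ((σ b).count c : ℝ)

set_option linter.unusedSectionVars false
set_option linter.unusedTactic false
set_option maxHeartbeats 1000000

namespace S18

variable {A : Type*} [DecidableEq A]

def shiftZ (u : ℤ → A) (c : ℤ) : ℤ → A := fun i => u (i + c)

lemma shiftZ_shiftZ (u : ℤ → A) (a b : ℤ) : shiftZ (shiftZ u a) b = shiftZ u (b + a) := by
  funext i; simp [shiftZ, add_assoc]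

lemma abPrefix_zero (u : ℤ → A) : abPrefix u 0 = 0 := by
  funext a; simp [abPrefix]

lemma abPrefix_succ (u : ℤ → A) (n : ℤ) (a : A) :
    abPrefix u (n + 1) a = abPrefix u n a + (if u n = a then 1 else 0) := by
  rcases le_or_gt 0 n with hn | hn
  · have hn1 : (0:ℤ) ≤ n + 1 := by omega
    have ht : (n + 1).toNat = n.toNat + 1 := by omega
    simp only [abPrefix, if_pos hn, if_pos hn1, ht, Finset.range_add_one]
    rw [Finset.filter_insert]
    have hnm : n.toNat ∉ Finset.range n.toNat := by simp
    have hcast : ((n.toNat : ℤ)) = n := Int.toNat_of_nonneg hn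
    split_ifs with h1 h2 h2
    · rw [Finset.card_insert_of_notMem (fun hc => hnm (Finset.mem_of_mem_filter _ hc))]
      push_cast; ring
    · exact absurd (hcast ▸ h1) h2
    · exact absurd (hcast ▸ h2) h1
    · simp
  · rcases eq_or_lt_of_le (by omega : n + 1 ≤ 0) with h0 | h0
    · have hn' : n = -1 := by omega
      subst hn'
      simp only [abPrefix]
      norm_num
      rcases eq_or_ne (u (-1)) a with h | h <;> simp [h, Finset.filter_singleton]
    · have hn1 : ¬ (0:ℤ) ≤ n + 1 := by omega
      have hn2 : ¬ (0:ℤ) ≤ n := by omega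
      have ht : (-n).toNat = (-(n+1)).toNat + 1 := by omega
      simp only [abPrefix, if_neg hn1, if_neg hn2, ht, Finset.range_add_one]
      rw [Finset.filter_insert]
      have hnm : (-(n+1)).toNat ∉ Finset.range (-(n+1)).toNat := by simp
      have hcast : (((-(n+1)).toNat : ℤ)) = -(n+1) := Int.toNat_of_nonneg (by omega)
      have hval : -((((-(n+1)).toNat : ℤ)) + 1) = n := by rw [hcast]; ring
      rw [hval]
      split_ifs with h1
      · rw [Finset.card_insert_of_notMem (fun hc => hnm (Finset.mem_of_mem_filter _ hc))]
        push_cast; ring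
      · simp

lemma abPrefix_add (u : ℤ → A) (k c : ℤ) (a : A) :
    abPrefix u (k + c) a = abPrefix u k a + abPrefix (shiftZ u k) c a := by
  induction c using Int.induction_on with
  | zero => simp [abPrefix_zero]
  | succ m ih =>
      have h1 : k + ((m : ℤ) + 1) = (k + m) + 1 := by ring
      rw [h1, abPrefix_succ, ih, abPrefix_succ]
      have : shiftZ u k (m:ℤ) = u (k + m) := by simp [shiftZ, add_comm]
      rw [this]; ring
  | pred m ih =>
      have h1 : k + (-(m : ℤ) - 1) + 1 = k + -(m:ℤ) := by ring
      have e1 := abPrefix_succ u (k + (-(m:ℤ) - 1)) a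
      rw [h1] at e1
      have e2 := abPrefix_succ (shiftZ u k) (-(m:ℤ) - 1) a
      have h2 : (-(m:ℤ) - 1) + 1 = -(m:ℤ) := by ring
      rw [h2] at e2
      have hsz : shiftZ u k (-(m:ℤ) - 1) = u (k + (-(m:ℤ) - 1)) := by
        simp [shiftZ, add_comm]
      rw [e2, hsz] at ih
      omega



lemma list_count_eq (l : List A) (a : A) :
    (l.count a : ℤ) = (((Finset.range l.length).filter (fun j => l[j]? = some a)).card : ℤ) := by
  induction l using List.reverseRecOn with
  | nil => simp
  | append_singleton l b ih =>
      rw [List.length_append, List.length_singleton, Finset.range_add_one, Finset.filter_insert]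
      have hnm : l.length ∉ Finset.range l.length := by simp
      have hget : (l ++ [b])[l.length]? = some b := by
        rw [List.getElem?_append_right (le_refl _)]
        simp
      have hrest : ∀ j ∈ Finset.range l.length, ((l ++ [b])[j]? = some a) = (l[j]? = some a) := by
        intro j hj
        rw [List.getElem?_append_left (Finset.mem_range.mp hj)]
      rw [Finset.filter_congr (fun j hj => by rw [hrest j hj])]
      rw [List.count_append, hget]
      split_ifs with h1
      · rw [Finset.card_insert_of_notMem (fun hc => hnm (Finset.mem_of_mem_filter _ hc))]
        have hb : b = a := Option.some_injective _ h1
        subst hb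
        simp [ih]
      · have : ¬ (b = a) := fun hc => h1 (by rw [hc])
        simp [ih, List.count_singleton', Ne.symm this, this]


lemma abPrefix_of_list (z : ℤ → A) (l : List A)
    (h : ∀ (j : ℕ) (hj : j < l.length), z (j : ℤ) = l.get ⟨j, hj⟩) (a : A) :
    abPrefix z (l.length : ℤ) a = (l.count a : ℤ) := by
  rw [list_count_eq]
  simp only [abPrefix, if_pos (by positivity : (0:ℤ) ≤ (l.length : ℤ)), Int.toNat_natCast]
  congr 1
  apply congrArg
  apply Finset.filter_congr
  intro i hi
  have hi' := Finset.mem_range.mp hi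
  rw [h i hi', List.getElem?_eq_getElem hi']
  simp [List.get_eq_getElem]

lemma abPrefix_of_list_neg (z : ℤ → A) (l : List A)
    (h : ∀ (j : ℕ) (hj : j < l.length), z ((j : ℤ) - l.length) = l.get ⟨j, hj⟩) (a : A) :
    abPrefix z (-(l.length : ℤ)) a = -(l.count a : ℤ) := by
  rcases Nat.eq_zero_or_pos l.length with h0 | h0
  · rw [List.length_eq_zero_iff.mp h0]
    simp [abPrefix]
  rw [list_count_eq]
  have hneg : ¬ (0:ℤ) ≤ -(l.length : ℤ) := by omega
  simp only [abPrefix, if_neg hneg, neg_neg, Int.toNat_natCast, neg_inj]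
  congr 1
  refine Finset.card_bij' (fun i _ => l.length - 1 - i) (fun j _ => l.length - 1 - j) ?_ ?_ ?_ ?_
  · intro i hi
    have hi' := Finset.mem_range.mp (Finset.mem_of_mem_filter _ hi)
    have hlt : l.length - 1 - i < l.length := by omega
    refine Finset.mem_filter.mpr ⟨Finset.mem_range.mpr hlt, ?_⟩
    have hcond := (Finset.mem_filter.mp hi).2
    have harg : -((i : ℤ) + 1) = (((l.length - 1 - i : ℕ):ℤ) - l.length) := by
      push_cast [Nat.cast_sub (by omega : 1 + i ≤ l.length)]
      omega
    rw [harg, h _ hlt] at hcond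
    rw [List.getElem?_eq_getElem hlt]
    rw [List.get_eq_getElem] at hcond
    rw [hcond]
  · intro j hj
    have hj' := Finset.mem_range.mp (Finset.mem_of_mem_filter _ hj)
    have hlt : l.length - 1 - j < l.length := by omega
    refine Finset.mem_filter.mpr ⟨Finset.mem_range.mpr hlt, ?_⟩
    have hcond := (Finset.mem_filter.mp hj).2
    rw [List.getElem?_eq_getElem hj'] at hcond
    have harg : -(((l.length - 1 - j : ℕ) : ℤ) + 1) = ((j:ℤ) - l.length) := by
      push_cast [Nat.cast_sub (by omega : 1 + j ≤ l.length)]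
      omega
    rw [harg, h j hj', List.get_eq_getElem]
    exact Option.some_injective _ hcond
  · intro i hi
    have hi' := Finset.mem_range.mp (Finset.mem_of_mem_filter _ hi)
    show l.length - 1 - (l.length - 1 - i) = i
    omega
  · intro j hj
    have hj' := Finset.mem_range.mp (Finset.mem_of_mem_filter _ hj)
    show l.length - 1 - (l.length - 1 - j) = j
    omega

lemma abPrefix_congr (z z' : ℤ → A) (c : ℤ)
    (hz : ∀ t : ℤ, min c 0 ≤ t → t < max c 0 → z t = z' t) (a : A) :
    abPrefix z c a = abPrefix z' c a := by
  rcases le_or_gt 0 c with hc | hc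
  · simp only [abPrefix, if_pos hc]
    congr 1
    apply congrArg
    apply Finset.filter_congr
    intro i hi
    have hi' := Finset.mem_range.mp hi
    have hiz : (i:ℤ) < c := by omega
    rw [hz i (by simp) (by simp [hiz, hc])]
  · have hc' : ¬ (0:ℤ) ≤ c := by omega
    simp only [abPrefix, if_neg hc']
    congr 2
    apply congrArg
    apply Finset.filter_congr
    intro i hi
    have hi' := Finset.mem_range.mp hi
    have h1 : min c 0 ≤ -((i:ℤ)+1) := by omega
    have h2 : -((i:ℤ)+1) < max c 0 := by
      have : (0:ℤ) ≤ max c 0 := le_max_right _ _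
      omega
    rw [hz _ h1 h2]

lemma abPrefix_bound (u : ℤ → A) (k : ℤ) (a : A) : |abPrefix u k a| ≤ |k| := by
  rcases le_or_gt 0 k with hc | hc <;> simp only [abPrefix]
  · rw [if_pos hc]
    have h1 := Finset.card_filter_le (Finset.range k.toNat) (fun i : ℕ => u (i:ℤ) = a)
    simp only [Finset.card_range] at h1
    rw [abs_of_nonneg (by positivity : (0:ℤ) ≤ _), abs_of_nonneg hc]
    omega
  · rw [if_neg (by omega)]
    have h1 := Finset.card_filter_le (Finset.range (-k).toNat) (fun i : ℕ => u (-((i:ℤ)+1)) = a)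
    simp only [Finset.card_range] at h1
    rw [abs_neg, abs_of_nonneg (by positivity : (0:ℤ) ≤ _), abs_of_neg hc]
    omega


structure ImgL (θ : A → List A) (z w : ℤ → A) (L : ℤ → ℤ) : Prop where
  zero : L 0 = 0
  step : ∀ k : ℤ, L (k + 1) = L k + ((θ (z k)).length : ℤ)
  letter : ∀ (k : ℤ) (j : ℕ) (hj : j < (θ (z k)).length), w (L k + j) = (θ (z k)).get ⟨j, hj⟩

def wordOf (θ : A → List A) (z : ℤ → A) (k : ℤ) (c : ℕ) : List A :=
  (List.range c).flatMap (fun t : ℕ => θ (z (k + (t:ℤ))))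

lemma wordOf_succ (θ : A → List A) (z : ℤ → A) (k : ℤ) (c : ℕ) :
    wordOf θ z k (c+1) = wordOf θ z k c ++ θ (z (k + c)) := by
  simp [wordOf, List.range_succ, List.flatMap_append]

lemma ImgL.len_word {θ : A → List A} {z w : ℤ → A} {L : ℤ → ℤ} (h : ImgL θ z w L) (k : ℤ) (c : ℕ) :
    L (k + c) = L k + ((wordOf θ z k c).length : ℤ) := by
  induction c with
  | zero => simp [wordOf]
  | succ c ih =>
      have e : (k + ((c:ℤ)+1)) = (k + c) + 1 := by ring
      push_cast
      rw [e, h.step, ih, wordOf_succ]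
      push_cast [List.length_append]
      ring

lemma ImgL.letter_word {θ : A → List A} {z w : ℤ → A} {L : ℤ → ℤ} (h : ImgL θ z w L) (k : ℤ) (c : ℕ) :
    ∀ (j : ℕ) (hj : j < (wordOf θ z k c).length), w (L k + j) = (wordOf θ z k c).get ⟨j, hj⟩ := by
  induction c with
  | zero => intro j hj; simp [wordOf] at hj
  | succ c ih =>
      intro j hj
      have hx : j < (wordOf θ z k c ++ θ (z (k + (c:ℤ)))).length := by
        rw [← wordOf_succ]; exact hj
      have e1 : (wordOf θ z k (c+1))[j]'hj = (wordOf θ z k c ++ θ (z (k + (c:ℤ))))[j]'hx :=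
        List.getElem_of_eq (wordOf_succ θ z k c) hj
      rw [List.get_eq_getElem, e1]
      rw [List.length_append] at hx
      rcases lt_or_ge j (wordOf θ z k c).length with hlt | hge
      · rw [List.getElem_append_left hlt]
        have := ih j hlt
        rw [List.get_eq_getElem] at this
        exact this
      · rw [List.getElem_append_right hge]
        have hjlt : j - (wordOf θ z k c).length < (θ (z (k + (c:ℤ)))).length := by omega
        have harg : L k + (j:ℤ) = L (k + (c:ℤ)) + ((j - (wordOf θ z k c).length : ℕ) : ℤ) := by
          rw [h.len_word k c]
          push_cast [Nat.cast_sub hge]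
          ring
        rw [harg]
        have := h.letter (k + (c:ℤ)) _ hjlt
        rw [List.get_eq_getElem] at this
        exact this

lemma flatMap_congr {B : Type*} (l : List A) (f : ℕ → List B) (g : A → List B)
    (h : ∀ (t : ℕ) (ht : t < l.length), f t = g (l.get ⟨t, ht⟩)) :
    (List.range l.length).flatMap f = l.flatMap g := by
  induction l generalizing f with
  | nil => simp
  | cons a tl ih =>
      rw [List.length_cons, List.range_succ_eq_map]
      simp only [List.flatMap_cons, List.flatMap_map]
      have h0 : f 0 = g a := h 0 (by simp)
      rw [h0]
      congr 1
      exact ih (fun t => f (t+1)) (fun t ht => h (t+1) (by simpa using Nat.succ_lt_succ ht))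

lemma ImgL.comp {θ θ' : A → List A} {z y w : ℤ → A} {Lθ L' : ℤ → ℤ}
    (h1 : ImgL θ z y Lθ) (h2 : ImgL θ' y w L') :
    ImgL (fun a => (θ a).flatMap θ') z w (fun k => L' (Lθ k)) := by
  have hword : ∀ k : ℤ, wordOf θ' y (Lθ k) (θ (z k)).length = (θ (z k)).flatMap θ' := by
    intro k
    apply flatMap_congr
    intro t ht
    rw [← h1.letter k t ht]
  refine ⟨?_, ?_, ?_⟩
  · rw [h1.zero, h2.zero]
  · intro k
    rw [h1.step, h2.len_word (Lθ k) (θ (z k)).length, hword]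
  · intro k j hj
    have hj' : j < (wordOf θ' y (Lθ k) (θ (z k)).length).length := by
      rw [hword]; exact hj
    have := h2.letter_word (Lθ k) (θ (z k)).length j hj'
    rw [this]
    simp only [List.get_eq_getElem]
    congr 1
    exact hword k

lemma ImgL.shift {θ : A → List A} {z w : ℤ → A} {L : ℤ → ℤ} (h : ImgL θ z w L) (c : ℤ) :
    ImgL θ (shiftZ z c) (shiftZ w (L c)) (fun t => L (t + c) - L c) := by
  refine ⟨by simp, ?_, ?_⟩
  · intro k
    have e : (k + 1 + c) = (k + c) + 1 := by ring
    rw [e, h.step]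
    simp only [shiftZ]
    ring
  · intro k j hj
    have : shiftZ w (L c) (L (k + c) - L c + j) = w (L (k + c) + j) := by
      simp only [shiftZ]
      congr 1
      ring
    rw [this]
    exact h.letter (k + c) j hj

section Mono
variable {θ : A → List A} {z z' w w' : ℤ → A} {L L' : ℤ → ℤ}

lemma ImgL.add_le (h : ImgL θ z w L) (hθ : ∀ a, θ a ≠ []) (k : ℤ) (c : ℕ) :
    L k + c ≤ L (k + c) := by
  induction c with
  | zero => simp
  | succ c ih =>
      have e : (k + ((c:ℤ)+1)) = (k + c) + 1 := by ring
      have hlen : 1 ≤ (θ (z (k + c))).length := List.length_pos_iff.mpr (hθ _)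
      push_cast
      rw [e, h.step]
      push_cast at ih
      omega

lemma ImgL.self_le (h : ImgL θ z w L) (hθ : ∀ a, θ a ≠ []) (k : ℤ) (hk : 0 ≤ k) : k ≤ L k := by
  have := h.add_le hθ 0 k.toNat
  rw [h.zero, Int.toNat_of_nonneg hk] at this
  simpa using this

lemma ImgL.le_self (h : ImgL θ z w L) (hθ : ∀ a, θ a ≠ []) (k : ℤ) (hk : k ≤ 0) : L k ≤ k := by
  have := h.add_le hθ k (-k).toNat
  rw [Int.toNat_of_nonneg (by omega)] at this
  have e : k + -k = 0 := by ring
  rw [e, h.zero] at this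
  omega

lemma ImgL.exists_block (h : ImgL θ z w L) (hθ : ∀ a, θ a ≠ []) (i : ℤ) :
    ∃ k, L k ≤ i ∧ i < L (k + 1) ∧ min i 0 ≤ k ∧ k ≤ max i 0 := by
  obtain ⟨k, hk, hmax⟩ := Int.exists_greatest_of_bdd
    (P := fun j => L j ≤ i)
    ⟨max i 0, fun j hj => by
      rcases le_or_gt j 0 with hj0 | hj0
      · omega
      · have := h.self_le hθ j (by omega); omega⟩
    ⟨min i 0, le_trans (h.le_self hθ _ (by omega)) (by omega)⟩
  refine ⟨k, hk, ?_, ?_, ?_⟩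
  · by_contra hcon
    have := hmax (k+1) (by omega)
    omega
  · rcases le_or_gt 0 i with hi | hi
    · have := hmax 0 (by rw [h.zero]; omega)
      omega
    · rcases le_or_gt (k+1) 0 with hk1 | hk1
      · have h2 := h.le_self hθ (k+1) hk1
        by_contra hcon
        have : L (k+1) ≤ i := by
          by_contra hc2
          omega
        have := hmax (k+1) this
        omega
      · omega
  · rcases le_or_gt k 0 with hk0 | hk0
    · omega
    · have := h.self_le hθ k (by omega)
      omega

lemma wordOf_congr (θ : A → List A) (k : ℤ) (c : ℕ)
    (hz : ∀ t : ℕ, t < c → z (k + t) = z' (k + t)) : wordOf θ z k c = wordOf θ z' k c := by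
  induction c with
  | zero => simp [wordOf]
  | succ c ih =>
      rw [wordOf_succ, wordOf_succ, ih (fun t ht => hz t (by omega)), hz c (by omega)]

lemma ImgL.L_eq (h : ImgL θ z w L) (h' : ImgL θ z' w' L') (k : ℤ)
    (hz : ∀ t : ℤ, min k 0 ≤ t → t < max k 0 → z t = z' t) : L k = L' k := by
  rcases le_or_gt 0 k with hk | hk
  · have e1 := h.len_word 0 k.toNat
    have e2 := h'.len_word 0 k.toNat
    rw [h.zero] at e1
    rw [h'.zero] at e2
    have ew : wordOf θ z 0 k.toNat = wordOf θ z' 0 k.toNat := by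
      apply wordOf_congr
      intro t ht
      apply hz <;> omega
    rw [zero_add] at e1 e2
    rw [Int.toNat_of_nonneg hk] at e1 e2
    rw [e1, e2, ew]
  · have e1 := h.len_word k (-k).toNat
    have e2 := h'.len_word k (-k).toNat
    rw [Int.toNat_of_nonneg (by omega : (0:ℤ) ≤ -k)] at e1 e2
    have e : k + -k = 0 := by ring
    rw [e, h.zero] at e1
    rw [e, h'.zero] at e2
    have ew : wordOf θ z k (-k).toNat = wordOf θ z' k (-k).toNat := by
      apply wordOf_congr
      intro t ht
      have ht' : (t:ℤ) < -k := by omega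
      apply hz <;> omega
    rw [ew] at e1
    omega

end Mono

section Agree
variable {θ : A → List A} {z z' w w' : ℤ → A} {L L' : ℤ → ℤ}

lemma ImgL.agree (h : ImgL θ z w L) (h' : ImgL θ z' w' L') (hθ : ∀ a, θ a ≠ [])
    (R : ℤ) (hz : ∀ t : ℤ, -R ≤ t → t ≤ R → z t = z' t)
    (i : ℤ) (hi1 : -R ≤ i) (hi2 : i ≤ R) : w i = w' i := by
  obtain ⟨k, hk1, hk2, hk3, hk4⟩ := h.exists_block hθ i
  have hR : 0 ≤ R := by omega
  have hkR1 : -R ≤ k := by omega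
  have hkR2 : k ≤ R := by omega
  have hLk : L k = L' k := by
    apply h.L_eq h' k
    intro t ht1 ht2
    apply hz <;> omega
  have hLk1 : L (k+1) = L' (k+1) := by
    apply h.L_eq h' (k+1)
    intro t ht1 ht2
    apply hz <;> omega
  have hzk : z k = z' k := hz k hkR1 hkR2
  have hstep := h.step k
  have hj : (i - L k).toNat < (θ (z k)).length := by omega
  have harg : i = L k + ((i - L k).toNat : ℤ) := by omega
  have e1 : w i = (θ (z k)).get ⟨_, hj⟩ := by
    have := h.letter k _ hj
    rw [← harg] at this
    exact this
  have hj' : (i - L k).toNat < (θ (z' k)).length := by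
    rw [← hzk]
    exact hj
  have harg' : i = L' k + ((i - L k).toNat : ℤ) := by omega
  have e2 : w' i = (θ (z' k)).get ⟨_, hj'⟩ := by
    have := h'.letter k _ hj'
    rw [← harg'] at this
    exact this
  rw [e1, e2]
  simp only [List.get_eq_getElem, hzk]

end Agree

lemma card_reverse (c : ℕ) (f : ℕ → Prop) [DecidablePred f] :
    ((Finset.range c).filter f).card = ((Finset.range c).filter (fun i => f (c - 1 - i))).card := by
  refine Finset.card_bij' (fun i _ => c - 1 - i) (fun j _ => c - 1 - j) ?_ ?_ ?_ ?_
  · intro i hi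
    have hi' := Finset.mem_range.mp (Finset.mem_of_mem_filter _ hi)
    refine Finset.mem_filter.mpr ⟨Finset.mem_range.mpr (by show c - 1 - i < c; omega), ?_⟩
    have hcond := (Finset.mem_filter.mp hi).2
    show f (c - 1 - (c - 1 - i))
    have e : c - 1 - (c - 1 - i) = i := by omega
    rw [e]
    exact hcond
  · intro j hj
    have hj' := Finset.mem_range.mp (Finset.mem_of_mem_filter _ hj)
    refine Finset.mem_filter.mpr ⟨Finset.mem_range.mpr (by show c - 1 - j < c; omega), ?_⟩
    exact (Finset.mem_filter.mp hj).2
  · intro i hi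
    have hi' := Finset.mem_range.mp (Finset.mem_of_mem_filter _ hi)
    show c - 1 - (c - 1 - i) = i
    omega
  · intro j hj
    have hj' := Finset.mem_range.mp (Finset.mem_of_mem_filter _ hj)
    show c - 1 - (c - 1 - j) = j
    omega

section Fin
variable [Fintype A]

lemma fiber_sum (s : Finset ℕ) (g : ℕ → A) (f : A → ℤ) :
    ∑ t ∈ s, f (g t) = ∑ b : A, f b * ((s.filter (fun t => g t = b)).card : ℤ) := by
  have : ∀ b : A, ((s.filter (fun t => g t = b)).card : ℤ) = ∑ t ∈ s, (if g t = b then 1 else 0) := by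
    intro b
    rw [Finset.card_filter]
    push_cast
    rfl
  simp_rw [this, Finset.mul_sum]
  rw [Finset.sum_comm]
  congr 1
  funext t
  simp [Finset.sum_ite_eq', eq_comm]

lemma wordOf_count (θ : A → List A) (z : ℤ → A) (k : ℤ) (c : ℕ) (a : A) :
    ((wordOf θ z k c).count a : ℤ) = ∑ t ∈ Finset.range c, ((θ (z (k + t))).count a : ℤ) := by
  induction c with
  | zero => simp [wordOf]
  | succ c ih => rw [wordOf_succ, List.count_append, Finset.sum_range_succ]; push_cast [ih]; ring

lemma ImgL.abPrefix_aligned {θ : A → List A} {z w : ℤ → A} {L : ℤ → ℤ}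
    (h : ImgL θ z w L) (k : ℤ) (a : A) :
    abPrefix w (L k) a = ∑ b : A, ((θ b).count a : ℤ) * abPrefix z k b := by
  rcases le_or_gt 0 k with hk | hk
  · have e1 := h.len_word 0 k.toNat
    rw [h.zero, zero_add, zero_add, Int.toNat_of_nonneg hk] at e1
    rw [e1]
    have e2 : ∀ (j : ℕ) (hj : j < (wordOf θ z 0 k.toNat).length),
        w (j : ℤ) = (wordOf θ z 0 k.toNat).get ⟨j, hj⟩ := by
      intro j hj
      have := h.letter_word 0 k.toNat j hj
      rw [h.zero, zero_add] at this
      exact this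
    rw [abPrefix_of_list w _ e2 a, wordOf_count]
    rw [fiber_sum (Finset.range k.toNat) (fun t => z (0 + (t:ℤ))) (fun b => ((θ b).count a : ℤ))]
    apply Finset.sum_congr rfl
    intro b _
    congr 1
    simp only [abPrefix, if_pos hk]
    congr 1
    apply congrArg
    apply Finset.filter_congr
    intro t ht
    rw [zero_add]
  · have c := (-k).toNat
    have hc : ((-k).toNat : ℤ) = -k := Int.toNat_of_nonneg (by omega)
    have e1 := h.len_word k (-k).toNat
    have e : k + ((-k).toNat : ℤ) = 0 := by omega
    rw [e, h.zero] at e1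
    have hLk : L k = -((wordOf θ z k (-k).toNat).length : ℤ) := by omega
    rw [hLk]
    have e2 : ∀ (j : ℕ) (hj : j < (wordOf θ z k (-k).toNat).length),
        w ((j:ℤ) - (wordOf θ z k (-k).toNat).length) = (wordOf θ z k (-k).toNat).get ⟨j, hj⟩ := by
      intro j hj
      have := h.letter_word k (-k).toNat j hj
      rw [hLk] at this
      have earg : -((wordOf θ z k (-k).toNat).length : ℤ) + (j:ℤ)
          = (j:ℤ) - (wordOf θ z k (-k).toNat).length := by ring
      rw [← earg]
      exact this
    rw [abPrefix_of_list_neg w _ e2 a, wordOf_count]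
    rw [fiber_sum (Finset.range (-k).toNat) (fun t => z (k + (t:ℤ))) (fun b => ((θ b).count a : ℤ))]
    rw [← Finset.sum_neg_distrib]
    apply Finset.sum_congr rfl
    intro b _
    rw [← mul_neg]
    congr 1
    simp only [abPrefix, if_neg (by omega : ¬ (0:ℤ) ≤ k), neg_inj]
    rw [card_reverse (-k).toNat (fun t => z (k + (t:ℤ)) = b)]
    congr 1
    apply congrArg
    apply Finset.filter_congr
    intro i hi
    have hi' := Finset.mem_range.mp hi
    have earg : k + (((-k).toNat - 1 - i : ℕ) : ℤ) = -((i:ℤ)+1) := by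
      push_cast [Nat.cast_sub (by omega : 1 + i ≤ (-k).toNat)]
      omega
    rw [earg]

end Fin

def thpow (σ : A → List A) : ℕ → A → List A
  | 0 => fun a => [a]
  | N+1 => fun a => (σ a).flatMap (thpow σ N)

lemma thpow_ne {σ : A → List A} (hσ : ∀ a, σ a ≠ []) : ∀ N a, thpow σ N a ≠ [] := by
  intro N
  induction N with
  | zero => intro a; simp [thpow]
  | succ N ih =>
      intro a
      show (σ a).flatMap (thpow σ N) ≠ []
      rcases List.exists_cons_of_ne_nil (hσ a) with ⟨b, t, hbt⟩
      rw [hbt, List.flatMap_cons]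
      intro hcon
      exact ih b (List.append_eq_nil_iff.mp hcon).1

section Fin2
variable [Fintype A]

lemma count_flatMap_sum (l : List A) (g : A → List A) (a : A) :
    ((l.flatMap g).count a : ℤ) = ∑ b : A, ((g b).count a : ℤ) * (l.count b : ℤ) := by
  induction l with
  | nil => simp
  | cons hd tl ih =>
      rw [List.flatMap_cons, List.count_append]
      push_cast
      rw [ih]
      have : ∀ b : A, ((hd :: tl).count b : ℤ) = (tl.count b : ℤ) + (if hd = b then 1 else 0) := by
        intro b
        rw [List.count_cons]
        push_cast
        congr 1
        simp only [beq_iff_eq]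
      simp_rw [this, mul_add, Finset.sum_add_distrib]
      have e2 : ∑ b : A, ((g b).count a : ℤ) * (if hd = b then 1 else 0) = ((g hd).count a : ℤ) := by
        simp [mul_ite, Finset.sum_ite_eq]
      rw [e2]
      ring

lemma incMat_pow (σ : A → List A) (N : ℕ) :
    (incMat σ) ^ N = Matrix.of (fun c b => ((thpow σ N b).count c : ℝ)) := by
  induction N with
  | zero =>
      rw [pow_zero]
      ext c b
      rw [Matrix.one_apply]
      show _ = ((List.count c [b] : ℕ) : ℝ)
      rw [List.count_singleton']
      simp [beq_iff_eq]
      split_ifs with h1 h2 h2 <;> first | rfl | (exact absurd h1.symm h2) | (exact absurd h2.symm h1)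
  | succ N ih =>
      rw [pow_succ, ih]
      ext c b
      rw [Matrix.mul_apply]
      show _ = ((List.count c ((σ b).flatMap (thpow σ N)) : ℕ) : ℝ)
      have := count_flatMap_sum (σ b) (thpow σ N) c
      have hcast : ((List.count c ((σ b).flatMap (thpow σ N)) : ℕ) : ℝ)
          = ∑ b' : A, ((thpow σ N b').count c : ℝ) * ((σ b).count b' : ℝ) := by
        exact_mod_cast congrArg (fun z : ℤ => (z : ℝ)) this
      rw [hcast]
      rfl

lemma mulVec_pow_count (σ : A → List A) (N : ℕ) (g : A → ℤ) :
    ((incMat σ ^ N).mulVec (fun b => (g b : ℝ)))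
      = fun a => ((∑ b : A, ((thpow σ N b).count a : ℤ) * g b : ℤ) : ℝ) := by
  rw [incMat_pow]
  funext a
  simp [Matrix.mulVec, dotProduct]

end Fin2

section Topo
open Filter Topology
variable [TopologicalSpace A] [DiscreteTopology A]

lemma evag (g : ℕ → ℤ → A) (y : ℤ → A) (h : Filter.Tendsto g Filter.atTop (nhds y)) (R : ℤ) :
    ∀ᶠ j in Filter.atTop, ∀ t : ℤ, -R ≤ t → t ≤ R → g j t = y t := by
  have hco : ∀ t : ℤ, ∀ᶠ j in Filter.atTop, g j t = y t := by
    intro t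
    have ht : Filter.Tendsto (fun j => g j t) Filter.atTop (nhds (y t)) :=
      (tendsto_pi_nhds.mp h) t
    have hmem : {y t} ∈ nhds (y t) := IsOpen.mem_nhds (isOpen_discrete _) rfl
    filter_upwards [ht hmem] with j hj
    exact hj
  have : ∀ᶠ j in Filter.atTop, ∀ t ∈ Finset.Icc (-R) R, g j t = y t := by
    rw [Filter.eventually_all_finset]
    intro t _
    exact hco t
  filter_upwards [this] with j hj t ht1 ht2
  exact hj t (Finset.mem_Icc.mpr ⟨ht1, ht2⟩)

lemma tendsto_of_window (g : ℕ → ℤ → A) (y : ℤ → A)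
    (h : ∀ i : ℤ, ∀ᶠ j in Filter.atTop, g j i = y i) :
    Filter.Tendsto g Filter.atTop (nhds y) := by
  rw [tendsto_pi_nhds]
  intro i
  apply Filter.Tendsto.congr' ((h i).mono fun j hj => hj.symm)
  exact tendsto_const_nhds

end Topo

end S18

open Filter Topology

theorem stmt_18 {A : Type*} [Fintype A] [DecidableEq A]
    [TopologicalSpace A] [DiscreteTopology A] {d : ℕ}
    (σ : A → List A) (hσ : ∀ a, σ a ≠ [])
    (Ω : Set (ℤ → A)) (hclosed : IsClosed Ω)
    (hinv : (fun x : ℤ → A => fun i => x (i + 1)) '' Ω = Ω)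
    (hmin : ∀ x ∈ Ω, ∀ y ∈ Ω, y ∈ closure {z : ℤ → A | ∃ n : ℤ, z = fun i => x (i + n)})
    (haper : ∀ x ∈ Ω, ∀ n : ℤ, (fun i => x (i + n)) = x → n = 0)
    (u : ℤ → A) (hu : u ∈ Ω) (hfix : IsSubstImage σ u u)
    (V : (A → ℝ) →L[ℝ] (Fin d → ℝ))
    (hsum : Summable fun n : ℕ =>
      ‖V.comp (LinearMap.toContinuousLinearMap (Matrix.mulVecLin ((incMat σ) ^ n)))‖)
    (φ : (ℤ → A) → (Fin d → ℝ)) (hcont : ContinuousOn φ Ω)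
    (hφ : ∀ n : ℤ, φ (fun i => u (i + n)) = V fun a => (abPrefix u n a : ℝ))
    (v : ℤ → A) (hv : v ∈ Ω)
    (x : ℕ → (ℤ → A)) (p s : ℕ → List A) (hx0 : x 0 = v)
    (hxΩ : ∀ n, x n ∈ Ω)
    (hps : ∀ n, σ ((x (n + 1)) 0) = p n ++ (x n) 0 :: s n)
    (hdesub : ∀ n, IsSubstImage σ (x (n + 1)) (fun i => (x n) (i - ((p n).length : ℤ)))) :
    φ v = ∑' n : ℕ, V (((incMat σ) ^ n).mulVec (fun a => ((p n).count a : ℝ))) := by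
  classical
  obtain ⟨Lu, hLu0, hLu1, hLu2⟩ := hfix
  have hLu : S18.ImgL σ u u Lu := ⟨hLu0, hLu1, hLu2⟩
  set Φ : ℕ → ((A → ℝ) →L[ℝ] (Fin d → ℝ)) :=
    fun n => V.comp (LinearMap.toContinuousLinearMap (Matrix.mulVecLin ((incMat σ) ^ n)))
    with hΦdef
  have hΦsum : Summable (fun n => ‖Φ n‖) := hsum
  have hΦapp : ∀ (n : ℕ) (g : A → ℝ), Φ n g = V ((incMat σ ^ n).mulVec g) := by
    intro n g
    simp [hΦdef]
  set abR : (A → ℤ) → (A → ℝ) := fun g a => (g a : ℝ) with habR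
  set cfun : ℕ → (Fin d → ℝ) :=
    fun n => V (((incMat σ) ^ n).mulVec (fun a => ((p n).count a : ℝ))) with hcfun
  set C0 : ℝ := ((Finset.univ.sup fun a : A => (σ a).length : ℕ) : ℝ) + 1 with hC0def
  have hC0len : ∀ a : A, ((σ a).length : ℝ) ≤ C0 := by
    intro a
    have : (σ a).length ≤ (Finset.univ.sup fun a : A => (σ a).length : ℕ) :=
      Finset.le_sup (f := fun a : A => (σ a).length) (Finset.mem_univ a)
    have h2 : ((σ a).length : ℝ) ≤ ((Finset.univ.sup fun a : A => (σ a).length : ℕ) : ℝ) := by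
      exact_mod_cast this
    rw [hC0def]
    linarith
  have hC0 : 0 ≤ C0 := by rw [hC0def]; positivity
  have hcvnorm : ∀ l : List A, ((l.length : ℝ) ≤ C0) → ‖(fun a => ((l.count a : ℕ) : ℝ) : A → ℝ)‖ ≤ C0 := by
    intro l hl
    apply pi_norm_le_iff_of_nonneg hC0 |>.mpr
    intro a
    rw [Real.norm_eq_abs, abs_of_nonneg (by positivity)]
    have := List.count_le_length (a := a) (l := l)
    calc ((l.count a : ℕ) : ℝ) ≤ (l.length : ℝ) := by exact_mod_cast this
      _ ≤ C0 := hl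
  -- shifts stay in Ω
  have hstep1 : ∀ z ∈ Ω, S18.shiftZ z 1 ∈ Ω := by
    intro z hz
    rw [← hinv]
    exact ⟨z, hz, rfl⟩
  have hstepm1 : ∀ z ∈ Ω, S18.shiftZ z (-1) ∈ Ω := by
    intro z hz
    rw [← hinv] at hz
    obtain ⟨y, hy, hyz⟩ := hz
    have : S18.shiftZ z (-1) = y := by
      funext i
      rw [← hyz]
      show y (i + -1 + 1) = y i
      congr 1
      ring
    rw [this]
    exact hy
  have hshiftΩ : ∀ z ∈ Ω, ∀ c : ℤ, S18.shiftZ z c ∈ Ω := by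
    have key : ∀ c : ℤ, ∀ z ∈ Ω, S18.shiftZ z c ∈ Ω := by
      intro c
      induction c using Int.induction_on with
      | zero => intro z hz; have : S18.shiftZ z 0 = z := by funext i; simp [S18.shiftZ]
                rw [this]; exact hz
      | succ m ih =>
          intro z hz
          have e : S18.shiftZ z ((m:ℤ) + 1) = S18.shiftZ (S18.shiftZ z 1) (m:ℤ) := by
            rw [S18.shiftZ_shiftZ]
          rw [e]
          exact ih _ (hstep1 z hz)
      | pred m ih =>
          intro z hz
          have e2 : -(m:ℤ) - 1 = -(m:ℤ) + -1 := by ring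
          have e : S18.shiftZ z (-(m:ℤ) - 1) = S18.shiftZ (S18.shiftZ z (-1)) (-(m:ℤ)) := by
            rw [S18.shiftZ_shiftZ, e2]
          rw [e]
          exact ih _ (hstepm1 z hz)
    intro z hz c
    exact key c z hz
  -- density sequences
  have hseq : ∀ y ∈ Ω, ∃ k : ℕ → ℤ,
      Tendsto (fun j => S18.shiftZ u (k j)) atTop (𝓝 y) := by
    intro y hy
    have hcl := hmin u hu y hy
    rw [mem_closure_iff_seq_limit] at hcl
    obtain ⟨f, hf1, hf2⟩ := hcl
    choose n hn using hf1
    refine ⟨n, ?_⟩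
    have : (fun j => S18.shiftZ u (n j)) = f := by
      funext j
      exact (hn j).symm
    rw [this]
    exact hf2
  have htend : ∀ (y : ℤ → A), y ∈ Ω → ∀ (g : ℕ → ℤ → A), (∀ j, g j ∈ Ω) →
      Tendsto g atTop (𝓝 y) → Tendsto (fun j => φ (g j)) atTop (𝓝 (φ y)) := by
    intro y hy g hgΩ hg
    apply ((hcont y hy).tendsto).comp
    rw [tendsto_nhdsWithin_iff]
    exact ⟨hg, Filter.Eventually.of_forall hgΩ⟩
  have hφ' : ∀ n : ℤ, φ (S18.shiftZ u n) = V (abR (abPrefix u n)) := fun n => hφ n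
  -- cocycle property of φ
  have hA : ∀ w, w ∈ Ω → ∀ c : ℤ, φ (S18.shiftZ w c) = φ w + V (abR (abPrefix w c)) := by
    intro w hw c
    obtain ⟨k, hk⟩ := hseq w hw
    have hTc : Continuous (fun z : ℤ → A => S18.shiftZ z c) := by
      apply continuous_pi
      intro i
      exact continuous_apply (i + c)
    have hk2 : Tendsto (fun j => S18.shiftZ u (c + k j)) atTop (𝓝 (S18.shiftZ w c)) := by
      have h1 := (hTc.tendsto w).comp hk
      have e : (fun j => S18.shiftZ u (c + k j))
          = (fun z : ℤ → A => S18.shiftZ z c) ∘ (fun j => S18.shiftZ u (k j)) := by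
        funext j
        show S18.shiftZ u (c + k j) = S18.shiftZ (S18.shiftZ u (k j)) c
        rw [S18.shiftZ_shiftZ]
      rw [e]
      exact h1
    have ht1 : Tendsto (fun j => φ (S18.shiftZ u (k j))) atTop (𝓝 (φ w)) :=
      htend w hw _ (fun j => hshiftΩ u hu _) hk
    have ht2 : Tendsto (fun j => φ (S18.shiftZ u (c + k j))) atTop (𝓝 (φ (S18.shiftZ w c))) :=
      htend _ (hshiftΩ w hw c) _ (fun j => hshiftΩ u hu _) hk2
    have hsub := ht2.sub ht1
    have hev : ∀ᶠ j in atTop, φ (S18.shiftZ u (c + k j)) - φ (S18.shiftZ u (k j))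
        = V (abR (abPrefix w c)) := by
      filter_upwards [S18.evag _ _ hk |c|] with j hj
      rw [hφ' (c + k j), hφ' (k j), ← map_sub]
      congr 1
      funext a
      have hco := S18.abPrefix_add u (k j) c a
      have hcongr : abPrefix (S18.shiftZ u (k j)) c a = abPrefix w c a := by
        apply S18.abPrefix_congr
        intro t ht1 ht2
        apply hj t
        · have : -|c| ≤ min c 0 := by
            rcases abs_cases c with h | h <;> omega
          omega
        · have : max c 0 ≤ |c| := by
            rcases abs_cases c with h | h <;> omega
          omega
      have e : c + k j = k j + c := by ring
      rw [e] at *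
      simp only [habR, Pi.sub_apply]
      rw [hco, hcongr]
      push_cast
      ring
    have hvv := tendsto_nhds_unique (hsub.congr' hev) tendsto_const_nhds
    rw [← hvv]
    abel
  -- self-image of u at all levels
  have hSELF : ∀ N, ∃ LN, S18.ImgL (S18.thpow σ N) u u LN := by
    intro N
    induction N with
    | zero =>
        refine ⟨id, ⟨rfl, ?_, ?_⟩⟩
        · intro k
          show k + 1 = k + ((1:ℕ):ℤ)
          norm_num
        · intro k j hj
          have hj0 : j = 0 := by
            have : (S18.thpow σ 0 (u k)).length = 1 := rfl
            omega
          subst hj0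
          show u (k + ((0:ℕ):ℤ)) = _
          simp [S18.thpow]
    | succ N ih =>
        obtain ⟨LN, hLN⟩ := ih
        exact ⟨fun k => LN (Lu k), hLu.comp hLN⟩
  -- prefix letters
  have hPREF : ∀ n (j : ℕ) (hj : j < (p n).length),
      x n ((j:ℤ) - (p n).length) = (p n).get ⟨j, hj⟩ := by
    intro n j hj
    obtain ⟨L1, h10, h11, h12⟩ := hdesub n
    have hlen : j < (σ (x (n+1) 0)).length := by
      rw [hps n, List.length_append, List.length_cons]
      omega
    have key := h12 0 j hlen
    rw [h10] at key
    simp only [zero_add] at key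
    have hget : (σ (x (n+1) 0)).get ⟨j, hlen⟩ = (p n).get ⟨j, hj⟩ := by
      simp only [List.get_eq_getElem]
      rw [List.getElem_of_eq (hps n) hlen, List.getElem_append_left hj]
    rw [hget] at key
    exact key
  -- main induction
  have hMAIN : ∀ N : ℕ, ∃ (m : ℤ) (L : ℤ → ℤ),
      S18.ImgL (S18.thpow σ N) (x N) (S18.shiftZ v (-m)) L ∧
      φ v = (∑ n ∈ Finset.range N, cfun n) + φ (S18.shiftZ v (-m)) := by
    intro N
    induction N with
    | zero =>
        have hv0 : S18.shiftZ v (-(0:ℤ)) = v := by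
          funext i
          simp [S18.shiftZ]
        refine ⟨0, id, ⟨rfl, ?_, ?_⟩, ?_⟩
        · intro k
          show k + 1 = k + ((1:ℕ):ℤ)
          norm_num
        · intro k j hj
          have hj0 : j = 0 := by
            have : (S18.thpow σ 0 (x 0 k)).length = 1 := rfl
            omega
          subst hj0
          rw [hv0]
          show v (k + ((0:ℕ):ℤ)) = _
          simp [S18.thpow, ← hx0]
        · rw [hv0]
          simp
    | succ N ih =>
        obtain ⟨m, L, hImg, hphi⟩ := ih
        set pl : ℤ := ((p N).length : ℤ) with hpl
        set W : ℤ → A := S18.shiftZ v (-m) with hW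
        set PW : List A := (p N).flatMap (S18.thpow σ N) with hPW
        have hword : S18.wordOf (S18.thpow σ N) (x N) (-pl) (p N).length = PW := by
          apply S18.flatMap_congr
          intro t ht
          congr 1
          have e := hPREF N t ht
          rw [← e]
          congr 1
          rw [hpl]
          ring
        have hlenw := hImg.len_word (-pl) (p N).length
        rw [hword] at hlenw
        have hnpl : -pl + ((p N).length : ℤ) = 0 := by rw [hpl]; ring
        rw [hnpl, hImg.zero] at hlenw
        set t0 : ℤ := L (-pl) with ht0
        have ht0v : t0 = -(PW.length : ℤ) := by omega
        set m' : ℤ := m - t0 with hm'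
        obtain ⟨L1, h10, h11, h12⟩ := hdesub N
        have hdes : S18.ImgL σ (x (N+1)) (S18.shiftZ (x N) (-pl)) L1 := by
          refine ⟨h10, h11, ?_⟩
          intro k j hj
          have key := h12 k j hj
          have e : S18.shiftZ (x N) (-pl) (L1 k + j) = x N (L1 k + j - pl) := by
            simp [S18.shiftZ, sub_eq_add_neg]
          rw [e]
          exact key
        have hshiftImg := hImg.shift (-pl)
        have hcomp := hdes.comp hshiftImg
        have hWt0 : S18.shiftZ W t0 = S18.shiftZ v (-m') := by
          rw [hW, S18.shiftZ_shiftZ]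
          congr 1
          rw [hm']
          ring
        refine ⟨m', (fun k => L (L1 k + -pl) - t0), ?_, ?_⟩
        · rw [← hWt0]
          exact hcomp
        · rw [hphi, Finset.sum_range_succ]
          have hstep : φ W = cfun N + φ (S18.shiftZ v (-m')) := by
            have hWrw : W = S18.shiftZ (S18.shiftZ v (-m')) (-t0) := by
              rw [S18.shiftZ_shiftZ]
              rw [hW]
              congr 1
              rw [hm']
              ring
            rw [hWrw, hA _ (hshiftΩ v hv (-m')) (-t0)]
            have hab : V (abR (abPrefix (S18.shiftZ v (-m')) (-t0))) = cfun N := by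
              have hlets : ∀ (j : ℕ) (hj : j < PW.length),
                  S18.shiftZ v (-m') (j : ℤ) = PW.get ⟨j, hj⟩ := by
                intro j hj
                have hj' : j < (S18.wordOf (S18.thpow σ N) (x N) (-pl) (p N).length).length := by
                  rw [hword]; exact hj
                have key := hImg.letter_word (-pl) (p N).length j hj'
                have e1 : S18.shiftZ v (-m') (j:ℤ) = W (L (-pl) + j) := by
                  show v ((j:ℤ) + -m') = W (t0 + j)
                  rw [hW]
                  show v ((j:ℤ) + -m') = v (t0 + (j:ℤ) + -m)
                  congr 1
                  rw [hm']
                  ring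
                rw [e1, key]
                simp only [List.get_eq_getElem]
                exact List.getElem_of_eq hword hj'
              have habval : ∀ a, abPrefix (S18.shiftZ v (-m')) (-t0) a = (PW.count a : ℤ) := by
                intro a
                have hthis := S18.abPrefix_of_list (S18.shiftZ v (-m')) PW hlets a
                have e : -t0 = (PW.length : ℤ) := by omega
                rw [e]
                exact hthis
              show V (abR (abPrefix (S18.shiftZ v (-m')) (-t0)))
                = V ((incMat σ ^ N).mulVec fun a => ((List.count a (p N) : ℕ) : ℝ))
              have hmv := S18.mulVec_pow_count σ N (fun b => ((p N).count b : ℤ))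
              have hargeq : (fun a => (((p N).count a : ℕ) : ℝ)) = (fun b => ((((p N).count b : ℤ)) : ℝ)) := by
                funext b
                push_cast
                rfl
              rw [hargeq, hmv]
              congr 1
              funext a
              rw [habR]
              show ((abPrefix (S18.shiftZ v (-m')) (-t0) a : ℤ) : ℝ) = _
              rw [habval a, hPW]
              rw [S18.count_flatMap_sum (p N) (S18.thpow σ N) a]
            rw [hab]
            abel
          rw [hstep]
          abel
  -- digit expansion
  have hDIGIT : ∀ k : ℤ, ∃ (k₁ : ℤ) (r : ℕ), r ≤ (σ (u k₁)).length ∧ k₁.natAbs ≤ k.natAbs ∧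
      ∀ a, abPrefix u k a = (∑ b : A, ((σ b).count a : ℤ) * abPrefix u k₁ b)
        + ((((σ (u k₁)).take r).count a : ℕ) : ℤ) := by
    intro k
    obtain ⟨k₁, hk1, hk2, hk3, hk4⟩ := hLu.exists_block hσ k
    have hstepk := hLu.step k₁
    refine ⟨k₁, (k - Lu k₁).toNat, by omega, ?_, ?_⟩
    · rcases le_total k 0 with hk0 | hk0 <;>
        [skip; skip] <;>
        simp only [min_def, max_def] at hk3 hk4 <;>
        split_ifs at hk3 hk4 <;> omega
    · intro a
      set r := (k - Lu k₁).toNat with hr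
      have hrz : (r : ℤ) = k - Lu k₁ := Int.toNat_of_nonneg (by omega)
      have hrlen : r ≤ (σ (u k₁)).length := by omega
      have e0 : k = Lu k₁ + r := by omega
      rw [e0, S18.abPrefix_add u (Lu k₁) r a, hLu.abPrefix_aligned k₁ a]
      congr 1
      have hlen2 : ((σ (u k₁)).take r).length = r := by
        rw [List.length_take]
        omega
      have hlets : ∀ (j : ℕ) (hj : j < ((σ (u k₁)).take r).length),
          S18.shiftZ u (Lu k₁) (j : ℤ) = ((σ (u k₁)).take r).get ⟨j, hj⟩ := by
        intro j hj
        rw [hlen2] at hj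
        have hjlen : j < (σ (u k₁)).length := by omega
        have key := hLu.letter k₁ j hjlen
        have e : S18.shiftZ u (Lu k₁) (j:ℤ) = u (Lu k₁ + j) := by
          simp [S18.shiftZ, add_comm]
        rw [e, key]
        simp only [List.get_eq_getElem]
        rw [List.getElem_take]
      have := S18.abPrefix_of_list (S18.shiftZ u (Lu k₁)) ((σ (u k₁)).take r) hlets a
      rw [hlen2] at this
      exact this
  -- op-norm bound on digits
  have hopbound : ∀ (n : ℕ) (l : List A), ((l.length : ℝ) ≤ C0) →
      ‖Φ n (fun a => ((l.count a : ℕ) : ℝ))‖ ≤ ‖Φ n‖ * C0 := by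
    intro n l hl
    calc ‖Φ n (fun a => ((l.count a : ℕ) : ℝ))‖
        ≤ ‖Φ n‖ * ‖(fun a => ((l.count a : ℕ) : ℝ) : A → ℝ)‖ := (Φ n).le_opNorm _
      _ ≤ ‖Φ n‖ * C0 := by
          apply mul_le_mul_of_nonneg_left (hcvnorm l hl) (norm_nonneg _)
  have habnorm : ∀ k : ℤ, ‖abR (abPrefix u k)‖ ≤ (k.natAbs : ℝ) := by
    intro k
    apply pi_norm_le_iff_of_nonneg (by positivity) |>.mpr
    intro a
    rw [habR, Real.norm_eq_abs]
    have h1 := S18.abPrefix_bound u k a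
    rw [← Int.cast_abs]
    have h2 : ((|abPrefix u k a| : ℤ) : ℝ) ≤ ((|k| : ℤ) : ℝ) := by exact_mod_cast h1
    have h3 : ((|k| : ℤ) : ℝ) = (k.natAbs : ℝ) := by
      rw [Nat.cast_natAbs, Int.cast_abs]
    linarith
  have hE : ∀ (J N : ℕ) (k : ℤ), ‖Φ N (abR (abPrefix u k))‖
      ≤ C0 * (∑ j ∈ Finset.range J, ‖Φ (N + j)‖) + ‖Φ (N + J)‖ * (k.natAbs : ℝ) := by
    intro J
    induction J with
    | zero =>
        intro N k
        simp only [Finset.range_zero, Finset.sum_empty, mul_zero, Nat.add_zero, zero_add]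
        calc ‖Φ N (abR (abPrefix u k))‖ ≤ ‖Φ N‖ * ‖abR (abPrefix u k)‖ := (Φ N).le_opNorm _
          _ ≤ ‖Φ N‖ * (k.natAbs : ℝ) :=
            mul_le_mul_of_nonneg_left (habnorm k) (norm_nonneg _)
    | succ J ih =>
        intro N k
        obtain ⟨k₁, r, hrlen, hnat, hdig⟩ := hDIGIT k
        have hsplit : abR (abPrefix u k) = (incMat σ).mulVec (abR (abPrefix u k₁))
            + (fun a => ((((σ (u k₁)).take r).count a : ℕ) : ℝ)) := by
          funext a
          rw [habR]
          show ((abPrefix u k a : ℤ) : ℝ) = _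
          rw [hdig a]
          push_cast
          have : ((incMat σ).mulVec (abR (abPrefix u k₁))) a
              = ∑ b : A, ((σ b).count a : ℝ) * ((abPrefix u k₁ b : ℤ) : ℝ) := by
            simp [incMat, Matrix.mulVec, dotProduct, habR]
          rw [Pi.add_apply, this]
        have hΦstep : Φ N ((incMat σ).mulVec (abR (abPrefix u k₁))) = Φ (N+1) (abR (abPrefix u k₁)) := by
          rw [hΦapp, hΦapp]
          congr 1
          rw [Matrix.mulVec_mulVec, ← pow_succ]
        have htake : (((σ (u k₁)).take r).length : ℝ) ≤ C0 := by
          rw [List.length_take]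
          calc ((min r (σ (u k₁)).length : ℕ) : ℝ) ≤ ((σ (u k₁)).length : ℝ) := by
                exact_mod_cast Nat.min_le_right _ _
            _ ≤ C0 := hC0len _
        calc ‖Φ N (abR (abPrefix u k))‖
            = ‖Φ N ((incMat σ).mulVec (abR (abPrefix u k₁)))
                + Φ N (fun a => ((((σ (u k₁)).take r).count a : ℕ) : ℝ))‖ := by
              rw [← map_add, ← hsplit]
          _ ≤ ‖Φ N ((incMat σ).mulVec (abR (abPrefix u k₁)))‖
                + ‖Φ N (fun a => ((((σ (u k₁)).take r).count a : ℕ) : ℝ))‖ := norm_add_le _ _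
          _ ≤ ‖Φ (N+1) (abR (abPrefix u k₁))‖ + ‖Φ N‖ * C0 := by
              rw [hΦstep]
              exact add_le_add le_rfl (hopbound N _ htake)
          _ ≤ (C0 * (∑ j ∈ Finset.range J, ‖Φ (N + 1 + j)‖) + ‖Φ (N + 1 + J)‖ * (k₁.natAbs : ℝ))
                + ‖Φ N‖ * C0 := add_le_add (ih (N+1) k₁) le_rfl
          _ ≤ C0 * (∑ j ∈ Finset.range (J+1), ‖Φ (N + j)‖) + ‖Φ (N + (J+1))‖ * (k.natAbs : ℝ) := by
              have hsum' : ∑ j ∈ Finset.range (J+1), ‖Φ (N + j)‖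
                  = (∑ j ∈ Finset.range J, ‖Φ (N + 1 + j)‖) + ‖Φ N‖ := by
                rw [Finset.sum_range_succ']
                congr 1
                apply Finset.sum_congr rfl
                intro j _
                congr 2
                omega
              have e2 : N + 1 + J = N + (J + 1) := by ring
              have h3 : ‖Φ (N + 1 + J)‖ * (k₁.natAbs : ℝ) ≤ ‖Φ (N + (J+1))‖ * (k.natAbs : ℝ) := by
                rw [e2]
                apply mul_le_mul_of_nonneg_left _ (norm_nonneg _)
                exact_mod_cast hnat
              have hc : ‖Φ N‖ * C0 = C0 * ‖Φ N‖ := mul_comm _ _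
              rw [hsum', mul_add C0 (∑ j ∈ Finset.range J, ‖Φ (N + 1 + j)‖) (‖Φ N‖)]
              linarith [h3, hc]
  -- uniform bound
  set ε : ℕ → ℝ := fun N => C0 * ∑' j : ℕ, ‖Φ (N + j)‖ with hε
  have hsumshift : ∀ N : ℕ, Summable (fun j => ‖Φ (N + j)‖) := by
    intro N
    have h1 : Summable (fun j => ‖Φ (j + N)‖) := (summable_nat_add_iff N).mpr hΦsum
    exact h1.congr (fun j => by rw [add_comm])
  have hUB : ∀ (N : ℕ) (k : ℤ), ‖Φ N (abR (abPrefix u k))‖ ≤ ε N := by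
    intro N k
    have t1 : Tendsto (fun J => ∑ j ∈ Finset.range J, ‖Φ (N + j)‖) atTop
        (𝓝 (∑' j : ℕ, ‖Φ (N + j)‖)) := (hsumshift N).hasSum.tendsto_sum_nat
    have t2 : Tendsto (fun J : ℕ => ‖Φ (N + J)‖) atTop (𝓝 0) := by
      have h0 : Tendsto (fun n => ‖Φ n‖) atTop (𝓝 0) := hΦsum.tendsto_atTop_zero
      have hcomp : Tendsto (fun J : ℕ => N + J) atTop atTop := tendsto_add_atTop_nat N |>.congr (fun J => by ring)
      exact h0.comp hcomp
    have t3 : Tendsto (fun J => C0 * (∑ j ∈ Finset.range J, ‖Φ (N + j)‖)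
        + ‖Φ (N + J)‖ * (k.natAbs : ℝ)) atTop (𝓝 (C0 * (∑' j : ℕ, ‖Φ (N + j)‖) + 0 * (k.natAbs : ℝ))) :=
      ((t1.const_mul C0).add (t2.mul_const _))
    rw [zero_mul, add_zero] at t3
    exact ge_of_tendsto t3 (Filter.Eventually.of_forall (fun J => hE J N k))
  have hε0 : Tendsto ε atTop (𝓝 0) := by
    have h1 := tendsto_sum_nat_add (fun n => ‖Φ n‖)
    have h2 : Tendsto (fun N : ℕ => ∑' j : ℕ, ‖Φ (N + j)‖) atTop (𝓝 0) := by
      apply h1.congr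
      intro N
      apply tsum_congr
      intro j
      rw [add_comm]
    have := h2.const_mul C0
    rw [mul_zero] at this
    exact this
  -- bound on aligned points
  have hBOUND : ∀ (N : ℕ) (w : ℤ → A) (LN' : ℤ → ℤ), w ∈ Ω →
      S18.ImgL (S18.thpow σ N) (x N) w LN' → ‖φ w‖ ≤ ε N := by
    intro N w LN' hwΩ hImg
    obtain ⟨LN, hLN⟩ := hSELF N
    obtain ⟨k, hk⟩ := hseq (x N) (hxΩ N)
    have hθne := S18.thpow_ne hσ N
    have hconv : Tendsto (fun j => S18.shiftZ u (LN (k j))) atTop (𝓝 w) := by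
      apply S18.tendsto_of_window
      intro i
      filter_upwards [S18.evag _ _ hk |i|] with j hj
      have h1 := hLN.shift (k j)
      exact h1.agree hImg hθne |i| (fun t ht1 ht2 => hj t ht1 ht2) i (neg_abs_le i) (le_abs_self i)
    have hval : ∀ j, φ (S18.shiftZ u (LN (k j))) = Φ N (abR (abPrefix u (k j))) := by
      intro j
      rw [hφ' (LN (k j)), hΦapp]
      congr 1
      rw [S18.mulVec_pow_count σ N (abPrefix u (k j))]
      funext a
      rw [habR]
      show ((abPrefix u (LN (k j)) a : ℤ) : ℝ) = _
      rw [hLN.abPrefix_aligned (k j) a]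
    have hφt : Tendsto (fun j => φ (S18.shiftZ u (LN (k j)))) atTop (𝓝 (φ w)) :=
      htend w hwΩ _ (fun j => hshiftΩ u hu _) hconv
    apply le_of_tendsto hφt.norm
    filter_upwards with j
    rw [hval j]
    exact hUB N (k j)
  -- summability of the series
  have hplbound : ∀ n, (((p n).length : ℝ)) ≤ C0 := by
    intro n
    have := hps n
    have hlen : (σ (x (n+1) 0)).length = (p n).length + (s n).length + 1 := by
      rw [this, List.length_append, List.length_cons]
      ring
    have h1 := hC0len (x (n+1) 0)
    rw [hlen] at h1
    push_cast at h1 ⊢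
    linarith
  have hcnorm : ∀ n, ‖cfun n‖ ≤ ‖Φ n‖ * C0 := by
    intro n
    have : cfun n = Φ n (fun a => (((p n).count a : ℕ) : ℝ)) := by
      rw [hcfun, hΦapp]
    rw [this]
    exact hopbound n (p n) (hplbound n)
  have hcsum : Summable cfun :=
    Summable.of_norm_bounded (hΦsum.mul_right C0) hcnorm
  -- final assembly
  have hdiff : ∀ N, ‖φ v - ∑ n ∈ Finset.range N, cfun n‖ ≤ ε N := by
    intro N
    obtain ⟨m, L, hImg, hphi⟩ := hMAIN N
    rw [hphi]
    have e : (∑ n ∈ Finset.range N, cfun n) + φ (S18.shiftZ v (-m))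
        - ∑ n ∈ Finset.range N, cfun n = φ (S18.shiftZ v (-m)) := by abel
    rw [e]
    exact hBOUND N _ L (hshiftΩ v hv _) hImg
  have h0 : Tendsto (fun N => φ v - ∑ n ∈ Finset.range N, cfun n) atTop (𝓝 0) :=
    squeeze_zero_norm hdiff hε0
  have hpartial : Tendsto (fun N => ∑ n ∈ Finset.range N, cfun n) atTop (𝓝 (φ v)) := by
    have h1 := (tendsto_const_nhds :
      Tendsto (fun _ : ℕ => φ v) atTop (𝓝 (φ v))).sub h0
    rw [sub_zero] at h1
    apply h1.congr
    intro N
    abel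
  exact tendsto_nhds_unique hpartial hcsum.hasSum.tendsto_sum_nat
end
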